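/- arXiv:1804.08837 — 11 statements merged into one kernel-verified Lean document; each statement's English description precedes it below -/
import Mathlib

section
/- Let f : S → S' be a function between finite sets, ω a probability distribution on S, z a random variable on S with distribution ω, n a positive integer, and s'_1,…,s'_n fixed elements of S'. Then the number M of sequences s_1,…,s_n of elements of S in which each s ∈ S occurs exactly ω(s)·n times and such that f(s_j) = s'_j for all 1 ≤ j ≤ n satisfies M ≤ e^{H(z|f(z))·n} = e^{(H(z) − H(f(z)))·n}. -/
open Finset Real

theorem stmt1 {S S' : Type*} [Fintype S] [Fintype S'] [DecidableEq S] [DecidableEq S']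
    (f : S → S') (ω : S → ℝ) (hω : ∀ s, 0 ≤ ω s) (hsum : ∑ s, ω s = 1)
    (n : ℕ) (hn : 0 < n) (s' : Fin n → S') :
    (Nat.card {g : Fin n → S // (∀ s : S,
        ((Finset.univ.filter (fun j => g j = s)).card : ℝ) = ω s * n) ∧
        ∀ j, f (g j) = s' j} : ℝ) ≤
      Real.exp (((∑ s, -(ω s * Real.log (ω s))) -
        (∑ y, -((∑ s ∈ Finset.univ.filter (fun s => f s = y), ω s) *
          Real.log (∑ s ∈ Finset.univ.filter (fun s => f s = y), ω s)))) * n) := by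
  classical
  set ω' : S' → ℝ := fun y => ∑ s ∈ Finset.univ.filter (fun s => f s = y), ω s with hω'def
  have hω'nonneg : ∀ y, 0 ≤ ω' y := fun y => Finset.sum_nonneg fun s _ => hω s
  set P : (Fin n → S) → Prop := fun g => (∀ s : S,
        ((Finset.univ.filter (fun j => g j = s)).card : ℝ) = ω s * n) ∧
        ∀ j, f (g j) = s' j with hPdef
  rcases isEmpty_or_nonempty {g : Fin n → S // P g} with hE | hNE
  · rw [Nat.card_of_isEmpty]
    exact_mod_cast (Real.exp_pos _).le
  · obtain ⟨g₀, hcount, hfib⟩ := hNE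
    set c : S → ℕ := fun s => (Finset.univ.filter (fun j => g₀ j = s)).card with hcdef
    have hc : ∀ s, (c s : ℝ) = ω s * n := hcount
    set c' : S' → ℕ := fun y => (Finset.univ.filter (fun j => s' j = y)).card with hc'def
    -- fiberwise counts
    have hc'sum : ∀ y, c' y = ∑ s ∈ Finset.univ.filter (fun s => f s = y), c s := by
      intro y
      have h1 : (Finset.univ.filter (fun j => s' j = y))
          = (Finset.univ.filter (fun j => f (g₀ j) = y)) := by
        apply Finset.filter_congr; intro j _; simp [hfib j]
      show (Finset.univ.filter (fun j => s' j = y)).card = _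
      rw [h1]
      rw [Finset.card_eq_sum_card_fiberwise
        (f := fun j => g₀ j) (t := Finset.univ.filter (fun s => f s = y))
        (fun j hj => by simp only [Finset.coe_filter, Finset.mem_filter, Finset.mem_univ, true_and, Set.mem_setOf_eq] at hj ⊢; exact hj)]
      refine Finset.sum_congr rfl fun s hs => ?_
      simp only [Finset.mem_filter, Finset.mem_univ, true_and] at hs
      congr 1
      rw [Finset.filter_filter]
      apply Finset.filter_congr
      intro j _
      constructor
      · exact fun h => h.2
      · exact fun h => ⟨by rw [h, hs], h⟩
    have hc' : ∀ y, (c' y : ℝ) = ω' y * n := by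
      intro y
      rw [hc'sum y]
      push_cast
      rw [Finset.sum_congr rfl fun s _ => hc s, ← Finset.sum_mul]
    -- product over a sequence equals product of powers over fibers
    have prod_counts : ∀ g : Fin n → S,
        ∏ j, ω (g j) = ∏ s, ω s ^ (Finset.univ.filter (fun j => g j = s)).card := by
      intro g
      rw [← Finset.prod_fiberwise_of_maps_to (g := g) (t := Finset.univ)
        (fun j _ => Finset.mem_univ (g j)) (fun j => ω (g j))]
      refine Finset.prod_congr rfl fun s _ => ?_
      rw [Finset.prod_congr rfl (fun j hj => by
        simp only [Finset.mem_filter] at hj; rw [hj.2]), Finset.prod_const]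
    have prod_counts' : ∏ j, ω' (s' j) = ∏ y, ω' y ^ c' y := by
      rw [← Finset.prod_fiberwise_of_maps_to (g := s') (t := Finset.univ)
        (fun j _ => Finset.mem_univ (s' j)) (fun j => ω' (s' j))]
      refine Finset.prod_congr rfl fun y _ => ?_
      rw [Finset.prod_congr rfl (fun j hj => by
        simp only [Finset.mem_filter] at hj; rw [hj.2]), Finset.prod_const]
    -- exponential formulas
    have pow_exp : ∀ (x : ℝ) (k : ℕ), 0 ≤ x → ((x = 0 → k = 0)) →
        x ^ k = Real.exp ((k : ℝ) * Real.log x) := by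
      intro x k hx h0
      rcases hx.eq_or_lt with h | h
      · rw [h0 h.symm]; simp
      · rw [Real.exp_nat_mul, Real.exp_log h]
    have hP0 : ∀ s, ω s = 0 → c s = 0 := by
      intro s h
      have := hc s; rw [h, zero_mul] at this; exact_mod_cast this
    have hQ0 : ∀ y, ω' y = 0 → c' y = 0 := by
      intro y h
      have := hc' y; rw [h, zero_mul] at this; exact_mod_cast this
    have hPexp : ∏ s, ω s ^ c s = Real.exp (∑ s, (ω s * n) * Real.log (ω s)) := by
      rw [Real.exp_sum]
      refine Finset.prod_congr rfl fun s _ => ?_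
      rw [pow_exp (ω s) (c s) (hω s) (hP0 s), hc s]
    have hQexp : ∏ y, ω' y ^ c' y = Real.exp (∑ y, (ω' y * n) * Real.log (ω' y)) := by
      rw [Real.exp_sum]
      refine Finset.prod_congr rfl fun y _ => ?_
      rw [pow_exp (ω' y) (c' y) (hω'nonneg y) (hQ0 y), hc' y]
    -- the main counting estimate
    set A : Finset (Fin n → S) := Finset.univ.filter P with hAdef
    have hcard : (Nat.card {g : Fin n → S // P g} : ℝ) = (A.card : ℝ) := by
      rw [Nat.card_eq_fintype_card, Fintype.card_subtype]
    have key : (A.card : ℝ) * ∏ s, ω s ^ c s ≤ ∏ y, ω' y ^ c' y := by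
      have step0 : ∀ g ∈ A, ∏ j, ω (g j) = ∏ s, ω s ^ c s := by
        intro g hg
        rw [prod_counts g]
        refine Finset.prod_congr rfl fun s _ => ?_
        simp only [hAdef, hPdef, Finset.mem_filter] at hg
        have h1 := hg.2.1 s
        have h2 := hc s
        congr 1
        exact_mod_cast h1.trans h2.symm
      have step1 : (A.card : ℝ) * ∏ s, ω s ^ c s = ∑ g ∈ A, ∏ j, ω (g j) := by
        rw [Finset.sum_congr rfl step0, Finset.sum_const, nsmul_eq_mul]
      rw [step1, prod_counts'.symm]
      calc ∑ g ∈ A, ∏ j, ω (g j)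
          ≤ ∑ g ∈ Finset.univ.filter (fun g : Fin n → S => ∀ j, f (g j) = s' j),
              ∏ j, ω (g j) := by
            apply Finset.sum_le_sum_of_subset_of_nonneg
            · intro g hg
              simp only [hAdef, hPdef, Finset.mem_filter] at hg ⊢
              exact ⟨hg.1, hg.2.2⟩
            · intro g _ _
              exact Finset.prod_nonneg fun j _ => hω (g j)
        _ = ∑ g : Fin n → S, ∏ j, (if f (g j) = s' j then ω (g j) else 0) := by
            rw [Finset.sum_filter]
            refine Finset.sum_congr rfl fun g _ => ?_
            by_cases h : ∀ j, f (g j) = s' j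
            · rw [if_pos h]
              exact Finset.prod_congr rfl fun j _ => (if_pos (h j)).symm
            · rw [if_neg h]
              push_neg at h
              obtain ⟨j, hj⟩ := h
              symm
              apply Finset.prod_eq_zero (Finset.mem_univ j)
              rw [if_neg hj]
        _ = ∏ j, ∑ s, (if f s = s' j then ω s else 0) :=
            (Fintype.prod_sum (fun j s => if f s = s' j then ω s else 0)).symm
        _ = ∏ j, ω' (s' j) := by
            refine Finset.prod_congr rfl fun j _ => ?_
            simp only [hω'def]
            rw [Finset.sum_filter]
    -- conclude
    have hPpos : (0:ℝ) < ∏ s, ω s ^ c s := by rw [hPexp]; exact Real.exp_pos _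
    have final : (A.card : ℝ) ≤
        Real.exp ((∑ y, (ω' y * n) * Real.log (ω' y)) - ∑ s, (ω s * n) * Real.log (ω s)) := by
      rw [Real.exp_sub, ← hPexp, ← hQexp, le_div_iff₀ hPpos]
      exact key
    have harith : ((∑ s, -(ω s * Real.log (ω s))) - ∑ y, -(ω' y * Real.log (ω' y))) * n
        = (∑ y, (ω' y * n) * Real.log (ω' y)) - ∑ s, (ω s * n) * Real.log (ω s) := by
      rw [sub_mul, Finset.sum_mul, Finset.sum_mul]
      rw [Finset.sum_congr rfl fun s (_ : s ∈ univ) => (by ring :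
        -(ω s * Real.log (ω s)) * n = -((ω s * n) * Real.log (ω s)))]
      rw [Finset.sum_congr rfl fun y (_ : y ∈ univ) => (by ring :
        -(ω' y * Real.log (ω' y)) * n = -((ω' y * n) * Real.log (ω' y)))]
      rw [Finset.sum_neg_distrib, Finset.sum_neg_distrib]
      ring
    rw [hcard]
    show (A.card : ℝ) ≤ Real.exp (((∑ s, -(ω s * Real.log (ω s))) -
        ∑ y, -(ω' y * Real.log (ω' y))) * n)
    rw [harith]
    exact final
end

section
/- Let ω_0 and ω_1 be two probability distributions on a finite set S, and suppose c > 0 satisfies ω_0(s) ≥ c and ω_1(s) ≥ c for every s ∈ S. Then |H(ω_1) − H(ω_0)| ≤ ‖ω_1 − ω_0‖_1 · log(1/c), where ‖ω_1 − ω_0‖_1 = Σ_{s∈S} |ω_1(s) − ω_0(s)| and H is the Shannon entropy with natural logarithm. -/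
open Real Finset

lemma g_mono {c : ℝ} (hc : 0 < c) :
    MonotoneOn (fun t : ℝ => t - t * Real.log t) (Set.Icc c 1) := by
  have hd : ∀ t ∈ interior (Set.Icc c 1),
      HasDerivAt (fun t : ℝ => t - t * Real.log t) (1 - (Real.log t + 1)) t := by
    intro t ht
    rw [interior_Icc] at ht
    exact (hasDerivAt_id t).sub (Real.hasDerivAt_mul_log (ne_of_gt (hc.trans ht.1)))
  apply monotoneOn_of_deriv_nonneg (convex_Icc c 1)
  · exact continuousOn_id.sub (continuousOn_id.mul
      (Real.continuousOn_log.mono fun x hx => ne_of_gt (hc.trans_le hx.1)))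
  · exact fun t ht => (hd t ht).differentiableAt.differentiableWithinAt
  · intro t ht
    rw [(hd t ht).deriv]
    rw [interior_Icc] at ht
    have h0 : Real.log t ≤ 0 := Real.log_nonpos (hc.trans ht.1).le ht.2.le
    linarith

lemma h_mono {c : ℝ} (hc : 0 < c) :
    MonotoneOn (fun t : ℝ => Real.log (1 / c) * t - (t - t * Real.log t)) (Set.Icc c 1) := by
  have hd : ∀ t ∈ interior (Set.Icc c 1),
      HasDerivAt (fun t : ℝ => Real.log (1 / c) * t - (t - t * Real.log t))
        (Real.log (1 / c) * 1 - (1 - (Real.log t + 1))) t := by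
    intro t ht
    rw [interior_Icc] at ht
    exact ((hasDerivAt_id t).const_mul _).sub
      ((hasDerivAt_id t).sub (Real.hasDerivAt_mul_log (ne_of_gt (hc.trans ht.1))))
  apply monotoneOn_of_deriv_nonneg (convex_Icc c 1)
  · exact ((continuous_const.mul continuous_id).continuousOn).sub
      (continuousOn_id.sub (continuousOn_id.mul
      (Real.continuousOn_log.mono fun x hx => ne_of_gt (hc.trans_le hx.1))))
  · exact fun t ht => (hd t ht).differentiableAt.differentiableWithinAt
  · intro t ht
    rw [(hd t ht).deriv]
    rw [interior_Icc] at ht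
    have hlog : Real.log (1 / c) = -Real.log c := by
      rw [Real.log_div one_ne_zero (ne_of_gt hc), Real.log_one]; ring
    have h0 : Real.log c ≤ Real.log t := Real.log_le_log hc ht.1.le
    rw [hlog]; linarith

lemma lip_aux {c : ℝ} (hc : 0 < c) {x y : ℝ} (hx : x ∈ Set.Icc c 1) (hy : y ∈ Set.Icc c 1)
    (hxy : y ≤ x) :
    |(x - x * Real.log x) - (y - y * Real.log y)| ≤ (x - y) * Real.log (1 / c) := by
  have h1 := g_mono hc hy hx hxy
  have h2 := h_mono hc hy hx hxy
  simp only at h1 h2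
  rw [abs_of_nonneg (sub_nonneg.2 h1)]
  nlinarith [h2]

theorem stmt2 {S : Type*} [Fintype S] (ω₀ ω₁ : S → ℝ) (c : ℝ) (hc : 0 < c)
    (h₀ : ∀ s, c ≤ ω₀ s) (h₁ : ∀ s, c ≤ ω₁ s)
    (hs₀ : ∑ s, ω₀ s = 1) (hs₁ : ∑ s, ω₁ s = 1) :
    |(∑ s, -(ω₁ s * Real.log (ω₁ s))) - (∑ s, -(ω₀ s * Real.log (ω₀ s)))| ≤
      (∑ s, |ω₁ s - ω₀ s|) * Real.log (1 / c) := by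
  have hb : ∀ (ω : S → ℝ), (∀ s, c ≤ ω s) → ∑ s, ω s = 1 → ∀ s, ω s ∈ Set.Icc c 1 := by
    intro ω h hsum s
    refine ⟨h s, ?_⟩
    calc ω s ≤ ∑ t, ω t :=
          Finset.single_le_sum (fun t _ => hc.le.trans (h t)) (Finset.mem_univ s)
      _ = 1 := hsum
  have key : (∑ s, -(ω₁ s * Real.log (ω₁ s))) - (∑ s, -(ω₀ s * Real.log (ω₀ s)))
      = ∑ s, ((ω₁ s - ω₁ s * Real.log (ω₁ s)) - (ω₀ s - ω₀ s * Real.log (ω₀ s))) := by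
    rw [Finset.sum_sub_distrib, Finset.sum_sub_distrib, Finset.sum_sub_distrib, hs₀, hs₁]
    simp [Finset.sum_neg_distrib]
    ring
  rw [key]
  calc |∑ s, ((ω₁ s - ω₁ s * Real.log (ω₁ s)) - (ω₀ s - ω₀ s * Real.log (ω₀ s)))|
      ≤ ∑ s, |(ω₁ s - ω₁ s * Real.log (ω₁ s)) - (ω₀ s - ω₀ s * Real.log (ω₀ s))| :=
        Finset.abs_sum_le_sum_abs _ _
    _ ≤ ∑ s, |ω₁ s - ω₀ s| * Real.log (1 / c) := by
        apply Finset.sum_le_sum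
        intro s _
        rcases le_total (ω₀ s) (ω₁ s) with h | h
        · have := lip_aux hc (hb ω₁ h₁ hs₁ s) (hb ω₀ h₀ hs₀ s) h
          rwa [abs_of_nonneg (sub_nonneg.2 h)]
        · have := lip_aux hc (hb ω₀ h₀ hs₀ s) (hb ω₁ h₁ hs₁ s) h
          rw [abs_sub_comm (ω₁ s) (ω₀ s), abs_of_nonneg (sub_nonneg.2 h)]
          rwa [abs_sub_comm]
    _ = (∑ s, |ω₁ s - ω₀ s|) * Real.log (1 / c) := (Finset.sum_mul _ _ _).symm
end

section
/- For integers m ≥ 2 and k ≥ 3, let γ = γ_{m,k} ∈ (0,1) be a minimizer of the function γ ↦ (1 + γ + … + γ^{m−1}) / γ^{(m−1)/k} on (0,1), and define the probability distribution ν_{m,k} on {0,…,m−1} by ν_{m,k}(i) = γ^i / (1 + γ + … + γ^{m−1}). Then ν_{m,k} has expectation Σ_i i·ν_{m,k}(i) = (m−1)/k. -/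
theorem stmt3 (m k : ℕ) (hm : 2 ≤ m) (hk : 3 ≤ k) (γ : ℝ) (hγ0 : 0 < γ) (hγ1 : γ < 1)
    (hmin : ∀ γ' : ℝ, 0 < γ' → γ' < 1 →
      (∑ i ∈ Finset.range m, γ ^ i) / γ ^ (((m : ℝ) - 1) / k) ≤
        (∑ i ∈ Finset.range m, γ' ^ i) / γ' ^ (((m : ℝ) - 1) / k)) :
    ∑ i ∈ Finset.range m, (i : ℝ) * (γ ^ i / ∑ j ∈ Finset.range m, γ ^ j) =
      ((m : ℝ) - 1) / k := by
  set α : ℝ := ((m : ℝ) - 1) / k with hα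
  have hγne : γ ≠ 0 := ne_of_gt hγ0
  have hSpos : 0 < ∑ j ∈ Finset.range m, γ ^ j := by
    apply Finset.sum_pos
    · intro i _; positivity
    · exact ⟨0, Finset.mem_range.mpr (by omega)⟩
  have hSne : (∑ j ∈ Finset.range m, γ ^ j) ≠ 0 := ne_of_gt hSpos
  -- derivative of numerator
  have hSd : HasDerivAt (fun x : ℝ => ∑ i ∈ Finset.range m, x ^ i)
      (∑ i ∈ Finset.range m, (i : ℝ) * γ ^ (i - 1)) γ :=
    HasDerivAt.fun_sum fun i _ => hasDerivAt_pow i γ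
  have hgd : HasDerivAt (fun x : ℝ => x ^ α) (α * γ ^ (α - 1)) γ :=
    Real.hasDerivAt_rpow_const (Or.inl hγne)
  have hgpos : 0 < γ ^ α := Real.rpow_pos_of_pos hγ0 α
  have hfd : HasDerivAt (fun x : ℝ => (∑ i ∈ Finset.range m, x ^ i) / x ^ α)
      (((∑ i ∈ Finset.range m, (i : ℝ) * γ ^ (i - 1)) * γ ^ α -
        (∑ i ∈ Finset.range m, γ ^ i) * (α * γ ^ (α - 1))) / (γ ^ α) ^ 2) γ :=
    hSd.div hgd (ne_of_gt hgpos)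
  have hloc : IsLocalMin (fun x : ℝ => (∑ i ∈ Finset.range m, x ^ i) / x ^ α) γ := by
    filter_upwards [Ioo_mem_nhds hγ0 hγ1] with y hy
    exact hmin y hy.1 hy.2
  have hz := hloc.hasDerivAt_eq_zero hfd
  have hnum : (∑ i ∈ Finset.range m, (i : ℝ) * γ ^ (i - 1)) * γ ^ α =
      (∑ i ∈ Finset.range m, γ ^ i) * (α * γ ^ (α - 1)) := by
    have := (div_eq_zero_iff.mp hz).resolve_right (by positivity)
    linarith
  have hsplit : γ ^ α = γ ^ (α - 1) * γ := by
    rw [Real.rpow_sub hγ0, Real.rpow_one]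
    field_simp
  have hkey : (∑ i ∈ Finset.range m, (i : ℝ) * γ ^ (i - 1)) * γ =
      α * (∑ i ∈ Finset.range m, γ ^ i) := by
    have hp : 0 < γ ^ (α - 1) := Real.rpow_pos_of_pos hγ0 _
    have h2 : (∑ i ∈ Finset.range m, (i : ℝ) * γ ^ (i - 1)) * (γ ^ (α - 1) * γ) =
        (∑ i ∈ Finset.range m, γ ^ i) * (α * γ ^ (α - 1)) := by rw [← hsplit]; exact hnum
    apply mul_left_cancel₀ (ne_of_gt hp)
    linear_combination h2
  have hsum : ∑ i ∈ Finset.range m, (i : ℝ) * γ ^ i =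
      (∑ i ∈ Finset.range m, (i : ℝ) * γ ^ (i - 1)) * γ := by
    rw [Finset.sum_mul]
    refine Finset.sum_congr rfl fun i _ => ?_
    rcases Nat.eq_zero_or_pos i with h | h
    · simp [h]
    · rw [mul_assoc, ← pow_succ, Nat.sub_add_cancel h]
  have : ∑ i ∈ Finset.range m, (i : ℝ) * (γ ^ i / ∑ j ∈ Finset.range m, γ ^ j) =
      (∑ i ∈ Finset.range m, (i : ℝ) * γ ^ i) / ∑ j ∈ Finset.range m, γ ^ j := by
    rw [Finset.sum_div]
    exact Finset.sum_congr rfl fun i _ => by ring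
  rw [this, hsum, hkey, mul_div_assoc, div_self hSne, mul_one]
end

section
/- For integers m ≥ 2 and k ≥ 3, with γ_{m,k} ∈ (0,1) a minimizer of γ ↦ (1+γ+…+γ^{m−1})/γ^{(m−1)/k} and ν_{m,k}(i) = γ_{m,k}^i / (1+γ_{m,k}+…+γ_{m,k}^{m−1}) for i ∈ {0,…,m−1}, the entropy of ν_{m,k} equals log Γ_{m,k}, where Γ_{m,k} is the minimum value of the function. -/
theorem stmt4 (m k : ℕ) (hm : 2 ≤ m) (hk : 3 ≤ k) (γ : ℝ) (hγ0 : 0 < γ) (hγ1 : γ < 1)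
    (hmin : ∀ γ' : ℝ, 0 < γ' → γ' < 1 →
      (∑ i ∈ Finset.range m, γ ^ i) / γ ^ (((m : ℝ) - 1) / k) ≤
        (∑ i ∈ Finset.range m, γ' ^ i) / γ' ^ (((m : ℝ) - 1) / k)) :
    ∑ i ∈ Finset.range m,
        -((γ ^ i / ∑ j ∈ Finset.range m, γ ^ j) *
          Real.log (γ ^ i / ∑ j ∈ Finset.range m, γ ^ j)) =
      Real.log ((∑ i ∈ Finset.range m, γ ^ i) / γ ^ (((m : ℝ) - 1) / k)) := by
  set α : ℝ := ((m : ℝ) - 1) / k with hα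
  set S : ℝ := ∑ i ∈ Finset.range m, γ ^ i with hS
  have hγne : γ ≠ 0 := ne_of_gt hγ0
  have hSpos : 0 < S :=
    Finset.sum_pos (fun i _ => pow_pos hγ0 i) ⟨0, Finset.mem_range.2 (by omega)⟩
  -- First-order condition at the interior minimizer
  have hT : ∑ i ∈ Finset.range m, (i : ℝ) * γ ^ i = α * S := by
    set g : ℝ → ℝ := fun x => (∑ i ∈ Finset.range m, x ^ i) * x ^ (-α) with hg
    have hgmin : IsLocalMin g γ := by
      have hmem : Set.Ioo (0:ℝ) 1 ∈ nhds γ := isOpen_Ioo.mem_nhds ⟨hγ0, hγ1⟩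
      refine Filter.eventually_of_mem hmem (fun x hx => ?_)
      have h1 : g γ = S / γ ^ α := by
        simp [hg, Real.rpow_neg hγ0.le, div_eq_mul_inv, hS]
      have h2 : g x = (∑ i ∈ Finset.range m, x ^ i) / x ^ α := by
        simp [hg, Real.rpow_neg hx.1.le, div_eq_mul_inv]
      rw [h1, h2]
      exact hmin x hx.1 hx.2
    have hd : HasDerivAt g
        ((∑ i ∈ Finset.range m, (i : ℝ) * γ ^ (i - 1)) * γ ^ (-α)
          + S * (-α * γ ^ (-α - 1))) γ := by
      have h1 : HasDerivAt (fun x : ℝ => ∑ i ∈ Finset.range m, x ^ i)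
          (∑ i ∈ Finset.range m, (i : ℝ) * γ ^ (i - 1)) γ :=
        HasDerivAt.fun_sum fun i _ => hasDerivAt_pow i γ
      have h2 : HasDerivAt (fun x : ℝ => x ^ (-α)) (-α * γ ^ (-α - 1)) γ :=
        Real.hasDerivAt_rpow_const (Or.inl hγne)
      exact h1.mul h2
    have hzero := hgmin.hasDerivAt_eq_zero hd
    set A : ℝ := ∑ i ∈ Finset.range m, (i : ℝ) * γ ^ (i - 1) with hA
    have e1 : γ ^ (-α) * γ ^ (α + 1) = γ := by
      rw [← Real.rpow_add hγ0]
      norm_num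
    have e2 : γ ^ (-α - 1) * γ ^ (α + 1) = 1 := by
      rw [← Real.rpow_add hγ0]
      norm_num
    have hmul : γ * A = ∑ i ∈ Finset.range m, (i : ℝ) * γ ^ i := by
      rw [hA, Finset.mul_sum]
      refine Finset.sum_congr rfl fun i _ => ?_
      cases i with
      | zero => simp
      | succ n => simp [pow_succ]; ring
    have key : γ * A = α * S := by
      have := congrArg (fun t => t * γ ^ (α + 1)) hzero
      simp only [add_mul, zero_mul] at this
      have h3 : A * γ ^ (-α) * γ ^ (α + 1) = γ * A := by
        rw [mul_assoc, e1]; ring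
      have h4 : S * (-α * γ ^ (-α - 1)) * γ ^ (α + 1) = -(α * S) := by
        rw [mul_assoc, mul_assoc, e2]; ring
      rw [h3, h4] at this
      linarith
    rw [← hmul, key]
  -- entropy computation
  have hlog : ∀ i ∈ Finset.range m,
      -((γ ^ i / S) * Real.log (γ ^ i / S))
        = (γ ^ i / S) * Real.log S - ((i : ℝ) * γ ^ i / S) * Real.log γ := by
    intro i _
    rw [Real.log_div (pow_ne_zero i hγne) hSpos.ne', Real.log_pow]
    ring
  rw [Finset.sum_congr rfl hlog, Finset.sum_sub_distrib]
  have hsum1 : ∑ i ∈ Finset.range m, (γ ^ i / S) * Real.log S = Real.log S := by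
    rw [← Finset.sum_mul, ← Finset.sum_div, ← hS, div_self hSpos.ne', one_mul]
  have hsum2 : ∑ i ∈ Finset.range m, ((i : ℝ) * γ ^ i / S) * Real.log γ
      = α * Real.log γ := by
    rw [← Finset.sum_mul, ← Finset.sum_div, hT, mul_div_assoc, div_self hSpos.ne', mul_one]
  rw [hsum1, hsum2, Real.log_div hSpos.ne' (Real.rpow_pos_of_pos hγ0 α).ne',
    Real.log_rpow hγ0]
end

section
/- Let k ≥ 3 and m ≥ 2, and let τ be an S_k-symmetric probability distribution on T_{m−1,k} with marginal ν (the common distribution of each coordinate). Let z_τ have distribution τ. For any subspace W ⊆ V_k = {v ∈ ℚ^k : Σv_i = 0} containing the vector (1,…,1,−(k−1)), we have H((w̃(z_τ))_{w∈W}) ≥ H(ν) + ((dim W − 1)/(k−2)) · (H(τ) − H(ν)). -/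
open scoped Classical
open Finset

/- ## Entropy toolkit -/
section Entropy
variable {T : Type*} [Fintype T] (τ : T → ℝ)

noncomputable def pfib {B : Type*} (f : T → B) (t : T) : ℝ :=
  ∑ u ∈ Finset.univ.filter (fun u => f u = f t), τ u

noncomputable def ent {B : Type*} (f : T → B) : ℝ :=
  ∑ t, -(τ t * Real.log (pfib τ f t))

lemma pfib_nonneg {B : Type*} (hpos : ∀ t, 0 ≤ τ t) (f : T → B) (t : T) : 0 ≤ pfib τ f t :=
  Finset.sum_nonneg fun u _ => hpos u

lemma le_pfib {B : Type*} (hpos : ∀ t, 0 ≤ τ t) (f : T → B) (t : T) : τ t ≤ pfib τ f t := by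
  apply Finset.single_le_sum (fun u _ => hpos u)
  simp

lemma pfib_le_one {B : Type*} (hpos : ∀ t, 0 ≤ τ t) (hsum : ∑ t, τ t = 1)
    (f : T → B) (t : T) : pfib τ f t ≤ 1 := by
  rw [← hsum]
  exact Finset.sum_le_sum_of_subset_of_nonneg (Finset.filter_subset _ _)
    (fun u _ _ => hpos u)

lemma ent_nonneg {B : Type*} (hpos : ∀ t, 0 ≤ τ t) (hsum : ∑ t, τ t = 1)
    (f : T → B) : 0 ≤ ent τ f := by
  apply Finset.sum_nonneg
  intro t _
  rcases eq_or_lt_of_le (hpos t) with h | h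
  · simp [← h]
  · have h1 : Real.log (pfib τ f t) ≤ 0 :=
      Real.log_nonpos (pfib_nonneg τ hpos f t) (pfib_le_one τ hpos hsum f t)
    nlinarith

lemma pfib_congr {B B' : Type*} {f : T → B} {g : T → B'} {t : T}
    (h : ∀ u, f u = f t ↔ g u = g t) : pfib τ f t = pfib τ g t := by
  unfold pfib
  congr 1
  apply Finset.filter_congr
  intro u _
  simp [h u]

lemma ent_congr {B B' : Type*} {f : T → B} {g : T → B'}
    (h : ∀ u v, f u = f v ↔ g u = g v) : ent τ f = ent τ g := by
  unfold ent
  congr 1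
  funext t
  rw [pfib_congr τ (fun u => h u t)]

lemma ent_comp_equiv {B : Type*} (f : T → B) (e : T ≃ T) (hτ : ∀ t, τ (e t) = τ t) :
    ent τ (f ∘ e) = ent τ f := by
  have hp : ∀ t, pfib τ (f ∘ e) t = pfib τ f (e t) := by
    intro t
    unfold pfib
    rw [Finset.sum_filter, Finset.sum_filter]
    rw [← Equiv.sum_comp e (fun u => if f u = f (e t) then τ u else 0)]
    refine Finset.sum_congr rfl fun u _ => ?_
    simp [Function.comp, hτ u]
  unfold ent
  rw [← Equiv.sum_comp e (fun t => -(τ t * Real.log (pfib τ f t)))]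
  refine Finset.sum_congr rfl fun t _ => ?_
  rw [hp t, hτ t]


lemma pfib_eq_of_eq {B : Type*} {f : T → B} {t t' : T} (h : f t = f t') :
    pfib τ f t = pfib τ f t' := by
  unfold pfib
  congr 1
  apply Finset.filter_congr
  intro u _
  simp [h]

lemma key_sum {B1 B2 B3 : Type*} (hpos : ∀ t, 0 ≤ τ t) (hsum : ∑ t, τ t = 1)
    (f : T → B1) (g : T → B2) (Kp : T → B3)
    (hKf : ∀ u v, f u = f v → Kp u = Kp v) (hKg : ∀ u v, g u = g v → Kp u = Kp v) :
    ∑ t, τ t * (pfib τ f t * pfib τ g t * (pfib τ (fun t => (f t, g t)) t)⁻¹ *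
      (pfib τ Kp t)⁻¹) ≤ 1 := by
  have expand : ∀ t, τ t * (pfib τ f t * pfib τ g t * (pfib τ (fun t => (f t, g t)) t)⁻¹ * (pfib τ Kp t)⁻¹)
      = ∑ u, ∑ v, ((if f u = f t then τ u else 0) * (if g v = g t then τ v else 0)
          * (τ t * (pfib τ (fun t => (f t, g t)) t)⁻¹ * (pfib τ Kp t)⁻¹)) := by
    intro t
    have hFt : pfib τ f t = ∑ u, if f u = f t then τ u else 0 := Finset.sum_filter _ _
    have hGt : pfib τ g t = ∑ v, if g v = g t then τ v else 0 := Finset.sum_filter _ _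
    calc τ t * (pfib τ f t * pfib τ g t * (pfib τ (fun t => (f t, g t)) t)⁻¹ * (pfib τ Kp t)⁻¹)
        = (pfib τ f t) * (pfib τ g t) * (τ t * (pfib τ (fun t => (f t, g t)) t)⁻¹ * (pfib τ Kp t)⁻¹) := by
          ring
      _ = (∑ u, ∑ v, (if f u = f t then τ u else 0) * (if g v = g t then τ v else 0))
            * (τ t * (pfib τ (fun t => (f t, g t)) t)⁻¹ * (pfib τ Kp t)⁻¹) := by
          rw [hFt, hGt, Finset.sum_mul_sum]
      _ = _ := by
          rw [Finset.sum_mul]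
          refine Finset.sum_congr rfl fun u _ => ?_
          rw [Finset.sum_mul]
  calc ∑ t, τ t * (pfib τ f t * pfib τ g t * (pfib τ (fun t => (f t, g t)) t)⁻¹ * (pfib τ Kp t)⁻¹)
      = ∑ t, ∑ u, ∑ v, ((if f u = f t then τ u else 0) * (if g v = g t then τ v else 0)
          * (τ t * (pfib τ (fun t => (f t, g t)) t)⁻¹ * (pfib τ Kp t)⁻¹)) :=
        Finset.sum_congr rfl fun t _ => expand t
    _ = ∑ u, ∑ v, ∑ t, ((if f u = f t then τ u else 0) * (if g v = g t then τ v else 0)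
          * (τ t * (pfib τ (fun t => (f t, g t)) t)⁻¹ * (pfib τ Kp t)⁻¹)) := by
        rw [Finset.sum_comm]
        exact Finset.sum_congr rfl fun u _ => Finset.sum_comm
    _ ≤ ∑ u, ∑ v, (if Kp v = Kp u then τ u * (τ v * (pfib τ Kp u)⁻¹) else 0) := by
        refine Finset.sum_le_sum fun u _ => Finset.sum_le_sum fun v _ => ?_
        have hterm : ∀ t, (if f u = f t then τ u else 0) * (if g v = g t then τ v else 0)
            * (τ t * (pfib τ (fun t => (f t, g t)) t)⁻¹ * (pfib τ Kp t)⁻¹)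
            = if (f u = f t ∧ g v = g t) then
                τ u * τ v * (τ t * (pfib τ (fun t => (f t, g t)) t)⁻¹ * (pfib τ Kp t)⁻¹) else 0 := by
          intro t
          by_cases h1 : f u = f t <;> by_cases h2 : g v = g t <;> simp [h1, h2]
        rw [Finset.sum_congr rfl fun t _ => hterm t, ← Finset.sum_filter]
        set C := Finset.univ.filter (fun t => f u = f t ∧ g v = g t) with hC
        by_cases hKuv : Kp v = Kp u
        · rw [if_pos hKuv]
          set S := ∑ t' ∈ C, τ t' with hS
          have hKnn : (0:ℝ) ≤ (pfib τ Kp u)⁻¹ :=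
            inv_nonneg.2 (pfib_nonneg τ hpos Kp u)
          have hKt : ∀ t ∈ C, pfib τ Kp t = pfib τ Kp u := by
            intro t ht
            rw [hC, Finset.mem_filter] at ht
            exact pfib_eq_of_eq τ (hKf u t ht.2.1).symm
          have hPt : ∀ t ∈ C, pfib τ (fun x => (f x, g x)) t = S := by
            intro t ht
            rw [hC, Finset.mem_filter] at ht
            have hfil : (Finset.univ.filter (fun t' => (f t', g t') = (f t, g t))) = C := by
              rw [hC]
              ext t'
              simp only [Finset.mem_filter, Finset.mem_univ, true_and, Prod.mk.injEq]
              constructor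
              · rintro ⟨h1, h2⟩
                exact ⟨ht.2.1.trans h1.symm, ht.2.2.trans h2.symm⟩
              · rintro ⟨h1, h2⟩
                exact ⟨(ht.2.1.symm.trans h1).symm, (ht.2.2.symm.trans h2).symm⟩
            unfold pfib
            rw [hS]
            congr 1
            simpa using hfil
          calc ∑ t ∈ C, τ u * τ v * (τ t * (pfib τ (fun x => (f x, g x)) t)⁻¹ * (pfib τ Kp t)⁻¹)
              = ∑ t ∈ C, τ t * (τ u * τ v * S⁻¹ * (pfib τ Kp u)⁻¹) := by
                refine Finset.sum_congr rfl fun t ht => ?_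
                rw [hPt t ht, hKt t ht]
                ring
            _ = (S * S⁻¹) * (τ u * (τ v * (pfib τ Kp u)⁻¹)) := by
                rw [← Finset.sum_mul, ← hS]
                ring
            _ ≤ τ u * (τ v * (pfib τ Kp u)⁻¹) := by
                apply mul_le_of_le_one_left
                · have := mul_nonneg (hpos v) hKnn
                  exact mul_nonneg (hpos u) this
                · rcases eq_or_ne S 0 with h | h
                  · simp [h]
                  · rw [mul_inv_cancel₀ h]
        · rw [if_neg hKuv]
          apply le_of_eq
          apply Finset.sum_eq_zero
          intro t ht
          rw [hC, Finset.mem_filter] at ht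
          exact absurd ((hKg v t ht.2.2).trans (hKf u t ht.2.1).symm) hKuv
    _ = ∑ u, τ u * ((pfib τ Kp u)⁻¹ * pfib τ Kp u) := by
        refine Finset.sum_congr rfl fun u _ => ?_
        rw [← Finset.sum_filter]
        calc ∑ v ∈ Finset.univ.filter (fun v => Kp v = Kp u), τ u * (τ v * (pfib τ Kp u)⁻¹)
            = (∑ v ∈ Finset.univ.filter (fun v => Kp v = Kp u), τ v) * (τ u * (pfib τ Kp u)⁻¹) := by
              rw [Finset.sum_mul]
              exact Finset.sum_congr rfl fun v _ => by ring
          _ = τ u * ((pfib τ Kp u)⁻¹ * pfib τ Kp u) := by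
              unfold pfib
              ring
    _ ≤ ∑ u, τ u := by
        refine Finset.sum_le_sum fun u _ => ?_
        rcases eq_or_ne (pfib τ Kp u) 0 with h | h
        · simp [h, hpos u]
        · rw [inv_mul_cancel₀ h, mul_one]
    _ = 1 := hsum


lemma ent_submod {B1 B2 B3 : Type*} (hpos : ∀ t, 0 ≤ τ t) (hsum : ∑ t, τ t = 1)
    (f : T → B1) (g : T → B2) (Kp : T → B3)
    (hKf : ∀ u v, f u = f v → Kp u = Kp v) (hKg : ∀ u v, g u = g v → Kp u = Kp v) :
    ent τ (fun t => (f t, g t)) + ent τ Kp ≤ ent τ f + ent τ g := by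
  have key := key_sum τ hpos hsum f g Kp hKf hKg
  have per : ∀ t, (-(τ t * Real.log (pfib τ (fun t => (f t, g t)) t)) + -(τ t * Real.log (pfib τ Kp t)))
      - (-(τ t * Real.log (pfib τ f t)) + -(τ t * Real.log (pfib τ g t)))
      ≤ τ t * (pfib τ f t * pfib τ g t * (pfib τ (fun t => (f t, g t)) t)⁻¹ * (pfib τ Kp t)⁻¹) - τ t := by
    intro t
    rcases eq_or_lt_of_le (hpos t) with h | hτ
    · simp [← h]
    · have hP : 0 < pfib τ (fun t => (f t, g t)) t := lt_of_lt_of_le hτ (le_pfib τ hpos _ t)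
      have hF : 0 < pfib τ f t := lt_of_lt_of_le hτ (le_pfib τ hpos _ t)
      have hG : 0 < pfib τ g t := lt_of_lt_of_le hτ (le_pfib τ hpos _ t)
      have hK : 0 < pfib τ Kp t := lt_of_lt_of_le hτ (le_pfib τ hpos _ t)
      have hx : 0 < pfib τ f t * pfib τ g t * (pfib τ (fun t => (f t, g t)) t)⁻¹ * (pfib τ Kp t)⁻¹ := by
        have := inv_pos.2 hP
        have := inv_pos.2 hK
        positivity
      have hlog := Real.log_le_sub_one_of_pos hx
      have hlogx : Real.log (pfib τ f t * pfib τ g t * (pfib τ (fun t => (f t, g t)) t)⁻¹ * (pfib τ Kp t)⁻¹)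
          = Real.log (pfib τ f t) + Real.log (pfib τ g t)
            - Real.log (pfib τ (fun t => (f t, g t)) t) - Real.log (pfib τ Kp t) := by
        rw [Real.log_mul (by positivity) (ne_of_gt (inv_pos.2 hK)),
            Real.log_mul (by positivity) (ne_of_gt (inv_pos.2 hP)),
            Real.log_mul (ne_of_gt hF) (ne_of_gt hG),
            Real.log_inv, Real.log_inv]
        ring
      have hmul := mul_le_mul_of_nonneg_left hlog hτ.le
      rw [hlogx] at hmul
      nlinarith [hmul]
  have hsum2 := Finset.sum_le_sum (fun t (_ : t ∈ Finset.univ) => per t)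
  have hL : ∑ t, ((-(τ t * Real.log (pfib τ (fun t => (f t, g t)) t)) + -(τ t * Real.log (pfib τ Kp t)))
      - (-(τ t * Real.log (pfib τ f t)) + -(τ t * Real.log (pfib τ g t))))
      = ent τ (fun t => (f t, g t)) + ent τ Kp - (ent τ f + ent τ g) := by
    unfold ent
    rw [Finset.sum_sub_distrib, Finset.sum_add_distrib, Finset.sum_add_distrib]
  have hR : ∑ t, (τ t * (pfib τ f t * pfib τ g t * (pfib τ (fun t => (f t, g t)) t)⁻¹ * (pfib τ Kp t)⁻¹) - τ t)
      = (∑ t, τ t * (pfib τ f t * pfib τ g t * (pfib τ (fun t => (f t, g t)) t)⁻¹ * (pfib τ Kp t)⁻¹)) - 1 := by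
    rw [Finset.sum_sub_distrib, hsum]
  rw [hL, hR] at hsum2
  linarith

end Entropy

/- ## Geometry -/
section Geom
variable {m k : ℕ}


abbrev TT (m k : ℕ) := {a : Fin k → Fin m // ∑ i, (a i : ℕ) = m - 1}

noncomputable def lmt (t : TT m k) : (Fin k → ℚ) →ₗ[ℚ] ℚ where
  toFun w := ∑ i, w i * (t.1 i : ℚ)
  map_add' x y := by
    simp [add_mul, Finset.sum_add_distrib]
  map_smul' c x := by
    simp [Finset.mul_sum, mul_assoc]

noncomputable def FS (S : Submodule ℚ (Fin k → ℚ)) : TT m k → (S → ℚ) :=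
  fun t w => ∑ i, (w : Fin k → ℚ) i * (t.1 i : ℚ)

lemma FS_eq_iff {S : Submodule ℚ (Fin k → ℚ)} {u v : TT m k} :
    FS S u = FS S v ↔ ∀ w ∈ S, lmt u w = lmt v w := by
  constructor
  · intro h w hw
    exact congrFun h ⟨w, hw⟩
  · intro h
    funext w
    exact h w.1 w.2

lemma FS_eq_iff_ker {S : Submodule ℚ (Fin k → ℚ)} {u v : TT m k} :
    FS S u = FS S v ↔ S ≤ LinearMap.ker (lmt u - lmt v) := by
  rw [FS_eq_iff]
  constructor
  · intro h w hw
    simp [LinearMap.mem_ker, h w hw]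
  · intro h w hw
    have := h hw
    simp only [LinearMap.mem_ker, LinearMap.sub_apply, sub_eq_zero] at this
    exact this

lemma FS_mono {S1 S2 : Submodule ℚ (Fin k → ℚ)} (h : S1 ≤ S2) {u v : TT m k}
    (he : FS S2 u = FS S2 v) : FS S1 u = FS S1 v := by
  rw [FS_eq_iff_ker] at he ⊢
  exact le_trans h he

lemma FS_sup_iff {S1 S2 : Submodule ℚ (Fin k → ℚ)} {u v : TT m k} :
    FS (S1 ⊔ S2) u = FS (S1 ⊔ S2) v ↔ (FS S1 u = FS S1 v ∧ FS S2 u = FS S2 v) := by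
  rw [FS_eq_iff_ker, FS_eq_iff_ker, FS_eq_iff_ker]
  exact sup_le_iff

-- permutation action
def eT (σ : Equiv.Perm (Fin k)) : TT m k ≃ TT m k where
  toFun t := ⟨t.1 ∘ σ, by
    have := Equiv.sum_comp σ (fun i => (t.1 i : ℕ))
    simpa [Function.comp] using this.trans t.2⟩
  invFun t := ⟨t.1 ∘ σ.symm, by
    have := Equiv.sum_comp σ.symm (fun i => (t.1 i : ℕ))
    simpa [Function.comp] using this.trans t.2⟩
  left_inv t := Subtype.ext (by funext i; simp)
  right_inv t := Subtype.ext (by funext i; simp)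

noncomputable def Pm (σ : Equiv.Perm (Fin k)) : (Fin k → ℚ) ≃ₗ[ℚ] (Fin k → ℚ) :=
  LinearEquiv.funCongrLeft ℚ ℚ σ.symm

lemma Pm_apply (σ : Equiv.Perm (Fin k)) (w : Fin k → ℚ) : Pm σ w = w ∘ σ.symm := rfl

lemma lmt_eT (σ : Equiv.Perm (Fin k)) (u : TT m k) (w : Fin k → ℚ) :
    lmt (eT σ u) w = lmt u (Pm σ w) := by
  show (∑ i, w i * ((u.1 ∘ σ) i : ℚ)) = ∑ i, (w ∘ σ.symm) i * (u.1 i : ℚ)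
  rw [← Equiv.sum_comp σ (fun i => (w ∘ σ.symm) i * (u.1 i : ℚ))]
  refine Finset.sum_congr rfl fun i _ => by simp

lemma FS_map_iff (σ : Equiv.Perm (Fin k)) (S : Submodule ℚ (Fin k → ℚ)) (u v : TT m k) :
    FS (S.map (Pm σ : (Fin k → ℚ) →ₗ[ℚ] (Fin k → ℚ))) u
      = FS (S.map (Pm σ : (Fin k → ℚ) →ₗ[ℚ] (Fin k → ℚ))) v
    ↔ FS S (eT σ u) = FS S (eT σ v) := by
  rw [FS_eq_iff, FS_eq_iff]
  constructor
  · intro h w hw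
    rw [lmt_eT, lmt_eT]
    exact h (Pm σ w) (Submodule.mem_map_of_mem hw)
  · intro h w hw
    rcases Submodule.mem_map.1 hw with ⟨x, hx, rfl⟩
    have := h x hx
    rw [lmt_eT, lmt_eT] at this
    exact this

lemma ent_FS_map [Fintype (TT m k)] (τ : TT m k → ℝ)
    (hsym : ∀ t t' : TT m k, (∃ σ : Equiv.Perm (Fin k), t'.1 = t.1 ∘ σ) → τ t' = τ t)
    (σ : Equiv.Perm (Fin k)) (S : Submodule ℚ (Fin k → ℚ)) :
    ent τ (FS (S.map (Pm σ : (Fin k → ℚ) →ₗ[ℚ] (Fin k → ℚ)))) = ent τ (FS S) := by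
  have h1 : ent τ (FS (S.map (Pm σ : (Fin k → ℚ) →ₗ[ℚ] (Fin k → ℚ)))) = ent τ (FS S ∘ eT σ) :=
    ent_congr τ (fun u v => by rw [FS_map_iff]; exact Iff.rfl)
  rw [h1]
  exact ent_comp_equiv τ (FS S) (eT σ) (fun t => hsym t (eT σ t) ⟨σ, rfl⟩)


lemma Pm_single (σ : Equiv.Perm (Fin k)) (c : Fin k) :
    Pm σ (Pi.single c (1:ℚ)) = Pi.single (σ c) 1 := by
  funext x
  rw [Pm_apply]
  simp only [Function.comp_apply, Pi.single_apply]
  have hiff : σ.symm x = c ↔ x = σ c := Equiv.symm_apply_eq σ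
  simp [hiff]

lemma Pm_one (σ : Equiv.Perm (Fin k)) : Pm σ (fun _ => (1:ℚ)) = (fun _ => (1:ℚ)) := rfl

noncomputable def Esub (k : ℕ) (K : Fin k) : Submodule ℚ (Fin k → ℚ) :=
  (Submodule.span ℚ {(fun _ => (1:ℚ))}) ⊔ (Submodule.span ℚ {Pi.single K 1})

lemma one_mem_Esub (K : Fin k) : (fun _ => (1:ℚ)) ∈ Esub k K :=
  Submodule.mem_sup_left (Submodule.mem_span_singleton_self _)

lemma eK_mem_Esub (K : Fin k) : Pi.single K (1:ℚ) ∈ Esub k K :=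
  Submodule.mem_sup_right (Submodule.mem_span_singleton_self _)


lemma irreducible_aux (hk : 3 ≤ k) (K : Fin k) (hK : (K : ℕ) = k - 1)
    (S : Submodule ℚ (Fin k → ℚ)) (hE : Esub k K ≤ S)
    (hinv : ∀ σ : Equiv.Perm (Fin k), σ K = K →
      S.map (Pm σ : (Fin k → ℚ) →ₗ[ℚ] (Fin k → ℚ)) = S) :
    S = Esub k K ∨ S = ⊤ := by
  by_cases hSE : S = Esub k K
  · exact Or.inl hSE
  right
  obtain ⟨v, hvS, hvE⟩ := SetLike.exists_of_lt (lt_of_le_of_ne hE (Ne.symm hSE))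
  have honeS : (fun _ => (1:ℚ)) ∈ S := hE (one_mem_Esub K)
  have heKS : Pi.single K (1:ℚ) ∈ S := hE (eK_mem_Esub K)
  have hkQ : ((k:ℚ) - 1) ≠ 0 := by
    have : (3:ℚ) ≤ (k:ℚ) := by exact_mod_cast hk
    linarith
  set α : ℚ := (∑ i ∈ Finset.univ.erase K, v i) / ((k:ℚ) - 1) with hα
  set v' : Fin k → ℚ := v - α • ((fun _ => (1:ℚ)) : Fin k → ℚ) - (v K - α) • (Pi.single K (1:ℚ) : Fin k → ℚ) with hv'
  have hv'S : v' ∈ S := by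
    apply Submodule.sub_mem
    · exact Submodule.sub_mem _ hvS (Submodule.smul_mem _ _ honeS)
    · exact Submodule.smul_mem _ _ heKS
  have hv'K : v' K = 0 := by
    simp [hv']
  have hv'i : ∀ i, i ≠ K → v' i = v i - α := by
    intro i hi
    simp [hv', Pi.single_apply, hi]
  have hv'ne : v' ≠ 0 := by
    intro h0
    apply hvE
    have : v = α • ((fun _ => (1:ℚ)) : Fin k → ℚ) + (v K - α) • (Pi.single K (1:ℚ) : Fin k → ℚ) := by
      have := h0
      rw [hv'] at this
      funext a
      have := congrFun this a
      simp only [Pi.sub_apply, Pi.zero_apply, Pi.smul_apply, smul_eq_mul] at this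
      simp only [Pi.add_apply, Pi.smul_apply, smul_eq_mul]
      linarith
    rw [this]
    exact Submodule.add_mem _ (Submodule.smul_mem _ _ (one_mem_Esub K))
      (Submodule.smul_mem _ _ (eK_mem_Esub K))
  have hcard : (Finset.univ.erase K).card = k - 1 := by
    rw [Finset.card_erase_of_mem (Finset.mem_univ K), Finset.card_univ, Fintype.card_fin]
  have hsum0 : ∑ i ∈ Finset.univ.erase K, v' i = 0 := by
    have : ∀ i ∈ Finset.univ.erase K, v' i = v i - α := by
      intro i hi
      exact hv'i i (Finset.ne_of_mem_erase hi)
    rw [Finset.sum_congr rfl this, Finset.sum_sub_distrib, Finset.sum_const, hcard]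
    rw [nsmul_eq_mul]
    have : ((k - 1 : ℕ) : ℚ) = (k:ℚ) - 1 := by
      have : 1 ≤ k := by omega
      push_cast [this]
      ring
    rw [this, hα]
    field_simp
    ring
  -- find i with v' i ≠ 0, i ≠ K
  obtain ⟨i, hi⟩ : ∃ i, v' i ≠ 0 := Function.ne_iff.1 hv'ne
  have hiK : i ≠ K := by
    intro h
    rw [h, hv'K] at hi
    exact hi rfl
  -- find j ≠ i, j ≠ K with v' j ≠ v' i
  obtain ⟨j, hji, hjK, hjv⟩ : ∃ j, j ≠ i ∧ j ≠ K ∧ v' j ≠ v' i := by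
    by_contra hno
    push_neg at hno
    have hall : ∀ j ∈ Finset.univ.erase K, v' j = v' i := by
      intro j hj
      rcases eq_or_ne j i with h | h
      · rw [h]
      · exact hno j h (Finset.ne_of_mem_erase hj)
    have : ∑ j ∈ Finset.univ.erase K, v' j = (k-1 : ℕ) • v' i := by
      rw [Finset.sum_congr rfl hall, Finset.sum_const, hcard]
    rw [hsum0] at this
    have hki : ((k - 1 : ℕ):ℚ) ≠ 0 := by
      have : 1 ≤ k := by omega
      push_cast [this]
      exact hkQ
    rw [nsmul_eq_mul] at this
    exact hi (by
      have := this.symm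
      rcases mul_eq_zero.1 this with h | h
      · exact absurd h hki
      · exact h)
  -- base pair in S
  have hbase : (Pi.single i (1:ℚ) - Pi.single j 1) ∈ S := by
    set σ := Equiv.swap i j with hσ
    have hσK : σ K = K := Equiv.swap_apply_of_ne_of_ne (Ne.symm hiK) (Ne.symm hjK)
    have hPmv' : Pm σ v' ∈ S := by
      rw [← hinv σ hσK]
      exact Submodule.mem_map_of_mem hv'S
    have hd : v' - Pm σ v' = (v' i - v' j) • (Pi.single i (1:ℚ) - Pi.single j 1) := by
      funext a
      rw [Pm_apply]
      simp only [Pi.sub_apply, Function.comp_apply, Pi.smul_apply, smul_eq_mul,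
        Pi.single_apply]
      have hsymm : σ.symm = σ := by rw [hσ, Equiv.symm_swap]
      rw [hsymm]
      rcases eq_or_ne a i with h | hai
      · subst h
        rw [hσ]
        simp [Equiv.swap_apply_left, hji.symm]
      · rcases eq_or_ne a j with h | haj
        · subst h
          rw [hσ]
          simp [Equiv.swap_apply_right, hji, if_neg hai]
        · rw [hσ, Equiv.swap_apply_of_ne_of_ne hai haj]
          simp [if_neg hai, if_neg haj]
    have hdS : (v' i - v' j) • (Pi.single i (1:ℚ) - Pi.single j 1) ∈ S := by
      rw [← hd]
      exact Submodule.sub_mem _ hv'S hPmv'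
    have hne : v' i - v' j ≠ 0 := sub_ne_zero.2 (Ne.symm hjv)
    have := Submodule.smul_mem S (v' i - v' j)⁻¹ hdS
    rwa [smul_smul, inv_mul_cancel₀ hne, one_smul] at this
  -- step lemma
  have hstep : ∀ σ : Equiv.Perm (Fin k), σ K = K → ∀ a b : Fin k,
      (Pi.single a (1:ℚ) - Pi.single b 1) ∈ S →
      (Pi.single (σ a) (1:ℚ) - Pi.single (σ b) 1) ∈ S := by
    intro σ hσK a b hab
    have : Pm σ (Pi.single a (1:ℚ) - Pi.single b 1) ∈ S := by
      rw [← hinv σ hσK]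
      exact Submodule.mem_map_of_mem hab
    rwa [map_sub, Pm_single, Pm_single] at this
  -- general pairs
  have hgen : ∀ a b : Fin k, a ≠ b → a ≠ K → b ≠ K →
      (Pi.single a (1:ℚ) - Pi.single b 1) ∈ S := by
    intro a b hab haK hbK
    set σ1 := Equiv.swap i a with hσ1
    have hσ1K : σ1 K = K := Equiv.swap_apply_of_ne_of_ne (Ne.symm hiK) (Ne.symm haK)
    have h1 : (Pi.single a (1:ℚ) - Pi.single (σ1 j) 1) ∈ S := by
      have := hstep σ1 hσ1K i j hbase
      rwa [hσ1, Equiv.swap_apply_left] at this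
    set j' := σ1 j with hj'
    have hj'K : j' ≠ K := by
      intro h
      have hs : σ1.symm K = K := (Equiv.symm_apply_eq σ1).2 hσ1K.symm
      have h2 := congrArg σ1.symm h
      rw [Equiv.symm_apply_apply, hs] at h2
      exact hjK h2
    have hj'a : j' ≠ a := by
      intro h
      have hia : σ1 i = a := by rw [hσ1]; exact Equiv.swap_apply_left i a
      exact hji (σ1.injective (h.trans hia.symm))
    rcases eq_or_ne b j' with hbj | hbj
    · rwa [hbj]
    · set σ2 := Equiv.swap j' b with hσ2
      have hσ2K : σ2 K = K := Equiv.swap_apply_of_ne_of_ne (Ne.symm hj'K) (Ne.symm hbK)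
      have := hstep σ2 hσ2K a j' h1
      rw [hσ2] at this
      rw [Equiv.swap_apply_of_ne_of_ne hj'a.symm hab, Equiv.swap_apply_left] at this
      exact this
  -- all singles in S
  have hsingle : ∀ c : Fin k, Pi.single c (1:ℚ) ∈ S := by
    intro c
    rcases eq_or_ne c K with h | hcK
    · rw [h]; exact heKS
    set E2 := (Finset.univ.erase K).erase c with hE2
    have hcmem : c ∈ Finset.univ.erase K := Finset.mem_erase.2 ⟨hcK, Finset.mem_univ c⟩
    have hcard2 : E2.card = k - 2 := by
      rw [hE2, Finset.card_erase_of_mem hcmem, hcard]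
      omega
    have hsum_mem : ∑ b ∈ E2, (Pi.single c (1:ℚ) - Pi.single b 1) ∈ S := by
      apply Submodule.sum_mem
      intro b hb
      rw [hE2, Finset.mem_erase] at hb
      exact hgen c b (Ne.symm hb.1) hcK (Finset.ne_of_mem_erase hb.2)
    have h1 : ∑ b ∈ E2, (Pi.single b (1:ℚ)) =
        (fun _ => (1:ℚ)) - Pi.single K 1 - Pi.single c 1 := by
      have h2 : ∑ b : Fin k, Pi.single b (1:ℚ) = (fun _ => (1:ℚ)) := by
        funext a
        rw [Finset.sum_apply]
        simp [Pi.single_apply]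
      rw [← Finset.sum_erase_add Finset.univ _ (Finset.mem_univ K)] at h2
      rw [← Finset.sum_erase_add (Finset.univ.erase K) _ hcmem] at h2
      rw [← hE2] at h2
      funext a
      have := congrFun h2 a
      simp only [Pi.add_apply, Pi.sub_apply] at this ⊢
      linarith
    have hval : ∑ b ∈ E2, (Pi.single c (1:ℚ) - Pi.single b 1)
        = ((k:ℚ) - 1) • (Pi.single c (1:ℚ) : Fin k → ℚ) - (fun _ => (1:ℚ)) + Pi.single K 1 := by
      rw [Finset.sum_sub_distrib, h1, Finset.sum_const, hcard2]
      have hc2 : ((k - 2 : ℕ) : ℚ) = (k:ℚ) - 2 := by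
        have : 2 ≤ k := by omega
        push_cast [this]
        ring
      rw [← Nat.cast_smul_eq_nsmul ℚ, hc2]
      funext a
      simp only [Pi.add_apply, Pi.sub_apply, Pi.smul_apply, smul_eq_mul]
      ring
    have hmem : ((k:ℚ) - 1) • (Pi.single c (1:ℚ) : Fin k → ℚ) ∈ S := by
      have : ((k:ℚ) - 1) • (Pi.single c (1:ℚ) : Fin k → ℚ)
          = (∑ b ∈ E2, (Pi.single c (1:ℚ) - Pi.single b 1)) + (fun _ => (1:ℚ)) - Pi.single K 1 := by
        rw [hval]; abel
      rw [this]
      exact Submodule.sub_mem _ (Submodule.add_mem _ hsum_mem honeS) heKS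
    have := Submodule.smul_mem S ((k:ℚ) - 1)⁻¹ hmem
    rwa [smul_smul, inv_mul_cancel₀ hkQ, one_smul] at this
  -- conclude
  rw [eq_top_iff]
  intro x _
  have hx : x = ∑ c, x c • (Pi.single c (1:ℚ) : Fin k → ℚ) := by
    funext a
    rw [Finset.sum_apply]
    simp [Pi.single_apply, mul_comm]
  rw [hx]
  exact Submodule.sum_mem _ fun c _ => Submodule.smul_mem _ _ (hsingle c)


lemma oneVec_ne_zero (hk : 0 < k) : ((fun _ => (1:ℚ)) : Fin k → ℚ) ≠ 0 := by
  intro h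
  have := congrFun h ⟨0, hk⟩
  simp at this

lemma single_ne_zero' (K : Fin k) : (Pi.single K (1:ℚ) : Fin k → ℚ) ≠ 0 := by
  intro h
  have := congrFun h K
  simp at this

lemma finrank_Esub (hk : 3 ≤ k) (K : Fin k) (hK : (K : ℕ) = k - 1) :
    Module.finrank ℚ (Esub k K) = 2 := by
  have h1 : Module.finrank ℚ (Submodule.span ℚ {((fun _ => (1:ℚ)) : Fin k → ℚ)}) = 1 :=
    finrank_span_singleton (oneVec_ne_zero (by omega))
  have h2 : Module.finrank ℚ (Submodule.span ℚ {(Pi.single K (1:ℚ) : Fin k → ℚ)}) = 1 :=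
    finrank_span_singleton (single_ne_zero' K)
  have hinf : (Submodule.span ℚ {((fun _ => (1:ℚ)) : Fin k → ℚ)}) ⊓
      (Submodule.span ℚ {(Pi.single K (1:ℚ) : Fin k → ℚ)}) = ⊥ := by
    rw [eq_bot_iff]
    intro x hx
    obtain ⟨hx1, hx2⟩ := Submodule.mem_inf.1 hx
    rw [Submodule.mem_span_singleton] at hx1 hx2
    obtain ⟨a, ha⟩ := hx1
    obtain ⟨b, hb⟩ := hx2
    have hj : (⟨0, by omega⟩ : Fin k) ≠ K := by
      intro h
      have := congrArg Fin.val h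
      simp [hK] at this
      omega
    have hxj : x ⟨0, by omega⟩ = a := by
      rw [← ha]; simp
    have hxj2 : x ⟨0, by omega⟩ = 0 := by
      rw [← hb]
      simp [Pi.single_apply, hj]
    have hxa : a = 0 := by rw [← hxj, hxj2]
    rw [Submodule.mem_bot, ← ha, hxa, zero_smul]
  have := Submodule.finrank_sup_add_finrank_inf_eq
    (Submodule.span ℚ {((fun _ => (1:ℚ)) : Fin k → ℚ)})
    (Submodule.span ℚ {(Pi.single K (1:ℚ) : Fin k → ℚ)})
  rw [h1, h2, hinf] at this
  simp only [finrank_bot] at this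
  rw [Esub]
  omega

lemma finrank_W_sup_Esub (hk : 3 ≤ k) (K : Fin k) (hK : (K : ℕ) = k - 1)
    (W : Submodule ℚ (Fin k → ℚ)) (hW : ∀ w ∈ W, ∑ i, w i = 0)
    (hv0 : (fun i : Fin k => if (i : ℕ) = k - 1 then -((k : ℚ) - 1) else 1) ∈ W) :
    W ⊔ Esub k K = W ⊔ Submodule.span ℚ {((fun _ => (1:ℚ)) : Fin k → ℚ)} ∧
    Module.finrank ℚ ↥(W ⊔ Esub k K) = Module.finrank ℚ W + 1 := by
  set v0 : Fin k → ℚ := (fun i : Fin k => if (i : ℕ) = k - 1 then -((k : ℚ) - 1) else 1) with hv0def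
  have hkQ : (k:ℚ) ≠ 0 := by
    have : 3 ≤ (k:ℚ) := by exact_mod_cast hk
    linarith
  have heK : (Pi.single K (1:ℚ) : Fin k → ℚ)
      = (k:ℚ)⁻¹ • (((fun _ => (1:ℚ)) : Fin k → ℚ) - v0) := by
    funext a
    simp only [Pi.smul_apply, Pi.sub_apply, smul_eq_mul, Pi.single_apply, hv0def]
    rcases eq_or_ne a K with h | h
    · subst h
      rw [if_pos rfl, if_pos hK]
      field_simp
      ring
    · have haK : (a : ℕ) ≠ k - 1 := by
        intro hh
        apply h
        apply Fin.ext
        rw [hh, hK]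
      rw [if_neg h, if_neg haK]
      ring
  have hsupeq : W ⊔ Esub k K = W ⊔ Submodule.span ℚ {((fun _ => (1:ℚ)) : Fin k → ℚ)} := by
    apply le_antisymm
    · apply sup_le le_sup_left
      rw [Esub]
      apply sup_le
      · exact le_sup_right
      · rw [Submodule.span_le]
        intro x hx
        rw [Set.mem_singleton_iff] at hx
        subst hx
        rw [heK]
        apply Submodule.smul_mem
        apply Submodule.sub_mem
        · exact Submodule.mem_sup_right (Submodule.mem_span_singleton_self _)
        · exact Submodule.mem_sup_left hv0
    · apply sup_le le_sup_left
      refine le_trans ?_ le_sup_right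
      rw [Esub]
      exact le_sup_left
  constructor
  · exact hsupeq
  have hinf : W ⊓ Submodule.span ℚ {((fun _ => (1:ℚ)) : Fin k → ℚ)} = ⊥ := by
    rw [eq_bot_iff]
    intro x hx
    obtain ⟨hx1, hx2⟩ := Submodule.mem_inf.1 hx
    rw [Submodule.mem_span_singleton] at hx2
    obtain ⟨a, ha⟩ := hx2
    have hsum := hW x hx1
    rw [← ha] at hsum
    simp only [Pi.smul_apply, smul_eq_mul, mul_one] at hsum
    rw [Finset.sum_const, Finset.card_univ, Fintype.card_fin, nsmul_eq_mul] at hsum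
    have ha0 : a = 0 := by
      rcases mul_eq_zero.1 hsum with h | h
      · exact absurd h hkQ
      · exact h
    rw [Submodule.mem_bot, ← ha, ha0, zero_smul]
  have hmod := Submodule.finrank_sup_add_finrank_inf_eq W
    (Submodule.span ℚ {((fun _ => (1:ℚ)) : Fin k → ℚ)})
  rw [hinf, finrank_span_singleton (oneVec_ne_zero (by omega : 0 < k))] at hmod
  simp only [finrank_bot] at hmod
  rw [hsupeq]
  omega



lemma lmt_one (t : TT m k) : lmt t ((fun _ => (1:ℚ)) : Fin k → ℚ) = ((m - 1 : ℕ) : ℚ) := by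
  show (∑ i, (1:ℚ) * (t.1 i : ℚ)) = ((m - 1 : ℕ) : ℚ)
  have : ∑ i, ((t.1 i : ℕ) : ℚ) = ((m - 1 : ℕ):ℚ) := by
    rw [← Nat.cast_sum]
    exact_mod_cast congrArg (fun n : ℕ => (n : ℚ)) t.2
  simpa using this

lemma lmt_single (t : TT m k) (c : Fin k) :
    lmt t (Pi.single c (1:ℚ) : Fin k → ℚ) = (t.1 c : ℚ) := by
  show (∑ i, (Pi.single c (1:ℚ) : Fin k → ℚ) i * (t.1 i : ℚ)) = (t.1 c : ℚ)
  rw [Finset.sum_eq_single c]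
  · simp
  · intro b _ hb
    simp [Pi.single_apply, hb]
  · intro h
    exact absurd (Finset.mem_univ c) h

lemma FS_E_iff (K : Fin k) {u v : TT m k} :
    FS (Esub k K) u = FS (Esub k K) v ↔ u.1 K = v.1 K := by
  constructor
  · intro h
    have := FS_eq_iff.1 h (Pi.single K 1) (Submodule.mem_sup_right (Submodule.mem_span_singleton_self _))
    rw [lmt_single, lmt_single] at this
    have hn : ((u.1 K : ℕ) : ℚ) = ((v.1 K : ℕ) : ℚ) := by exact_mod_cast this
    exact Fin.ext (Nat.cast_injective hn)
  · intro h
    rw [FS_eq_iff_ker]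
    apply sup_le
    · rw [Submodule.span_le]
      intro x hx
      rw [Set.mem_singleton_iff] at hx
      subst hx
      simp only [SetLike.mem_coe, LinearMap.mem_ker, LinearMap.sub_apply, sub_eq_zero]
      rw [lmt_one, lmt_one]
    · rw [Submodule.span_le]
      intro x hx
      rw [Set.mem_singleton_iff] at hx
      subst hx
      simp only [SetLike.mem_coe, LinearMap.mem_ker, LinearMap.sub_apply, sub_eq_zero]
      rw [lmt_single, lmt_single, h]

lemma FS_top_iff {u v : TT m k} :
    FS (⊤ : Submodule ℚ (Fin k → ℚ)) u = FS (⊤ : Submodule ℚ (Fin k → ℚ)) v ↔ u = v := by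
  constructor
  · intro h
    apply Subtype.ext
    funext i
    have := FS_eq_iff.1 h (Pi.single i 1) Submodule.mem_top
    rw [lmt_single, lmt_single] at this
    have hn : ((u.1 i : ℕ) : ℚ) = ((v.1 i : ℕ) : ℚ) := by exact_mod_cast this
    exact Fin.ext (Nat.cast_injective hn)
  · intro h
    rw [h]

lemma ent_id {T : Type*} [Fintype T] (τ : T → ℝ) :
    ent τ (fun t => t) = ∑ t, -(τ t * Real.log (τ t)) := by
  unfold ent
  refine Finset.sum_congr rfl fun t _ => ?_
  have : pfib τ (fun t => t) t = τ t := by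
    unfold pfib
    rw [Finset.sum_filter]
    exact (Finset.sum_ite_eq' Finset.univ t τ).trans (if_pos (Finset.mem_univ t))
  rw [this]

lemma ent_FS_top [Fintype (TT m k)] (τ : TT m k → ℝ) :
    ent τ (FS (⊤ : Submodule ℚ (Fin k → ℚ))) = ∑ t, -(τ t * Real.log (τ t)) := by
  rw [ent_congr τ (fun u v => FS_top_iff), ent_id]

lemma ent_FS_E [Fintype (TT m k)] (τ : TT m k → ℝ) (K : Fin k) (ν : Fin m → ℝ)
    (hν : ∀ (a : Fin m),
      ν a = ∑ t ∈ Finset.univ.filter (fun t : TT m k => t.1 K = a), τ t) :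
    ent τ (FS (Esub k K)) = ∑ a, -(ν a * Real.log (ν a)) := by
  rw [ent_congr τ (fun u v => FS_E_iff K)]
  have hpf : ∀ t : TT m k, pfib τ (fun t => t.1 K) t = ν (t.1 K) := by
    intro t
    rw [hν (t.1 K)]
    unfold pfib
    congr!
  unfold ent
  rw [Finset.sum_congr rfl (fun t (_ : t ∈ Finset.univ) => by rw [hpf t])]
  rw [← Finset.sum_fiberwise Finset.univ (fun t : TT m k => t.1 K)
    (fun t => -(τ t * Real.log (ν (t.1 K))))]
  refine Finset.sum_congr rfl fun a _ => ?_
  have : ∀ t ∈ Finset.univ.filter (fun t : TT m k => t.1 K = a),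
      -(τ t * Real.log (ν (t.1 K))) = τ t * (-Real.log (ν a)) := by
    intro t ht
    rw [Finset.mem_filter] at ht
    rw [ht.2]
    ring
  rw [Finset.sum_congr rfl this, ← Finset.sum_mul, ← hν a]
  ring

set_option maxHeartbeats 1000000 in

lemma h_submod [Fintype (TT m k)] (τ : TT m k → ℝ) (hpos : ∀ t, 0 ≤ τ t)
    (hsum : ∑ t, τ t = 1) (S1 S2 : Submodule ℚ (Fin k → ℚ)) :
    ent τ (FS (S1 ⊔ S2)) + ent τ (FS (S1 ⊓ S2)) ≤ ent τ (FS S1) + ent τ (FS S2) := by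
  have h1 : ent τ (FS (S1 ⊔ S2) : TT m k → _)
      = ent τ (fun t => (FS S1 t, FS S2 t)) := by
    apply ent_congr
    intro u v
    rw [FS_sup_iff]
    constructor
    · rintro ⟨h1, h2⟩; rw [Prod.ext_iff]; exact ⟨h1, h2⟩
    · intro h; rw [Prod.ext_iff] at h; exact h
  rw [h1]
  exact ent_submod τ hpos hsum (FS S1) (FS S2) (FS (S1 ⊓ S2))
    (fun u v h => FS_mono inf_le_left h) (fun u v h => FS_mono inf_le_right h)

lemma Esub_map {K : Fin k} (σ : Equiv.Perm (Fin k)) (hσK : σ K = K) :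
    (Esub k K).map (Pm σ : (Fin k → ℚ) →ₗ[ℚ] (Fin k → ℚ)) = Esub k K := by
  rw [Esub, Submodule.map_sup, Submodule.map_span, Submodule.map_span,
    Set.image_singleton, Set.image_singleton]
  show Submodule.span ℚ {Pm σ fun _ => (1:ℚ)} ⊔ Submodule.span ℚ {Pm σ (Pi.single K 1)} = _
  rw [Pm_one, Pm_single, hσK]

theorem main_min [Fintype (TT m k)] (hk : 3 ≤ k) (K : Fin k) (hK : (K : ℕ) = k - 1)
    (τ : TT m k → ℝ) (hpos : ∀ t, 0 ≤ τ t) (hsum : ∑ t, τ t = 1)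
    (hsym : ∀ t t' : TT m k, (∃ σ : Equiv.Perm (Fin k), t'.1 = t.1 ∘ σ) → τ t' = τ t)
    (S : Submodule ℚ (Fin k → ℚ)) (hES : Esub k K ≤ S) :
    ent τ (FS (Esub k K)) + (((Module.finrank ℚ S : ℝ) - 2) / ((k : ℝ) - 2)) *
      (ent τ (FS (⊤ : Submodule ℚ (Fin k → ℚ))) - ent τ (FS (Esub k K)))
      ≤ ent τ (FS S) := by
  set c0 := ent τ (FS (Esub k K)) with hc0
  set Δ := ent τ (FS (⊤ : Submodule ℚ (Fin k → ℚ))) - c0 with hΔ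
  set D : Submodule ℚ (Fin k → ℚ) → ℝ := fun X =>
    ent τ (FS X) - c0 - (((Module.finrank ℚ X : ℝ) - 2) / ((k : ℝ) - 2)) * Δ with hD
  suffices h : 0 ≤ D S by
    rw [hD] at h
    simp only at h
    linarith
  have hd2 : ((k:ℝ) - 2) ≠ 0 := by
    have : (3:ℝ) ≤ (k:ℝ) := by exact_mod_cast hk
    linarith
  have hrtop : Module.finrank ℚ (⊤ : Submodule ℚ (Fin k → ℚ)) = k := by
    rw [finrank_top]
    exact Module.finrank_fin_fun ℚ
  have hrE : Module.finrank ℚ (Esub k K) = 2 := finrank_Esub hk K hK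
  have hDE : D (Esub k K) = 0 := by
    rw [hD]
    simp only [hrE]
    norm_num
    simp [hc0]
  have hDtop : D (⊤ : Submodule ℚ (Fin k → ℚ)) = 0 := by
    rw [hD]
    simp only [hrtop]
    rw [div_self hd2]
    simp [hΔ]
  -- uniform lower bound
  have hbound : ∀ X : Submodule ℚ (Fin k → ℚ), Esub k K ≤ X → -(|c0| + |Δ|) ≤ D X := by
    intro X hX
    have h0 : 0 ≤ ent τ (FS X) := ent_nonneg τ hpos hsum _
    have hr2 : 2 ≤ Module.finrank ℚ X := by
      rw [← hrE]
      exact Submodule.finrank_mono hX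
    have hrk : Module.finrank ℚ X ≤ k := by
      have := Submodule.finrank_le X
      rwa [Module.finrank_fin_fun ℚ] at this
    have hcoef : 0 ≤ ((Module.finrank ℚ X : ℝ) - 2) / ((k : ℝ) - 2) ∧
        ((Module.finrank ℚ X : ℝ) - 2) / ((k : ℝ) - 2) ≤ 1 := by
      have h2 : (2:ℝ) ≤ (Module.finrank ℚ X : ℝ) := by exact_mod_cast hr2
      have h3 : (Module.finrank ℚ X : ℝ) ≤ (k:ℝ) := by exact_mod_cast hrk
      have hgt : (0:ℝ) < (k:ℝ) - 2 := by
        have : (3:ℝ) ≤ (k:ℝ) := by exact_mod_cast hk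
        linarith
      constructor
      · apply div_nonneg <;> linarith
      · rw [div_le_one hgt]; linarith
    have habs : (((Module.finrank ℚ X : ℝ) - 2) / ((k : ℝ) - 2)) * Δ ≤ |Δ| := by
      calc (((Module.finrank ℚ X : ℝ) - 2) / ((k : ℝ) - 2)) * Δ
          ≤ |(((Module.finrank ℚ X : ℝ) - 2) / ((k : ℝ) - 2)) * Δ| := le_abs_self _
        _ = (((Module.finrank ℚ X : ℝ) - 2) / ((k : ℝ) - 2)) * |Δ| := by
            rw [abs_mul, abs_of_nonneg hcoef.1]
        _ ≤ 1 * |Δ| := by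
            apply mul_le_mul_of_nonneg_right hcoef.2 (abs_nonneg Δ)
        _ = |Δ| := one_mul _
    rw [hD]
    simp only
    have : c0 ≤ |c0| := le_abs_self c0
    linarith
  set Dset : ℕ → Set ℝ := fun n => {x | ∃ X : Submodule ℚ (Fin k → ℚ),
    Esub k K ≤ X ∧ Module.finrank ℚ X = n ∧ D X = x} with hDset
  have hbdd : ∀ n, BddBelow (Dset n) := by
    intro n
    refine ⟨-(|c0| + |Δ|), ?_⟩
    rintro x ⟨X, hX, _, rfl⟩
    exact hbound X hX
  set mfun : ℕ → ℝ := fun n => sInf (Dset n) with hmfun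
  have hIccne : (Finset.Icc 2 k).Nonempty := Finset.nonempty_Icc.2 (by omega)
  set μ := (Finset.Icc 2 k).inf' hIccne mfun with hμdef
  have hmge : ∀ X : Submodule ℚ (Fin k → ℚ), Esub k K ≤ X → μ ≤ D X := by
    intro X hX
    have hr2 : 2 ≤ Module.finrank ℚ X := by
      rw [← hrE]; exact Submodule.finrank_mono hX
    have hrk : Module.finrank ℚ X ≤ k := by
      have := Submodule.finrank_le X
      rwa [Module.finrank_fin_fun ℚ] at this
    have hmem : Module.finrank ℚ X ∈ Finset.Icc 2 k := Finset.mem_Icc.2 ⟨hr2, hrk⟩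
    calc μ ≤ mfun (Module.finrank ℚ X) := Finset.inf'_le mfun hmem
      _ ≤ D X := csInf_le (hbdd _) ⟨X, hX, rfl, rfl⟩
  suffices hμ0 : 0 ≤ μ by
    calc (0:ℝ) ≤ μ := hμ0
      _ ≤ D S := hmge S hES
  by_contra hμneg
  push_neg at hμneg
  -- mfun 2 and mfun k are 0
  have hm2 : mfun 2 = 0 := by
    have hset : Dset 2 = {0} := by
      apply Set.eq_singleton_iff_unique_mem.2
      constructor
      · exact ⟨Esub k K, le_refl _, hrE, hDE⟩
      · rintro x ⟨X, hX, hrX, rfl⟩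
        have : Esub k K = X := Submodule.eq_of_le_of_finrank_le hX (by rw [hrX, hrE])
        rw [← this, hDE]
    rw [hmfun]
    simp only [hset]
    exact csInf_singleton 0
  have hmk : mfun k = 0 := by
    have hset : Dset k = {0} := by
      apply Set.eq_singleton_iff_unique_mem.2
      constructor
      · exact ⟨⊤, le_top, hrtop, hDtop⟩
      · rintro x ⟨X, hX, hrX, rfl⟩
        have : X = ⊤ := Submodule.eq_top_of_finrank_eq (by rw [hrX, Module.finrank_fin_fun ℚ])
        rw [this, hDtop]
    rw [hmfun]
    simp only [hset]
    exact csInf_singleton 0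
  -- largest n attaining μ
  obtain ⟨n0, hn0mem, hn0val⟩ := Finset.exists_mem_eq_inf' hIccne mfun
  set A := (Finset.Icc 2 k).filter (fun n => mfun n = μ) with hA
  have hAne : A.Nonempty := ⟨n0, Finset.mem_filter.2 ⟨hn0mem, hn0val.symm⟩⟩
  set N := A.max' hAne with hN
  have hNA : N ∈ A := Finset.max'_mem A hAne
  rw [hA, Finset.mem_filter, Finset.mem_Icc] at hNA
  have hmN : mfun N = μ := hNA.2
  have hN2 : N ≠ 2 := by
    intro h
    rw [h, hm2] at hmN
    linarith
  have hNk : N ≠ k := by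
    intro h
    rw [h, hmk] at hmN
    linarith
  have hN3 : 3 ≤ N := by omega
  have hNk1 : N + 1 ≤ k := by omega
  have hgt : ∀ n, N < n → n ≤ k → μ < mfun n := by
    intro n hn hnk
    have hmem : n ∈ Finset.Icc 2 k := Finset.mem_Icc.2 ⟨by omega, hnk⟩
    have hge : μ ≤ mfun n := Finset.inf'_le mfun hmem
    rcases eq_or_lt_of_le hge with h | h
    · exfalso
      have : n ∈ A := Finset.mem_filter.2 ⟨hmem, h.symm⟩
      have := Finset.le_max' A n this
      omega
    · exact h
  have hIcc2ne : (Finset.Icc (N+1) k).Nonempty := Finset.nonempty_Icc.2 hNk1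
  set ε := (Finset.Icc (N+1) k).inf' hIcc2ne (fun n => mfun n - μ) with hε
  have hεpos : 0 < ε := by
    rw [hε, Finset.lt_inf'_iff]
    intro n hn
    rw [Finset.mem_Icc] at hn
    have := hgt n (by omega) hn.2
    linarith
  -- step inequality
  have hstep : ∀ X : Submodule ℚ (Fin k → ℚ), Esub k K ≤ X → Module.finrank ℚ X = N →
      μ + ε/2 ≤ D X := by
    intro X hEX hrX
    have hnotinv : ¬(∀ σ : Equiv.Perm (Fin k), σ K = K →
        X.map (Pm σ : (Fin k → ℚ) →ₗ[ℚ] (Fin k → ℚ)) = X) := by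
      intro hinv
      rcases irreducible_aux hk K hK X hEX hinv with h | h
      · rw [h, hrE] at hrX; omega
      · rw [h, hrtop] at hrX; omega
    push_neg at hnotinv
    obtain ⟨σ, hσK, hmapne⟩ := hnotinv
    set X' := X.map (Pm σ : (Fin k → ℚ) →ₗ[ℚ] (Fin k → ℚ)) with hX'
    have hEX' : Esub k K ≤ X' := by
      rw [hX', ← Esub_map σ hσK]
      exact Submodule.map_mono hEX
    have hrX' : Module.finrank ℚ X' = N := by
      rw [hX', LinearEquiv.finrank_map_eq (Pm σ) X, hrX]
    have hentX' : ent τ (FS X' : TT m k → _) = ent τ (FS X) := ent_FS_map τ hsym σ X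
    have hDX' : D X' = D X := by
      rw [hD]
      simp only
      rw [hentX', hrX', hrX]
    have hsub := h_submod τ hpos hsum X X'
    have hdim := Submodule.finrank_sup_add_finrank_inf_eq X X'
    rw [hrX, hrX'] at hdim
    have hlt : N < Module.finrank ℚ ↥(X ⊔ X') := by
      have hne : X ⊔ X' ≠ X := by
        intro h
        apply hmapne
        apply Submodule.eq_of_le_of_finrank_le (le_sup_right.trans_eq h)
        rw [hrX, hrX']
      have : X < X ⊔ X' := lt_of_le_of_ne le_sup_left (Ne.symm hne)
      have := Submodule.finrank_lt_finrank_of_lt this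
      omega
    set n1 := Module.finrank ℚ ↥(X ⊔ X') with hn1
    set n2 := Module.finrank ℚ ↥(X ⊓ X') with hn2
    have hn1k : n1 ≤ k := by
      have := Submodule.finrank_le (X ⊔ X')
      rwa [Module.finrank_fin_fun ℚ] at this
    have hn22 : 2 ≤ n2 := by
      rw [← hrE]
      exact Submodule.finrank_mono (le_inf hEX hEX')
    have hn2k : n2 ≤ k := by
      have := Submodule.finrank_le (X ⊓ X')
      rwa [Module.finrank_fin_fun ℚ] at this
    -- bounds from mfun
    have hb1 : μ + ε ≤ D (X ⊔ X') := by
      have hεle : ε ≤ mfun n1 - μ := Finset.inf'_le _ (Finset.mem_Icc.2 ⟨by omega, hn1k⟩)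
      have : mfun n1 ≤ D (X ⊔ X') := csInf_le (hbdd _) ⟨X ⊔ X', hEX.trans le_sup_left, rfl, rfl⟩
      linarith
    have hb2 : μ ≤ D (X ⊓ X') := hmge _ (le_inf hEX hEX')
    -- combine with submodularity
    have hcoefs : (((n1:ℝ) - 2) / ((k:ℝ) - 2)) * Δ + (((n2:ℝ) - 2) / ((k:ℝ) - 2)) * Δ
        = 2 * ((((N:ℝ) - 2) / ((k:ℝ) - 2)) * Δ) := by
      have hcast : (n1:ℝ) + (n2:ℝ) = (N:ℝ) + (N:ℝ) := by exact_mod_cast hdim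
      have hab : ((n1:ℝ) - 2) + ((n2:ℝ) - 2) = 2 * ((N:ℝ) - 2) := by linarith
      calc (((n1:ℝ) - 2) / ((k:ℝ) - 2)) * Δ + (((n2:ℝ) - 2) / ((k:ℝ) - 2)) * Δ
          = ((((n1:ℝ) - 2) + ((n2:ℝ) - 2)) / ((k:ℝ) - 2)) * Δ := by ring
        _ = ((2 * ((N:ℝ) - 2)) / ((k:ℝ) - 2)) * Δ := by rw [hab]
        _ = 2 * ((((N:ℝ) - 2) / ((k:ℝ) - 2)) * Δ) := by ring
    have hDsum : D (X ⊔ X') + D (X ⊓ X') ≤ 2 * D X := by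
      rw [hD]
      simp only
      rw [hD] at hDX'
      simp only at hDX'
      have h2 : ent τ (FS (X ⊔ X') : TT m k → _) + ent τ (FS (X ⊓ X') : TT m k → _)
          ≤ ent τ (FS X : TT m k → _) + ent τ (FS X' : TT m k → _) := hsub
      rw [hentX'] at h2
      rw [hrX]
      linarith [hcoefs]
    have hfinal : μ + ε + μ ≤ 2 * D X := le_trans (by linarith) hDsum
    clear_value D μ ε
    linarith
  -- contradiction
  rcases Set.eq_empty_or_nonempty (Dset N) with hem | hne
  · have : mfun N = 0 := by
      rw [hmfun]
      simp only [hem]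
      exact Real.sInf_empty
    rw [this] at hmN
    linarith
  · have : μ + ε/2 ≤ mfun N := by
      apply le_csInf hne
      rintro x ⟨X, hX, hrX, rfl⟩
      exact hstep X hX hrX
    rw [hmN] at this
    linarith

end Geom

/- ## Final theorem -/
set_option maxHeartbeats 1000000 in
open scoped Classical in
theorem stmt8 (m k : ℕ) (hm : 2 ≤ m) (hk : 3 ≤ k)
    (τ : {a : Fin k → Fin m // ∑ i, (a i : ℕ) = m - 1} → ℝ)
    (hpos : ∀ t, 0 ≤ τ t) (hsum : ∑ t, τ t = 1)
    (hsym : ∀ t t' : {a : Fin k → Fin m // ∑ i, (a i : ℕ) = m - 1},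
      (∃ σ : Equiv.Perm (Fin k), t'.1 = t.1 ∘ σ) → τ t' = τ t)
    (ν : Fin m → ℝ)
    (hν : ∀ (i : Fin k) (a : Fin m),
      ν a = ∑ t ∈ Finset.univ.filter
        (fun t : {a : Fin k → Fin m // ∑ i, (a i : ℕ) = m - 1} => t.1 i = a), τ t)
    (W : Submodule ℚ (Fin k → ℚ)) (hW : ∀ w ∈ W, ∑ i, w i = 0)
    (hv0 : (fun i : Fin k => if (i : ℕ) = k - 1 then -((k : ℚ) - 1) else 1) ∈ W) :
    (∑ a, -(ν a * Real.log (ν a))) +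
      (((Module.finrank ℚ W : ℝ) - 1) / ((k : ℝ) - 2)) *
        ((∑ t, -(τ t * Real.log (τ t))) - (∑ a, -(ν a * Real.log (ν a)))) ≤
      ∑ t, -(τ t * Real.log (∑ t' ∈ Finset.univ.filter
        (fun t' => (fun w : W => ∑ i, (w : Fin k → ℚ) i * (t'.1 i : ℚ)) =
          (fun w : W => ∑ i, (w : Fin k → ℚ) i * (t.1 i : ℚ))), τ t')) := by
  have hk1 : k - 1 < k := by omega
  set K : Fin k := ⟨k - 1, hk1⟩ with hKdef
  have hK : (K : ℕ) = k - 1 := rfl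
  have hsup := finrank_W_sup_Esub hk K hK W hW hv0
  have hmm := main_min (m := m) hk K hK τ hpos hsum hsym (W ⊔ Esub k K) le_sup_right
  have hE := ent_FS_E τ K ν (fun a => hν K a)
  have hT := ent_FS_top (m := m) (k := k) τ
  have hRHS : (∑ t, -(τ t * Real.log (∑ t' ∈ Finset.univ.filter
        (fun t' => (fun w : W => ∑ i, (w : Fin k → ℚ) i * (t'.1 i : ℚ)) =
          (fun w : W => ∑ i, (w : Fin k → ℚ) i * (t.1 i : ℚ))), τ t')))
      = ent τ (FS W : TT m k → _) := rfl
  have hfib : ent τ (FS W : TT m k → _) = ent τ (FS (W ⊔ Esub k K)) := by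
    apply ent_congr
    intro u v
    constructor
    · intro h
      rw [FS_eq_iff_ker] at h ⊢
      have hone_ker : ((fun _ => (1:ℚ)) : Fin k → ℚ) ∈ LinearMap.ker (lmt u - lmt v) := by
        simp only [LinearMap.mem_ker, LinearMap.sub_apply, sub_eq_zero]
        rw [lmt_one, lmt_one]
      apply sup_le h
      rw [Esub]
      apply sup_le
      · rw [Submodule.span_le]
        intro x hx
        rw [Set.mem_singleton_iff] at hx
        subst hx
        exact hone_ker
      · rw [Submodule.span_le]
        intro x hx
        rw [Set.mem_singleton_iff] at hx
        subst hx
        have hkQ : (k:ℚ) ≠ 0 := by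
          have : 3 ≤ (k:ℚ) := by exact_mod_cast hk
          linarith
        have heK : (Pi.single K (1:ℚ) : Fin k → ℚ)
            = (k:ℚ)⁻¹ • (((fun _ => (1:ℚ)) : Fin k → ℚ)
              - (fun i : Fin k => if (i : ℕ) = k - 1 then -((k : ℚ) - 1) else 1)) := by
          funext a
          simp only [Pi.smul_apply, Pi.sub_apply, smul_eq_mul, Pi.single_apply]
          rcases eq_or_ne a K with hh | hh
          · subst hh
            rw [if_pos rfl, if_pos hK]
            field_simp
            ring
          · have haK : (a : ℕ) ≠ k - 1 := by
              intro hha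
              exact hh (Fin.ext (by rw [hha, hK]))
            rw [if_neg hh, if_neg haK]
            ring
        rw [heK]
        apply Submodule.smul_mem
        apply Submodule.sub_mem
        · exact hone_ker
        · exact h hv0
    · intro h
      exact FS_mono le_sup_left h
  rw [hRHS, hfib]
  rw [hE, hT, hsup.2] at hmm
  have hcoef : (((Module.finrank ℚ W + 1 : ℕ) : ℝ) - 2) = (Module.finrank ℚ W : ℝ) - 1 := by
    push_cast
    ring
  rw [hcoef] at hmm
  exact hmm
end

section
/- Let P ≥ k ≥ 3 be primes/integers with P prime. Then there exists a k-colored sum-free set (y_{1,j},…,y_{k,j})_{j=1}^R in 𝔽_P of size R ≥ P · exp(−12√(log P · log k)). -/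
open Finset

lemma sphere_vectors_eq {m n d r : ℕ} (hm : 1 ≤ m)
    (v : Fin m → (Fin n → ℕ)) (w : Fin n → ℕ)
    (hv : ∀ i, v i ∈ Behrend.sphere n d r) (hw : w ∈ Behrend.sphere n d r)
    (hsum : ∑ i, v i = m • w) : ∀ i, v i = w := by
  have hv2 : ∀ i, ∑ t, ((v i t : ℤ))^2 = (r : ℤ) := fun i => by
    have h := (Finset.mem_filter.1 (hv i)).2
    push_cast [← h]; rfl
  have hw2 : ∑ t, ((w t : ℤ))^2 = (r : ℤ) := by
    have h := (Finset.mem_filter.1 hw).2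
    push_cast [← h]; rfl
  have hsum' : ∀ t, ∑ i, ((v i t : ℤ)) = (m : ℤ) * w t := fun t => by
    have h := congrFun hsum t
    simp only [Finset.sum_apply, Pi.smul_apply, smul_eq_mul] at h
    exact_mod_cast h
  have hCS : ∀ i i', ∑ t, (v i t : ℤ) * (v i' t : ℤ) ≤ r := by
    intro i i'
    have h1 : (∑ t, (v i t : ℤ) * (v i' t : ℤ))^2 ≤ (r : ℤ) * r := by
      have h2 := Finset.sum_mul_sq_le_sq_mul_sq Finset.univ (fun t => (v i t : ℤ))
        (fun t => (v i' t : ℤ))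
      rwa [hv2, hv2] at h2
    have h0 : 0 ≤ ∑ t, (v i t : ℤ) * (v i' t : ℤ) := Finset.sum_nonneg fun t _ =>
      mul_nonneg (Int.natCast_nonneg _) (Int.natCast_nonneg _)
    nlinarith [Int.natCast_nonneg r]
  have hTot : ∑ i, ∑ i', ∑ t, (v i t : ℤ) * (v i' t : ℤ) = (m : ℤ)^2 * r := by
    have e1 : ∀ i : Fin m, ∑ i', ∑ t, (v i t : ℤ) * (v i' t : ℤ)
        = ∑ t, ∑ i', (v i t : ℤ) * (v i' t : ℤ) := fun i => Finset.sum_comm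
    simp_rw [e1]
    rw [Finset.sum_comm]
    have e2 : ∀ t, ∑ i, ∑ i', (v i t : ℤ) * (v i' t : ℤ)
        = (∑ i, (v i t : ℤ)) * (∑ i', (v i' t : ℤ)) := fun t => (Finset.sum_mul_sum _ _ _ _).symm
    simp_rw [e2, hsum']
    rw [← hw2, Finset.mul_sum]
    exact Finset.sum_congr rfl fun t _ => by ring
  have hEq : ∀ i i', ∑ t, (v i t : ℤ) * (v i' t : ℤ) = r := by
    by_contra h
    push_neg at h
    obtain ⟨i, i', hii⟩ := h
    have hlt : ∑ t, (v i t : ℤ) * (v i' t : ℤ) < r := lt_of_le_of_ne (hCS i i') hii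
    have hstrict : ∑ i, ∑ i', ∑ t, (v i t : ℤ) * (v i' t : ℤ)
        < ∑ _i : Fin m, ∑ _i' : Fin m, (r : ℤ) := by
      apply Finset.sum_lt_sum
      · intro x _; exact Finset.sum_le_sum fun y _ => hCS x y
      · exact ⟨i, Finset.mem_univ i, Finset.sum_lt_sum (fun y _ => hCS i y)
          ⟨i', Finset.mem_univ i', hlt⟩⟩
    simp only [Finset.sum_const, Finset.card_univ, Fintype.card_fin, nsmul_eq_mul] at hstrict
    rw [hTot] at hstrict
    nlinarith [hstrict]
  have hvv : ∀ i i', v i = v i' := by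
    intro i i'
    have e1 : ∑ t, ((v i t : ℤ) - v i' t)^2 + 2 * ∑ t, (v i t : ℤ) * (v i' t : ℤ)
        = ∑ t, (v i t : ℤ)^2 + ∑ t, (v i' t : ℤ)^2 := by
      rw [Finset.mul_sum, ← Finset.sum_add_distrib, ← Finset.sum_add_distrib]
      exact Finset.sum_congr rfl fun t _ => by ring
    rw [hv2 i, hv2 i', hEq i i'] at e1
    have h0 : ∑ t, ((v i t : ℤ) - v i' t)^2 = 0 := by linarith
    funext t
    have h3 := (Finset.sum_eq_zero_iff_of_nonneg
      (fun t _ => sq_nonneg ((v i t : ℤ) - v i' t))).1 h0 t (Finset.mem_univ t)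
    have h4 : (v i t : ℤ) = v i' t := by nlinarith [h3]
    exact_mod_cast h4
  intro i
  funext t
  have h1 : (m : ℤ) * (v i t : ℤ) = (m : ℤ) * w t := by
    rw [← hsum' t, Finset.sum_congr rfl (fun i' _ => by rw [hvv i' i])]
    simp [mul_comm]
  have hm' : (m : ℤ) ≠ 0 := by exact_mod_cast (by omega : m ≠ 0)
  exact_mod_cast mul_left_cancel₀ hm' h1

lemma map_lt_pow {n B : ℕ} (hB : 1 ≤ B) (x : Fin n → ℕ) (hx : ∀ i, x i < B) :
    Behrend.map B x < B ^ n := by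
  induction n with
  | zero => simpa using hB
  | succ n ih =>
    rw [Behrend.map_succ']
    have h1 : Behrend.map B (x ∘ Fin.succ) < B ^ n := ih (x ∘ Fin.succ) fun i => hx i.succ
    have h2 : Behrend.map B (x ∘ Fin.succ) * B ≤ (B ^ n - 1) * B :=
      Nat.mul_le_mul_right _ (by omega)
    have h5 : (B ^ n - 1) * B + B = B ^ n * B := by
      have h4 : 1 ≤ B ^ n := Nat.one_le_pow _ _ hB
      have h6 : B ≤ B ^ n * B := Nat.le_mul_of_pos_left B (by omega)
      rw [Nat.sub_mul, one_mul]
      omega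
    have h3 : x 0 < B := hx 0
    rw [pow_succ]
    omega

lemma construction (P m n d r : ℕ) (hP : 2 ≤ P) (hm : 1 ≤ m) (hd : 1 ≤ d)
    (hPd : m * (m * d) ^ n ≤ P) :
    ∃ y : Fin (m + 1) → Fin (Behrend.sphere n d r).card → ZMod P,
      ∀ j : Fin (m + 1) → Fin (Behrend.sphere n d r).card,
        ∑ i, y i (j i) = 0 ↔ ∃ c, ∀ i, j i = c := by
  haveI : NeZero P := ⟨by omega⟩
  set S := Behrend.sphere n d r with hS
  set a : Fin S.card → (Fin n → ℕ) := fun j => ((S.equivFin.symm j : S) : Fin n → ℕ) with ha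
  have haS : ∀ j, a j ∈ S := fun j => (S.equivFin.symm j).2
  have hainj : Function.Injective a := fun j j' h => by
    have h2 : (S.equivFin.symm j : S) = S.equivFin.symm j' := Subtype.ext h
    exact S.equivFin.symm.injective h2
  set B := m * d with hB
  have hB1 : 1 ≤ B := Nat.one_le_iff_ne_zero.2 (Nat.mul_ne_zero (by omega) (by omega))
  have hbox : ∀ j t, a j t < d := fun j t => Behrend.mem_box.1 (Behrend.sphere_subset_box (haS j)) t
  have hmap_lt : ∀ j, Behrend.map B (a j) < B ^ n := fun j =>
    map_lt_pow hB1 _ fun t => lt_of_lt_of_le (hbox j t) (Nat.le_mul_of_pos_left d hm)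
  have hmBn : m * B ^ n ≤ P := hPd
  have hdB : m * (d - 1) < B := by
    have : m * (d - 1) + m * 1 = m * d := by rw [← Nat.mul_add]; congr 1; omega
    omega
  refine ⟨fun i j => if i = Fin.last m then -((m : ZMod P) * (Behrend.map B (a j) : ZMod P))
    else (Behrend.map B (a j) : ZMod P), fun j => ?_⟩
  set A := ∑ i : Fin m, Behrend.map B (a (j i.castSucc)) with hA
  set C := m * Behrend.map B (a (j (Fin.last m))) with hC
  have hAle : A ≤ m * (B ^ n - 1) := by
    calc A ≤ ∑ _i : Fin m, (B ^ n - 1) :=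
          Finset.sum_le_sum fun i _ => by have := hmap_lt (j i.castSucc); omega
      _ = m * (B ^ n - 1) := by
          rw [Finset.sum_const, Finset.card_univ, Fintype.card_fin, smul_eq_mul]
  have htrick : m * (B ^ n - 1) + m * 1 = m * B ^ n := by
    rw [← Nat.mul_add]; congr 1
    have : 1 ≤ B ^ n := Nat.one_le_pow _ _ hB1
    omega
  have hAlt : A < P := by omega
  have hClt : C < P := by
    have h1 : C < m * B ^ n := mul_lt_mul_of_pos_left (hmap_lt _) (by omega)
    omega
  have step1 : ∑ i, (if i = Fin.last m then -((m : ZMod P) * (Behrend.map B (a (j i)) : ZMod P))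
      else (Behrend.map B (a (j i)) : ZMod P)) = (A : ZMod P) - (C : ZMod P) := by
    rw [Fin.sum_univ_castSucc,
      Finset.sum_congr rfl (fun i _ => if_neg (Fin.castSucc_lt_last i).ne), if_pos rfl,
      hA, hC]
    push_cast
    ring
  rw [step1, sub_eq_zero]
  have hcast : ((A : ZMod P) = (C : ZMod P)) ↔ A = C := by
    constructor
    · intro h
      have h2 := congrArg ZMod.val h
      rwa [ZMod.val_cast_of_lt hAlt, ZMod.val_cast_of_lt hClt] at h2
    · intro h; rw [h]
  rw [hcast]
  constructor
  · intro hAC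
    have hmapsum : Behrend.map B (∑ i : Fin m, a (j i.castSucc))
        = Behrend.map B (m • a (j (Fin.last m))) := by
      rw [map_sum, map_nsmul, ← hA, smul_eq_mul, ← hC, hAC]
    have hmem1 : (∑ i : Fin m, a (j i.castSucc)) ∈ {x : Fin n → ℕ | ∀ t, x t < B} := by
      intro t
      simp only [Finset.sum_apply]
      calc ∑ i : Fin m, a (j i.castSucc) t ≤ ∑ _i : Fin m, (d - 1) :=
            Finset.sum_le_sum fun i _ => by have := hbox (j i.castSucc) t; omega
        _ = m * (d - 1) := by
            rw [Finset.sum_const, Finset.card_univ, Fintype.card_fin, smul_eq_mul]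
        _ < B := hdB
    have hmem2 : (m • a (j (Fin.last m))) ∈ {x : Fin n → ℕ | ∀ t, x t < B} := by
      intro t
      simp only [Pi.smul_apply, smul_eq_mul]
      calc m * a (j (Fin.last m)) t ≤ m * (d - 1) :=
            Nat.mul_le_mul_left _ (by have := hbox (j (Fin.last m)) t; omega)
        _ < B := hdB
    have heqvec := Behrend.map_injOn hmem1 hmem2 hmapsum
    have hall := sphere_vectors_eq hm (fun i => a (j i.castSucc)) (a (j (Fin.last m)))
      (fun i => haS _) (haS _) heqvec
    refine ⟨j (Fin.last m), fun i => ?_⟩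
    refine Fin.lastCases rfl (fun i => ?_) i
    exact hainj (hall i)
  · rintro ⟨c, hc⟩
    rw [hA, hC, hc (Fin.last m)]
    rw [Finset.sum_congr rfl (fun i _ => by rw [hc i.castSucc])]
    rw [Finset.sum_const, Finset.card_univ, Fintype.card_fin, smul_eq_mul]


set_option maxHeartbeats 2000000 in
theorem stmt9 (P k : ℕ) (hP : P.Prime) (hk : 3 ≤ k) (hkP : k ≤ P) :
    ∃ (R : ℕ) (y : Fin k → Fin R → ZMod P),
      (∀ j : Fin k → Fin R, ∑ i, y i (j i) = 0 ↔ ∃ c, ∀ i, j i = c) ∧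
      (P : ℝ) * Real.exp (-12 * Real.sqrt (Real.log P * Real.log k)) ≤ R := by
  obtain ⟨m, rfl⟩ : ∃ m, k = m + 1 := ⟨k - 1, by omega⟩
  have hm2 : 2 ≤ m := by omega
  have hP3 : 3 ≤ P := le_trans hk hkP
  set L := Real.log P with hLdef
  set l := Real.log (↑(m + 1) : ℝ) with hldef
  have hk3 : (3 : ℝ) ≤ (↑(m + 1) : ℝ) := by exact_mod_cast hk
  have hkPr : ((m + 1 : ℕ) : ℝ) ≤ (P : ℝ) := by exact_mod_cast hkP
  have hl1 : 1 < l := by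
    have h1 : Real.log 3 ≤ l := Real.log_le_log (by norm_num) hk3
    have h2 : (1 : ℝ) < Real.log 3 := by
      rw [show (1:ℝ) = Real.log (Real.exp 1) by rw [Real.log_exp]]
      exact Real.log_lt_log (Real.exp_pos 1) (lt_of_lt_of_le Real.exp_one_lt_d9 (by norm_num))
    linarith
  have hlL : l ≤ L := Real.log_le_log (by positivity) hkPr
  have hL0 : 0 < L := by linarith
  have hl0 : 0 < l := by linarith
  set s := Real.sqrt (L * l) with hsdef
  have hs2 : s ^ 2 = L * l := Real.sq_sqrt (by positivity)
  have hs0 : 0 < s := Real.sqrt_pos.2 (by positivity)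
  by_cases hcase : L ≤ 144 * l
  · -- small case : R = 1
    refine ⟨1, fun _ _ => 0, fun j => ?_, ?_⟩
    · simp only [Finset.sum_const_zero, true_iff]
      exact ⟨j 0, fun i => Subsingleton.elim _ _⟩
    · have h1 : L ≤ 12 * s := by
        have h2 : L ^ 2 ≤ 144 * (L * l) := by nlinarith [mul_le_mul_of_nonneg_left hcase hL0.le]
        calc L = Real.sqrt (L ^ 2) := (Real.sqrt_sq hL0.le).symm
          _ ≤ Real.sqrt (144 * (L * l)) := Real.sqrt_le_sqrt h2
          _ = 12 * s := by
              rw [show (144 : ℝ) * (L * l) = 12 ^ 2 * (L * l) by norm_num,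
                Real.sqrt_mul (by positivity) _, Real.sqrt_sq (by norm_num)]
      have h2 : Real.exp (-12 * s) ≤ Real.exp (-L) := Real.exp_le_exp.2 (by linarith)
      have h3 : Real.exp (-L) = (P : ℝ)⁻¹ := by
        rw [Real.exp_neg, Real.exp_log (by positivity : (0:ℝ) < P)]
      calc (P : ℝ) * Real.exp (-12 * s) ≤ (P : ℝ) * Real.exp (-L) := by
            apply mul_le_mul_of_nonneg_left h2 (by positivity)
        _ = 1 := by rw [h3]; field_simp
        _ ≤ ((1 : ℕ) : ℝ) := by norm_num
  · push_neg at hcase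
    -- parameters
    set n := ⌊Real.sqrt (L / l)⌋₊ with hndef
    have hsql : Real.sqrt (L / l) * l = s := by
      rw [Real.sqrt_div hL0.le, div_mul_eq_mul_div, mul_div_assoc, Real.div_sqrt,
        ← Real.sqrt_mul hL0.le]
    have h12 : (12 : ℝ) ≤ Real.sqrt (L / l) := by
      rw [Real.le_sqrt (by norm_num) (by positivity), le_div_iff₀ hl0]
      norm_num
      linarith
    have hn12 : 12 ≤ n := Nat.le_floor (by exact_mod_cast h12)
    have hn0' : (0 : ℝ) < n := by exact_mod_cast (by omega : 0 < n)
    have hnle : (n : ℝ) ≤ Real.sqrt (L / l) := Nat.floor_le (Real.sqrt_nonneg _)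
    have hnlt : Real.sqrt (L / l) < (n : ℝ) + 1 := Nat.lt_floor_add_one _
    have hnl : (n : ℝ) * l ≤ s := by
      rw [← hsql]; exact mul_le_mul_of_nonneg_right hnle hl0.le
    have hslt : s < ((n : ℝ) + 1) * l := by
      rw [← hsql]; exact mul_lt_mul_of_pos_right hnlt hl0
    have hls : 12 * l ≤ s := by
      rw [← hsql]; exact mul_le_mul_of_nonneg_right h12 hl0.le
    have hsL : 12 * s ≤ L := by
      have h2 : 144 * (L * l) ≤ L ^ 2 := by nlinarith [mul_le_mul_of_nonneg_left hcase.le hL0.le]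
      calc 12 * s = Real.sqrt (144 * (L * l)) := by
            rw [show (144 : ℝ) * (L * l) = 12 ^ 2 * (L * l) by norm_num,
              Real.sqrt_mul (by positivity) _, Real.sqrt_sq (by norm_num)]
        _ ≤ Real.sqrt (L ^ 2) := Real.sqrt_le_sqrt h2
        _ = L := Real.sqrt_sq hL0.le
    have hns : (n : ℝ) ≤ s := by
      have h1 : (n : ℝ) * 1 ≤ (n : ℝ) * l := mul_le_mul_of_nonneg_left hl1.le hn0'.le
      linarith [hnl]
    -- the quantity z and X
    have hm0 : (0 : ℝ) < m := by exact_mod_cast (by omega : 0 < m)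
    set lm := Real.log m with hlmdef
    have hlm0 : 0 ≤ lm := Real.log_nonneg (by exact_mod_cast (by omega : 1 ≤ m))
    have hlml : lm ≤ l := Real.log_le_log hm0 (by exact_mod_cast (by omega : m ≤ m + 1))
    set z := (P : ℝ) / (m : ℝ) ^ (n + 1) with hzdef
    have hz0 : 0 < z := by positivity
    have hlogz : Real.log z = L - ((n : ℝ) + 1) * lm := by
      rw [hzdef, Real.log_div (by positivity) (by positivity), Real.log_pow]
      push_cast
      ring
    set X := z ^ ((n : ℝ)⁻¹) with hXdef
    have hX0 : 0 < X := Real.rpow_pos_of_pos hz0 _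
    have hlogX : Real.log X = (n : ℝ)⁻¹ * (L - ((n : ℝ) + 1) * lm) := by
      rw [hXdef, Real.log_rpow hz0, hlogz]
    have h131 : ((n : ℝ) + 1) * l ≤ 13 / 12 * s := by
      have : ((n : ℝ) + 1) * l = (n : ℝ) * l + l := by ring
      linarith [hnl, hls]
    have hn1lm : ((n : ℝ) + 1) * lm ≤ 13 / 12 * s := by
      have := mul_le_mul_of_nonneg_left hlml (by positivity : (0:ℝ) ≤ (n : ℝ) + 1)
      linarith
    have hlogX1 : 1 ≤ Real.log X := by
      rw [hlogX, inv_mul_eq_div, le_div_iff₀ hn0']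
      linarith [hns, hsL, hn1lm]
    have hX2 : (2 : ℝ) ≤ X := by
      calc (2 : ℝ) ≤ Real.exp 1 := by linarith [Real.exp_one_gt_d9]
        _ ≤ Real.exp (Real.log X) := Real.exp_le_exp.2 hlogX1
        _ = X := Real.exp_log hX0
    set d := ⌊X⌋₊ with hddef
    have hd2 : 2 ≤ d := Nat.le_floor (by exact_mod_cast hX2)
    have hdX : (d : ℝ) ≤ X := Nat.floor_le hX0.le
    have hd0 : (0 : ℝ) < d := by exact_mod_cast (by omega : 0 < d)
    have hXd : X ≤ 2 * (d : ℝ) := by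
      have h1 : X < (d : ℝ) + 1 := Nat.lt_floor_add_one _
      have h2 : (1 : ℝ) ≤ d := by exact_mod_cast (by omega : 1 ≤ d)
      linarith
    have hXn : X ^ n = z := by
      rw [hXdef, ← Real.rpow_natCast (z ^ ((n : ℝ)⁻¹)) n, ← Real.rpow_mul hz0.le,
        inv_mul_cancel₀ (by positivity : ((n : ℝ)) ≠ 0), Real.rpow_one]
    -- nat inequality for construction
    have hPdR : (m : ℝ) * ((m : ℝ) * d) ^ n ≤ (P : ℝ) := by
      have h1 : ((d : ℝ)) ^ n ≤ X ^ n := pow_le_pow_left₀ hd0.le hdX n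
      have h2 : (m : ℝ) * ((m : ℝ) * d) ^ n = (m : ℝ) ^ (n + 1) * (d : ℝ) ^ n := by
        rw [mul_pow]; ring
      rw [h2]
      calc (m : ℝ) ^ (n + 1) * (d : ℝ) ^ n ≤ (m : ℝ) ^ (n + 1) * X ^ n := by
            apply mul_le_mul_of_nonneg_left h1 (by positivity)
        _ = (m : ℝ) ^ (n + 1) * z := by rw [hXn]
        _ = P := by rw [hzdef]; field_simp
    have hPd : m * (m * d) ^ n ≤ P := by exact_mod_cast hPdR
    obtain ⟨r, hr⟩ := Behrend.exists_large_sphere n d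
    obtain ⟨y, hy⟩ := construction P m n d r (by omega) (by omega) (by omega) hPd
    refine ⟨(Behrend.sphere n d r).card, y, hy, ?_⟩
    -- final size bound
    have hEbound : ((n : ℝ) + 1) * lm + n * Real.log 2 + n + 2 * Real.log X ≤ 12 * s := by
      have hlog2 : Real.log 2 ≤ 1 := by linarith [Real.log_two_lt_d9]
      have hnlog2 : (n : ℝ) * Real.log 2 ≤ s := by
        have h1 : (n : ℝ) * Real.log 2 ≤ (n : ℝ) * 1 :=
          mul_le_mul_of_nonneg_left hlog2 hn0'.le
        linarith [hns]
      have h11L : 11 * L ≤ 12 * s * n := by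
        have hnl2 : 11 / 12 * s ≤ (n : ℝ) * l := by linarith [hslt, hls]
        have key : 11 * L * l ≤ 12 * s * (n : ℝ) * l := by
          have hkey2 : 12 * s * (11 / 12 * s) ≤ 12 * s * ((n : ℝ) * l) :=
            mul_le_mul_of_nonneg_left hnl2 (by positivity)
          linarith [hkey2, hs2]
        exact le_of_mul_le_mul_right (by linarith) hl0
      have h2X : 2 * Real.log X ≤ 24 / 11 * s := by
        rw [hlogX]
        have h1 : (n : ℝ)⁻¹ * (L - ((n : ℝ) + 1) * lm) ≤ (n : ℝ)⁻¹ * L := by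
          apply mul_le_mul_of_nonneg_left _ (by positivity)
          linarith [mul_nonneg (by positivity : (0:ℝ) ≤ (n:ℝ)+1) hlm0]
        have h2 : (n : ℝ)⁻¹ * L ≤ 12 / 11 * s := by
          rw [inv_mul_eq_div, div_le_iff₀ hn0']
          linarith [h11L]
        linarith
      linarith [hn1lm, hns]
    have hprod : (m : ℝ) ^ (n + 1) * 2 ^ n * n * X ^ 2 ≤ Real.exp (12 * s) := by
      have e1 : (m : ℝ) ^ (n + 1) = Real.exp (((n : ℝ) + 1) * lm) := by
        rw [show ((n : ℝ) + 1) = ((n + 1 : ℕ) : ℝ) by push_cast; ring,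
          Real.exp_nat_mul, Real.exp_log hm0]
      have e2 : (2 : ℝ) ^ n = Real.exp ((n : ℝ) * Real.log 2) := by
        rw [Real.exp_nat_mul, Real.exp_log (by norm_num : (0:ℝ) < 2)]
      have e3 : (n : ℝ) ≤ Real.exp (n : ℝ) := by linarith [Real.add_one_le_exp (n : ℝ)]
      have e4 : X ^ 2 = Real.exp (2 * Real.log X) := by
        rw [show (2 : ℝ) * Real.log X = ((2 : ℕ) : ℝ) * Real.log X by norm_num,
          Real.exp_nat_mul, Real.exp_log hX0]
      calc (m : ℝ) ^ (n + 1) * 2 ^ n * n * X ^ 2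
          ≤ Real.exp (((n : ℝ) + 1) * lm) * Real.exp ((n : ℝ) * Real.log 2)
            * Real.exp (n : ℝ) * Real.exp (2 * Real.log X) := by
            rw [e1, e2, e4]
            apply mul_le_mul_of_nonneg_right _ (Real.exp_pos _).le
            apply mul_le_mul_of_nonneg_left e3 (by positivity)
        _ = Real.exp (((n : ℝ) + 1) * lm + (n : ℝ) * Real.log 2 + (n : ℝ) + 2 * Real.log X) := by
            rw [← Real.exp_add, ← Real.exp_add, ← Real.exp_add]
        _ ≤ Real.exp (12 * s) := Real.exp_le_exp.2 hEbound
    have hdagger : (P : ℝ) ≤ (m : ℝ) ^ (n + 1) * 2 ^ n * (d : ℝ) ^ n := by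
      have h1 : z ≤ (2 * (d : ℝ)) ^ n := by
        rw [← hXn]; exact pow_le_pow_left₀ hX0.le hXd n
      have h3 : (P : ℝ) = z * (m : ℝ) ^ (n + 1) := by rw [hzdef]; field_simp
      rw [h3]
      calc z * (m : ℝ) ^ (n + 1) ≤ (2 * (d : ℝ)) ^ n * (m : ℝ) ^ (n + 1) := by
            apply mul_le_mul_of_nonneg_right h1 (by positivity)
        _ = (m : ℝ) ^ (n + 1) * 2 ^ n * (d : ℝ) ^ n := by rw [mul_pow]; ring
    have hfinal : (P : ℝ) * Real.exp (-12 * s) ≤ ((d ^ n : ℕ) : ℝ) / ((n * d ^ 2 : ℕ) : ℝ) := by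
      push_cast
      rw [le_div_iff₀ (by positivity : (0:ℝ) < (n : ℝ) * (d : ℝ) ^ 2)]
      have hdX2 : (d : ℝ) ^ 2 ≤ X ^ 2 := pow_le_pow_left₀ hd0.le hdX 2
      calc (P : ℝ) * Real.exp (-12 * s) * ((n : ℝ) * (d : ℝ) ^ 2)
          ≤ ((m : ℝ) ^ (n + 1) * 2 ^ n * (d : ℝ) ^ n) * Real.exp (-12 * s)
            * ((n : ℝ) * X ^ 2) := by
            apply mul_le_mul (mul_le_mul_of_nonneg_right hdagger (Real.exp_pos _).le)
              (mul_le_mul_of_nonneg_left hdX2 hn0'.le) (by positivity) (by positivity)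
        _ = (d : ℝ) ^ n * (((m : ℝ) ^ (n + 1) * 2 ^ n * n * X ^ 2) * Real.exp (-12 * s)) := by
            ring
        _ ≤ (d : ℝ) ^ n * (Real.exp (12 * s) * Real.exp (-12 * s)) := by
            apply mul_le_mul_of_nonneg_left _ (by positivity)
            exact mul_le_mul_of_nonneg_right hprod (Real.exp_pos _).le
        _ = (d : ℝ) ^ n := by rw [← Real.exp_add]; simp
    calc (P : ℝ) * Real.exp (-12 * s) ≤ ((d ^ n : ℕ) : ℝ) / ((n * d ^ 2 : ℕ) : ℝ) := hfinal
      _ ≤ ((Behrend.sphere n d r).card : ℝ) := hr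
end

section
/- Let n ≥ 0 and k ≥ 3 be integers and let ψ be a non-zero scaled distribution on {0,…,n} (a function ψ : {0,…,n} → ℝ≥0). Let ψ̄ be the normalized probability distribution ψ̄(i) = ψ(i)/Σ_j ψ(j). Then the following are equivalent: (1) ψ is a positive linear combination of all n-simple scaled distributions 1_{a_1} + … + 1_{a_k} over all (a_1,…,a_k) ∈ T_{n,k}; (2) ψ̄ occurs as the marginal of an S_k-symmetric probability distribution τ on T_{n,k} with τ(t) > 0 for all t ∈ T_{n,k}. -/
open Finset

namespace Stmt11Aux

variable {n k : ℕ}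

abbrev T (n k : ℕ) := {a : Fin k → Fin (n + 1) // ∑ i, (a i : ℕ) = n}

def act (σ : Equiv.Perm (Fin k)) (t : T n k) : T n k :=
  ⟨t.1 ∘ σ, (Equiv.sum_comp σ fun i => ((t.1 i : ℕ))).trans t.2⟩

lemma act_act (σ ρ : Equiv.Perm (Fin k)) (t : T n k) :
    act σ (act ρ t) = act (ρ * σ) t := rfl

lemma act_one (t : T n k) : act 1 t = t := rfl

def actE (σ : Equiv.Perm (Fin k)) : T n k ≃ T n k where
  toFun := act σ
  invFun := act σ⁻¹
  left_inv t := Subtype.ext <| funext fun i => by simp [act]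
  right_inv t := Subtype.ext <| funext fun i => by simp [act]

lemma card_act (σ : Equiv.Perm (Fin k)) (t : T n k) (x : Fin (n + 1)) :
    (univ.filter fun i => (act σ t).1 i = x).card
      = (univ.filter fun i => t.1 i = x).card := by
  apply Finset.card_bij (fun i _ => σ i)
  · intro i hi
    simp only [mem_filter, mem_univ, true_and] at hi ⊢
    exact hi
  · intro a _ b _ h
    exact σ.injective h
  · intro b hb
    simp only [mem_filter, mem_univ, true_and] at hb ⊢
    exact ⟨σ⁻¹ b, by simpa [act] using hb, by simp⟩

lemma sum_card (f : T n k → ℝ) (x : Fin (n + 1)) :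
    ∑ t, f t * ((univ.filter fun i => t.1 i = x).card : ℝ)
      = ∑ i : Fin k, ∑ t ∈ univ.filter (fun t : T n k => t.1 i = x), f t := by
  have h1 : ∀ t : T n k, f t * ((univ.filter fun i => t.1 i = x).card : ℝ)
      = ∑ i : Fin k, if t.1 i = x then f t else 0 := by
    intro t
    rw [← Finset.sum_filter, Finset.sum_const, nsmul_eq_mul, mul_comm]
  simp_rw [h1, Finset.sum_filter]
  exact Finset.sum_comm

noncomputable def sym (lam : T n k → ℝ) (t : T n k) : ℝ :=
  ∑ σ : Equiv.Perm (Fin k), lam (act σ t)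

lemma sym_act (lam : T n k → ℝ) (σ : Equiv.Perm (Fin k)) (t : T n k) :
    sym lam (act σ t) = sym lam t := by
  unfold sym
  simp_rw [act_act]
  exact Equiv.sum_comp (Equiv.mulLeft σ) (fun ρ => lam (act ρ t))

lemma sym_pos {lam : T n k → ℝ} (h : ∀ t, 0 < lam t) (t : T n k) : 0 < sym lam t :=
  Finset.sum_pos (fun σ _ => h _) Finset.univ_nonempty

lemma sum_act (lam : T n k → ℝ) (σ : Equiv.Perm (Fin k)) (x : Fin (n + 1)) :
    ∑ t, lam (act σ t) * ((univ.filter fun i => t.1 i = x).card : ℝ)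
      = ∑ t, lam t * ((univ.filter fun i => t.1 i = x).card : ℝ) := by
  calc ∑ t, lam (act σ t) * ((univ.filter fun i => t.1 i = x).card : ℝ)
      = ∑ t, lam (act σ (act σ⁻¹ t)) * ((univ.filter fun i => (act σ⁻¹ t).1 i = x).card : ℝ) :=
        (Equiv.sum_comp (actE σ⁻¹)
          (fun t => lam (act σ t) * ((univ.filter fun i => t.1 i = x).card : ℝ))).symm
    _ = ∑ t, lam t * ((univ.filter fun i => t.1 i = x).card : ℝ) := by
        refine Finset.sum_congr rfl fun t _ => ?_
        rw [act_act, inv_mul_cancel, act_one, card_act]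

lemma sum_sym_card (lam : T n k → ℝ) (x : Fin (n + 1)) :
    ∑ t, sym lam t * ((univ.filter fun i => t.1 i = x).card : ℝ)
      = (k.factorial : ℝ) * ∑ t, lam t * ((univ.filter fun i => t.1 i = x).card : ℝ) := by
  unfold sym
  simp_rw [Finset.sum_mul]
  rw [Finset.sum_comm]
  simp_rw [fun σ => sum_act lam σ x]
  rw [Finset.sum_const, nsmul_eq_mul]
  congr 1
  simp [Fintype.card_perm]

lemma marg_eq (lam : T n k → ℝ) (i j : Fin k) (x : Fin (n + 1)) :
    ∑ t ∈ univ.filter (fun t : T n k => t.1 i = x), sym lam t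
      = ∑ t ∈ univ.filter (fun t : T n k => t.1 j = x), sym lam t := by
  refine Finset.sum_equiv (actE (Equiv.swap i j)) ?_ ?_
  · intro t
    simp only [mem_filter, mem_univ, true_and]
    have : (actE (Equiv.swap i j) t).1 j = t.1 i := by
      show t.1 (Equiv.swap i j j) = t.1 i
      rw [Equiv.swap_apply_right]
    rw [this]
  · intro t _
    exact (sym_act lam (Equiv.swap i j) t).symm

end Stmt11Aux

open Stmt11Aux in
theorem stmt11 (n k : ℕ) (hk : 3 ≤ k)
    (ψ : Fin (n + 1) → ℝ) (hψ : ∀ x, 0 ≤ ψ x) (hψ0 : ψ ≠ 0) :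
    (∃ lam : {a : Fin k → Fin (n + 1) // ∑ i, (a i : ℕ) = n} → ℝ,
      (∀ t, 0 < lam t) ∧
      ∀ x, ψ x = ∑ t, lam t * ((Finset.univ.filter (fun i => t.1 i = x)).card : ℝ)) ↔
    (∃ τ : {a : Fin k → Fin (n + 1) // ∑ i, (a i : ℕ) = n} → ℝ,
      (∀ t, 0 < τ t) ∧ (∑ t, τ t = 1) ∧
      (∀ t t' : {a : Fin k → Fin (n + 1) // ∑ i, (a i : ℕ) = n},
        (∃ σ : Equiv.Perm (Fin k), t'.1 = t.1 ∘ σ) → τ t' = τ t) ∧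
      ∀ (i : Fin k) (x : Fin (n + 1)),
        ψ x / (∑ y, ψ y) = ∑ t ∈ Finset.univ.filter
          (fun t : {a : Fin k → Fin (n + 1) // ∑ i, (a i : ℕ) = n} => t.1 i = x), τ t) := by
  have hk0 : 0 < k := by omega
  have hS : 0 < ∑ y, ψ y := by
    obtain ⟨x, hx⟩ := Function.ne_iff.mp hψ0
    exact Finset.sum_pos' (fun y _ => hψ y)
      ⟨x, Finset.mem_univ x, lt_of_le_of_ne (hψ x) (Ne.symm hx)⟩
  set S := ∑ y, ψ y with hSdef
  have hkR : (0 : ℝ) < k := by exact_mod_cast hk0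
  have hfR : (0 : ℝ) < k.factorial := by exact_mod_cast k.factorial_pos
  constructor
  · rintro ⟨lam, hpos, heq⟩
    -- marginal of symmetrized lam
    have hmarg : ∀ (i : Fin k) (x : Fin (n + 1)),
        ∑ t ∈ univ.filter (fun t : T n k => t.1 i = x), sym lam t
          = (k.factorial : ℝ) * ψ x / k := by
      intro i x
      have h1 : ∑ j : Fin k, ∑ t ∈ univ.filter (fun t : T n k => t.1 j = x), sym lam t
          = (k.factorial : ℝ) * ψ x := by
        rw [← sum_card, sum_sym_card, ← heq]
      have h2 : ∑ j : Fin k, ∑ t ∈ univ.filter (fun t : T n k => t.1 j = x), sym lam t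
          = (k : ℝ) * ∑ t ∈ univ.filter (fun t : T n k => t.1 i = x), sym lam t := by
        rw [Finset.sum_congr rfl fun j _ => marg_eq lam j i x]
        rw [Finset.sum_const, nsmul_eq_mul]
        simp
      field_simp
      rw [mul_comm, ← h2, h1]
    have hsum : ∑ t, sym lam t = (k.factorial : ℝ) * S / k := by
      -- sum over all t of sym lam t
      have hc : ∀ t : T n k, ∑ x : Fin (n + 1),
          ((univ.filter fun i => t.1 i = x).card : ℝ) = (k : ℝ) := by
        intro t
        rw [← Nat.cast_sum]
        congr 1
        have hcf := Finset.card_eq_sum_card_fiberwise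
          (s := (univ : Finset (Fin k))) (t := (univ : Finset (Fin (n + 1))))
          (f := fun i => t.1 i) (fun i _ => Finset.mem_univ (t.1 i))
        calc ∑ x : Fin (n + 1), (univ.filter fun i => t.1 i = x).card
            = (univ : Finset (Fin k)).card := hcf.symm
          _ = k := by simp
      have h1 : ∑ x : Fin (n + 1), ∑ t, sym lam t * ((univ.filter fun i => t.1 i = x).card : ℝ)
          = (k : ℝ) * ∑ t, sym lam t := by
        rw [Finset.sum_comm]
        simp_rw [← Finset.mul_sum, hc]
        rw [← Finset.sum_mul, mul_comm]
      have h2 : ∑ x : Fin (n + 1), ∑ t, sym lam t * ((univ.filter fun i => t.1 i = x).card : ℝ)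
          = (k.factorial : ℝ) * S := by
        simp_rw [sum_sym_card, ← heq]
        rw [← Finset.mul_sum]
      field_simp
      rw [mul_comm, ← h1, h2]
    refine ⟨fun t => (k : ℝ) * sym lam t / ((k.factorial : ℝ) * S), ?_, ?_, ?_, ?_⟩
    · intro t
      exact div_pos (mul_pos hkR (sym_pos hpos t)) (mul_pos hfR hS)
    · rw [← Finset.sum_div, ← Finset.mul_sum, hsum]
      field_simp
    · rintro t t' ⟨σ, hσ⟩
      have h : t' = act σ t := Subtype.ext hσ
      simp only [h, sym_act]
    · intro i x
      rw [← Finset.sum_div, ← Finset.mul_sum, hmarg i x]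
      field_simp
  · rintro ⟨τ, hpos, hsum, hsymm, hmarg⟩
    refine ⟨fun t => S / k * τ t, fun t => mul_pos (div_pos hS hkR) (hpos t), ?_⟩
    intro x
    simp_rw [mul_assoc]
    rw [← Finset.mul_sum, sum_card τ x]
    have h3 : ∀ i : Fin k,
        ∑ t ∈ univ.filter (fun t : T n k => t.1 i = x), τ t = ψ x / S :=
      fun i => (hmarg i x).symm
    simp_rw [h3, Finset.sum_const, Finset.card_univ, Fintype.card_fin, nsmul_eq_mul]
    field_simp
end

section
/- Let k ≥ 3 and n ≥ 2k, and let φ be an n-tame scaled distribution on {0,…,n} satisfying φ(0) = (k−1)φ(n) + (k−2)φ(n−1) + … + φ(n−k+2). Then φ(1) ≥ φ(n−1) + 2φ(n−2) + … + (k−2)φ(n−k+2) + (k−1)φ(n−k+1) + (k−2)φ(n−k) + … + φ(n−2k+3). -/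
open Finset

/-- Coefficients of the goal functional `φ 1 - T1 - T2`. -/
noncomputable def gc (n k : ℕ) (i : ℕ) : ℝ :=
  (if i = 1 then 1 else 0)
  - (if n + 2 ≤ i + k ∧ i + 1 ≤ n then (n : ℝ) - i else 0)
  - (if n + 3 ≤ i + 2*k ∧ i + k ≤ n + 1 then (i : ℝ) + 2*k - n - 2 else 0)

/-- Coefficients of the functional `φ 0 - ∑ j·φ (n-k+1+j)`. -/
noncomputable def hc (n k : ℕ) (i : ℕ) : ℝ :=
  (if i = 0 then 1 else 0) - (if n + 2 ≤ i + k ∧ i ≤ n then (i : ℝ) + k - n - 1 else 0)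

/-- Coefficients of the functional `φ (m-1) + φ M - 2 φ m`. -/
noncomputable def vc (m M : ℕ) (i : ℕ) : ℝ :=
  (if i + 1 = m then 1 else 0) + (if i = M then 1 else 0) - 2 * (if i = m then 1 else 0)

/-- The combined certificate coefficients. -/
noncomputable def uc (n k m M : ℕ) (R : ℝ) (i : ℕ) : ℝ :=
  2*(n:ℝ)*((n:ℝ) - k) * gc n k i + 4*(k:ℝ)*((k:ℝ)*i - n) + 4*(k:ℝ)*n * hc n k i
    - 2*R * vc m M i

/-- Closed form of the partial sums of `uc`. -/
noncomputable def Wex (n k m : ℕ) (R : ℝ) (i : ℕ) : ℝ :=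
  if i = 0 then 0
  else if i + 2*k ≤ n + 2 then
    2*((n:ℝ) - k*i)*((n:ℝ) - k*(i+1)) - (if i + 1 = m then 2*R else 0)
      + (if i = m then 2*R else 0)
  else if i + k ≤ n + 1 then
    2*(n:ℝ)*((n:ℝ)-k) - (n:ℝ)*((n:ℝ)-k)*(2*(k:ℝ)-2-((n:ℝ)-i))*(2*(k:ℝ)-1-((n:ℝ)-i))
      + 2*(k:ℝ)*i*((k:ℝ)*(i+1)-2*n)
  else ((n:ℝ)-2*k)*((n:ℝ)-k)*((n:ℝ)-i)*((n:ℝ)-i-1)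

/-- Abel summation. -/
lemma abel_sum (u φ : ℕ → ℝ) (N : ℕ) :
    ∑ i ∈ range (N+1), u i * φ i
      = ∑ i ∈ range N, (∑ j ∈ range (i+1), u j) * (φ i - φ (i+1))
        + (∑ j ∈ range (N+1), u j) * φ N := by
  induction N with
  | zero => simp
  | succ N ih =>
      rw [sum_range_succ (f := fun i => u i * φ i), ih,
        sum_range_succ (f := fun i => (∑ j ∈ range (i+1), u j) * (φ i - φ (i+1)))]
      simp only [sum_range_succ]
      ring

set_option maxHeartbeats 4000000 in
theorem stmt13 (n k : ℕ) (hk : 3 ≤ k) (hn : 2 * k ≤ n)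
    (φ : ℕ → ℝ) (hφ : ∀ i ≤ n, 0 ≤ φ i)
    (hmean : ∑ i ∈ Finset.range (n + 1), (i : ℝ) * φ i =
      ((n : ℝ) / k) * ∑ i ∈ Finset.range (n + 1), φ i)
    (hmono : ∀ i j, 1 ≤ i → i ≤ j → j ≤ n → φ j ≤ φ i)
    (heq : φ 0 = ∑ j ∈ Finset.Icc 1 (k - 1), (j : ℝ) * φ (n - k + 1 + j))
    (hiv : 2 * φ (n / k) ≤ φ (n / k - 1) + φ ((n + k - 1) / k)) :
    (∑ j ∈ Finset.Icc 1 (k - 2), (j : ℝ) * φ (n - j)) +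
      (∑ j ∈ Finset.range (k - 1), ((k : ℝ) - 1 - j) * φ (n - k + 1 - j)) ≤ φ 1 := by
  have hk0 : 0 < k := by omega
  set m : ℕ := n / k with hm_def
  set M : ℕ := (n + k - 1) / k with hM_def
  set e : ℕ := n % k with he_def
  set R : ℝ := (e : ℝ) * ((k : ℝ) - e) with hR_def
  have hkm : k * m + e = n := Nat.div_add_mod n k
  have hek : e < k := Nat.mod_lt _ hk0
  have hm2 : 2 ≤ m := (Nat.le_div_iff_mul_le hk0).2 (by omega)
  have hMcase : (e = 0 ∧ M = m) ∨ (e ≠ 0 ∧ M = m + 1) := by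
    rcases Nat.eq_zero_or_pos e with h0 | h1
    · left
      refine ⟨h0, ?_⟩
      have h2 : n + k - 1 = k*m + (k-1) := by omega
      rw [hM_def, h2, Nat.mul_add_div hk0, Nat.div_eq_of_lt (by omega), add_zero]
    · right
      refine ⟨by omega, ?_⟩
      have hkm1 : k*(m+1) = k*m + k := by ring
      have h2 : n + k - 1 = k*(m+1) + (e-1) := by omega
      rw [hM_def, h2, Nat.mul_add_div hk0, Nat.div_eq_of_lt (by omega), add_zero]
  have hkm2 : k * 2 ≤ k * m := Nat.mul_le_mul_left k hm2
  have hmkn : m + 2*k ≤ n + 2 := by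
    have h1 : k*(m + 2*k) ≤ k*(n+2) := by nlinarith
    exact Nat.le_of_mul_le_mul_left h1 hk0
  have hMkn : M + 2*k ≤ n + 2 := by
    rcases hMcase with ⟨h0, hM⟩ | ⟨h1, hM⟩
    · omega
    · have hn1 : 2*k + 1 ≤ n := by omega
      have h2 : k*(M + 2*k) ≤ k*(n+2) := by
        rw [hM]
        zify
        have hkmz : (k:ℤ)*m + e = n := by exact_mod_cast hkm
        have hz1 : (1:ℤ) ≤ e := by exact_mod_cast (by omega : 1 ≤ e)
        have hz2 : (2:ℤ)*k + 1 ≤ n := by exact_mod_cast hn1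
        have hz3 : (3:ℤ) ≤ k := by exact_mod_cast hk
        nlinarith [mul_nonneg (by linarith : (0:ℤ) ≤ (k:ℤ)-1) (by linarith : (0:ℤ) ≤ (n:ℤ)-2*k-1)]
      exact Nat.le_of_mul_le_mul_left h2 hk0
  have hMm : m ≤ M ∧ M ≤ m + 1 := by rcases hMcase with ⟨_, h⟩ | ⟨_, h⟩ <;> omega
  have hRe0 : e = 0 → R = 0 := by
    intro hz
    rw [hR_def, hz]
    push_cast
    ring
  have hMe1 : e ≠ 0 → M = m + 1 := by
    intro hz
    rcases hMcase with ⟨h0, _⟩ | ⟨_, h⟩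
    · exact absurd h0 hz
    · exact h
  have hMe0 : e = 0 → M = m := by
    intro hz
    rcases hMcase with ⟨_, h⟩ | ⟨h0, _⟩
    · exact h
    · exact absurd hz h0
  have hkmR : (k:ℝ) * m + e = n := by exact_mod_cast hkm
  have hR0 : 0 ≤ R := by
    apply mul_nonneg (Nat.cast_nonneg e)
    have : (e:ℝ) < k := by exact_mod_cast hek
    linarith
  -- the functional identities
  have hgsum : ∑ i ∈ range (n+1), gc n k i * φ i
      = φ 1 - (∑ j ∈ Finset.Icc 1 (k - 2), (j : ℝ) * φ (n - j))
        - (∑ j ∈ Finset.range (k - 1), ((k : ℝ) - 1 - j) * φ (n - k + 1 - j)) := by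
    have hstep : ∀ i ∈ range (n+1), gc n k i * φ i
        = (if i = 1 then φ i else 0)
          - (if n + 2 ≤ i + k ∧ i + 1 ≤ n then ((n:ℝ) - i) * φ i else 0)
          - (if n + 3 ≤ i + 2*k ∧ i + k ≤ n + 1 then ((i:ℝ) + 2*k - n - 2) * φ i else 0) := by
      intro i _
      simp only [gc]
      split_ifs <;> ring
    rw [sum_congr rfl hstep, sum_sub_distrib, sum_sub_distrib]
    congr 1
    · congr 1
      · rw [Finset.sum_ite_eq' (range (n+1)) 1 φ, if_pos (by simp only [mem_range]; omega)]
      · rw [← sum_filter]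
        refine Finset.sum_nbij' (fun a => n - a) (fun b => n - b) ?_ ?_ ?_ ?_ ?_
        · intro a ha
          simp only [mem_filter, mem_range] at ha
          simp only [mem_Icc]
          omega
        · intro b hb
          simp only [mem_Icc] at hb
          simp only [mem_filter, mem_range]
          omega
        · intro a ha
          simp only [mem_filter, mem_range] at ha
          omega
        · intro b hb
          simp only [mem_Icc] at hb
          omega
        · intro a ha
          simp only [mem_filter, mem_range] at ha
          rw [show n - (n - a) = a by omega, Nat.cast_sub (by omega : a ≤ n)]
    · rw [← sum_filter]
      refine Finset.sum_nbij' (fun a => n - k + 1 - a) (fun b => n - k + 1 - b) ?_ ?_ ?_ ?_ ?_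
      · intro a ha
        simp only [mem_filter, mem_range] at ha
        simp only [mem_range]
        omega
      · intro b hb
        simp only [mem_range] at hb
        simp only [mem_filter, mem_range]
        omega
      · intro a ha
        simp only [mem_filter, mem_range] at ha
        omega
      · intro b hb
        simp only [mem_range] at hb
        omega
      · intro a ha
        simp only [mem_filter, mem_range] at ha
        have hc : ((n - k + 1 - a : ℕ):ℝ) = (n:ℝ) - k + 1 - a := by
          have h7 : (n - k + 1 - a) + a + k = n + 1 := by omega
          have h8 : ((n - k + 1 - a : ℕ):ℝ) + a + k = n + 1 := by exact_mod_cast h7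
          linarith
        rw [show n - k + 1 - (n - k + 1 - a) = a by omega, hc]
        ring
  have hhsum : ∑ i ∈ range (n+1), hc n k i * φ i
      = φ 0 - ∑ j ∈ Finset.Icc 1 (k - 1), (j : ℝ) * φ (n - k + 1 + j) := by
    have hstep : ∀ i ∈ range (n+1), hc n k i * φ i
        = (if i = 0 then φ i else 0)
          - (if n + 2 ≤ i + k ∧ i ≤ n then ((i:ℝ) + k - n - 1) * φ i else 0) := by
      intro i _
      simp only [hc]
      split_ifs <;> ring
    rw [sum_congr rfl hstep, sum_sub_distrib]
    congr 1
    · rw [Finset.sum_ite_eq' (range (n+1)) 0 φ, if_pos (by simp only [mem_range]; omega)]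
    · rw [← sum_filter]
      refine Finset.sum_nbij' (fun a => a - (n - k + 1)) (fun b => n - k + 1 + b) ?_ ?_ ?_ ?_ ?_
      · intro a ha
        simp only [mem_filter, mem_range] at ha
        simp only [mem_Icc]
        omega
      · intro b hb
        simp only [mem_Icc] at hb
        simp only [mem_filter, mem_range]
        omega
      · intro a ha
        simp only [mem_filter, mem_range] at ha
        omega
      · intro b hb
        simp only [mem_Icc] at hb
        omega
      · intro a ha
        simp only [mem_filter, mem_range] at ha
        have hc2 : ((a - (n - k + 1) : ℕ):ℝ) = (a:ℝ) + k - n - 1 := by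
          have h7 : (a - (n - k + 1)) + n + 1 = a + k := by omega
          have h8 : ((a - (n - k + 1) : ℕ):ℝ) + n + 1 = a + k := by exact_mod_cast h7
          linarith
        rw [show n - k + 1 + (a - (n - k + 1)) = a by omega, hc2]
  have hvsum : ∑ i ∈ range (n+1), vc m M i * φ i = φ (m-1) + φ M - 2 * φ m := by
    have hstep : ∀ i ∈ range (n+1), vc m M i * φ i
        = (if i = m-1 then φ i else 0) + (if i = M then φ i else 0)
          - 2 * (if i = m then φ i else 0) := by
      intro i _
      simp only [vc]
      have hiff : (i + 1 = m) ↔ (i = m - 1) := by omega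
      rw [if_congr hiff rfl rfl]
      split_ifs <;> ring
    rw [sum_congr rfl hstep]
    rw [sum_sub_distrib, sum_add_distrib, ← mul_sum]
    rw [Finset.sum_ite_eq' (range (n+1)) (m-1) φ, Finset.sum_ite_eq' (range (n+1)) M φ,
      Finset.sum_ite_eq' (range (n+1)) m φ]
    rw [if_pos (by simp [mem_range]; omega), if_pos (by simp [mem_range]; omega),
      if_pos (by simp [mem_range]; omega)]
  have hmean0 : ∑ i ∈ range (n+1), ((k:ℝ)*i - n) * φ i = 0 := by
    have hkne : (k:ℝ) ≠ 0 := by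
      have : (0:ℝ) < k := by exact_mod_cast hk0
      linarith
    have expand : ∑ i ∈ range (n+1), ((k:ℝ)*i - n) * φ i
        = (k:ℝ) * (∑ i ∈ range (n+1), (i:ℝ) * φ i) - (n:ℝ) * ∑ i ∈ range (n+1), φ i := by
      rw [Finset.mul_sum, Finset.mul_sum, ← Finset.sum_sub_distrib]
      apply sum_congr rfl
      intros
      ring
    rw [expand, hmean]
    field_simp
    ring
  have husum : ∑ i ∈ range (n+1), uc n k m M R i * φ i
      = 2*(n:ℝ)*((n:ℝ) - k) * (φ 1 - (∑ j ∈ Finset.Icc 1 (k - 2), (j : ℝ) * φ (n - j))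
        - (∑ j ∈ Finset.range (k - 1), ((k : ℝ) - 1 - j) * φ (n - k + 1 - j)))
        - 2*R*(φ (m-1) + φ M - 2 * φ m) := by
    have hstep : ∀ i ∈ range (n+1), uc n k m M R i * φ i
        = 2*(n:ℝ)*((n:ℝ) - k) * (gc n k i * φ i) + 4*(k:ℝ)*(((k:ℝ)*i - n) * φ i)
          + 4*(k:ℝ)*n * (hc n k i * φ i) - 2*R * (vc m M i * φ i) := by
      intro i _
      simp only [uc]
      ring
    rw [sum_congr rfl hstep]
    rw [sum_sub_distrib, sum_add_distrib, sum_add_distrib, ← mul_sum, ← mul_sum, ← mul_sum,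
      ← mul_sum]
    rw [hgsum, hhsum, hvsum, hmean0, heq]
    ring
  -- partial sums equal the closed form
  have hu0 : uc n k m M R 0 = 0 := by
    simp only [uc, gc, hc, vc]
    split_ifs <;> first | contradiction | omega | (push_cast; ring1)
  have hW : ∀ i ≤ n, ∑ j ∈ range (i+1), uc n k m M R j = Wex n k m R i := by
    intro i
    induction i with
    | zero =>
        intro _
        rw [sum_range_one, hu0]
        simp [Wex]
    | succ i ih =>
        intro hsucc
        rw [sum_range_succ, ih (by omega)]
        rcases Nat.eq_zero_or_pos i with rfl | hi1
        · -- case A : i = 0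
          rw [show Wex n k m R 0 = 0 by simp [Wex], zero_add]
          simp only [uc, gc, hc, vc, Wex]
          simp only [if_true]
          rw [
            if_neg (show ¬(n+2 ≤ 0+1+k ∧ 0+1+1 ≤ n) by omega),
            if_neg (show ¬(n+3 ≤ 0+1+2*k ∧ 0+1+k ≤ n+1) by omega),
            if_neg (show ¬(0+1 = 0) by omega),
            if_neg (show ¬(0+1 = 0) by omega),
            if_neg (show ¬(n+2 ≤ 0+1+k ∧ 0+1 ≤ n) by omega),
            if_neg (show ¬(0+1 = M) by omega),
            if_neg (show ¬(0+1 = m) by omega),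
            if_neg (show ¬(0+1 = m) by omega),
            if_pos (show 0+1+2*k ≤ n+2 by omega)]
          split_ifs <;> first | omega | (push_cast; ring1)
        by_cases hB : i + 1 + 2*k ≤ n + 2
        · -- case B : both in region I
          simp only [uc, gc, hc, vc, Wex]
          rw [if_neg (show ¬(i = 0) by omega),
            if_pos (show i + 2*k ≤ n + 2 by omega),
            if_neg (show ¬(i + 1 = 0) by omega),
            if_neg (show ¬(i + 1 = 0) by omega),
            if_pos (show i + 1 + 2*k ≤ n + 2 from hB),
            if_neg (show ¬(i + 1 = 1) by omega),
            if_neg (show ¬(n + 2 ≤ i + 1 + k ∧ i + 1 + 1 ≤ n) by omega),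
            if_neg (show ¬(n + 3 ≤ i + 1 + 2*k ∧ i + 1 + k ≤ n + 1) by omega),
            if_neg (show ¬(n + 2 ≤ i + 1 + k ∧ i + 1 ≤ n) by omega)]
          split_ifs <;>
            first
            | contradiction
            | omega
            | (push_cast; ring1)
            | ((have hz : e = 0 := by
                  by_contra hzz
                  have hM1 := hMe1 hzz
                  omega);
               rw [hRe0 hz]; push_cast; ring1)
        · by_cases hC1 : i + 2*k = n + 2
          · -- case C1 : boundary region I → II.a
            simp only [uc, gc, hc, vc, Wex]
            rw [if_neg (show ¬(i = 0) by omega),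
              if_pos (show i + 2*k ≤ n + 2 by omega),
              if_neg (show ¬(i + 1 = 0) by omega),
              if_neg (show ¬(i + 1 = 0) by omega),
              if_neg (show ¬(i + 1 + 2*k ≤ n + 2) by omega),
              if_pos (show i + 1 + k ≤ n + 1 by omega),
              if_neg (show ¬(i + 1 = 1) by omega),
              if_neg (show ¬(n + 2 ≤ i + 1 + k ∧ i + 1 + 1 ≤ n) by omega),
              if_pos (show n + 3 ≤ i + 1 + 2*k ∧ i + 1 + k ≤ n + 1 by omega),
              if_neg (show ¬(n + 2 ≤ i + 1 + k ∧ i + 1 ≤ n) by omega),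
              if_neg (show ¬(i + 1 = m) by omega),
              if_neg (show ¬(i + 1 = m) by omega),
              if_neg (show ¬(i + 1 + 1 = m) by omega),
              if_neg (show ¬(i + 1 = M) by omega)]
            by_cases h2 : i = m
            · rw [if_pos h2]
              have hz : e = 0 := by
                by_contra hzz
                have hmz : (m:ℤ) = (n:ℤ) + 2 - 2*k := by
                  have h5 : m + 2*k = n + 2 := by omega
                  have h6 : (m:ℤ) + 2*k = (n:ℤ) + 2 := by exact_mod_cast h5
                  linarith
                have hqz : (k:ℤ)*m + e = n := by exact_mod_cast hkm
                have hez : (1:ℤ) ≤ e := by exact_mod_cast (show 1 ≤ e by omega)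
                have hkz : (3:ℤ) ≤ k := by exact_mod_cast hk
                have hnz : 2*(k:ℤ) ≤ n := by exact_mod_cast hn
                rw [hmz] at hqz
                nlinarith [mul_nonneg (by linarith : (0:ℤ) ≤ (k:ℤ) - 1)
                  (by linarith : (0:ℤ) ≤ (n:ℤ) - 2*k)]
              rw [hRe0 hz]
              have hC1R : (i:ℝ) + 2*k = (n:ℝ) + 2 := by exact_mod_cast hC1
              push_cast
              linear_combination ((i:ℝ)*((n:ℝ)^2 - (n:ℝ)*k)
                + ((n:ℝ)*k - (n:ℝ)^2 + 3*(n:ℝ)^2*k - (n:ℝ)^3 - 2*(n:ℝ)*(k:ℝ)^2)) * hC1R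
            · rw [if_neg h2]
              have hC1R : (i:ℝ) + 2*k = (n:ℝ) + 2 := by exact_mod_cast hC1
              push_cast
              linear_combination ((i:ℝ)*((n:ℝ)^2 - (n:ℝ)*k)
                + ((n:ℝ)*k - (n:ℝ)^2 + 3*(n:ℝ)^2*k - (n:ℝ)^3 - 2*(n:ℝ)*(k:ℝ)^2)) * hC1R
          · by_cases hC2 : i + 1 + k ≤ n + 1
            · -- case C2 : both in region II.a
              simp only [uc, gc, hc, vc, Wex]
              rw [if_neg (show ¬(i = 0) by omega),
                if_neg (show ¬(i + 2*k ≤ n + 2) by omega),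
                if_pos (show i + k ≤ n + 1 by omega),
                if_neg (show ¬(i + 1 = 0) by omega),
                if_neg (show ¬(i + 1 = 0) by omega),
                if_neg (show ¬(i + 1 + 2*k ≤ n + 2) by omega),
                if_pos (show i + 1 + k ≤ n + 1 from hC2),
                if_neg (show ¬(i + 1 = 1) by omega),
                if_neg (show ¬(n + 2 ≤ i + 1 + k ∧ i + 1 + 1 ≤ n) by omega),
                if_pos (show n + 3 ≤ i + 1 + 2*k ∧ i + 1 + k ≤ n + 1 by omega),
                if_neg (show ¬(n + 2 ≤ i + 1 + k ∧ i + 1 ≤ n) by omega),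
                if_neg (show ¬(i + 1 + 1 = m) by omega),
                if_neg (show ¬(i + 1 = M) by omega),
                if_neg (show ¬(i + 1 = m) by omega)]
              push_cast
              ring
            · by_cases hD1 : i + k = n + 1
              · -- case D1 : boundary II.a → II.b
                simp only [uc, gc, hc, vc, Wex]
                rw [if_neg (show ¬(i = 0) by omega),
                  if_neg (show ¬(i + 2*k ≤ n + 2) by omega),
                  if_pos (show i + k ≤ n + 1 by omega),
                  if_neg (show ¬(i + 1 = 0) by omega),
                  if_neg (show ¬(i + 1 = 0) by omega),
                  if_neg (show ¬(i + 1 + 2*k ≤ n + 2) by omega),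
                  if_neg (show ¬(i + 1 + k ≤ n + 1) by omega),
                  if_neg (show ¬(i + 1 = 1) by omega),
                  if_pos (show n + 2 ≤ i + 1 + k ∧ i + 1 + 1 ≤ n by omega),
                  if_neg (show ¬(n + 3 ≤ i + 1 + 2*k ∧ i + 1 + k ≤ n + 1) by omega),
                  if_pos (show n + 2 ≤ i + 1 + k ∧ i + 1 ≤ n by omega),
                  if_neg (show ¬(i + 1 + 1 = m) by omega),
                  if_neg (show ¬(i + 1 = M) by omega),
                  if_neg (show ¬(i + 1 = m) by omega)]
                have hD1R : (i:ℝ) + k = (n:ℝ) + 1 := by exact_mod_cast hD1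
                push_cast
                linear_combination ((i:ℝ)*(-2*(n:ℝ)^2 + 4*(n:ℝ)*k)
                  + (-6*(n:ℝ)^2*k + 2*(n:ℝ)^3 + 4*(n:ℝ)*(k:ℝ)^2)) * hD1R
              · by_cases hD2 : i + 1 + 1 ≤ n
                · -- case D2 : both in region II.b, i+1 ≤ n-1
                  simp only [uc, gc, hc, vc, Wex]
                  rw [if_neg (show ¬(i = 0) by omega),
                    if_neg (show ¬(i + 2*k ≤ n + 2) by omega),
                    if_neg (show ¬(i + k ≤ n + 1) by omega),
                    if_neg (show ¬(i + 1 = 0) by omega),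
                    if_neg (show ¬(i + 1 = 0) by omega),
                    if_neg (show ¬(i + 1 + 2*k ≤ n + 2) by omega),
                    if_neg (show ¬(i + 1 + k ≤ n + 1) by omega),
                    if_neg (show ¬(i + 1 = 1) by omega),
                    if_pos (show n + 2 ≤ i + 1 + k ∧ i + 1 + 1 ≤ n by omega),
                    if_neg (show ¬(n + 3 ≤ i + 1 + 2*k ∧ i + 1 + k ≤ n + 1) by omega),
                    if_pos (show n + 2 ≤ i + 1 + k ∧ i + 1 ≤ n by omega),
                    if_neg (show ¬(i + 1 + 1 = m) by omega),
                    if_neg (show ¬(i + 1 = M) by omega),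
                    if_neg (show ¬(i + 1 = m) by omega)]
                  push_cast
                  ring
                · -- case D3 : i+1 = n
                  simp only [uc, gc, hc, vc, Wex]
                  rw [if_neg (show ¬(i = 0) by omega),
                    if_neg (show ¬(i + 2*k ≤ n + 2) by omega),
                    if_neg (show ¬(i + k ≤ n + 1) by omega),
                    if_neg (show ¬(i + 1 = 0) by omega),
                    if_neg (show ¬(i + 1 = 0) by omega),
                    if_neg (show ¬(i + 1 + 2*k ≤ n + 2) by omega),
                    if_neg (show ¬(i + 1 + k ≤ n + 1) by omega),
                    if_neg (show ¬(i + 1 = 1) by omega),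
                    if_neg (show ¬(n + 2 ≤ i + 1 + k ∧ i + 1 + 1 ≤ n) by omega),
                    if_neg (show ¬(n + 3 ≤ i + 1 + 2*k ∧ i + 1 + k ≤ n + 1) by omega),
                    if_pos (show n + 2 ≤ i + 1 + k ∧ i + 1 ≤ n by omega),
                    if_neg (show ¬(i + 1 + 1 = m) by omega),
                    if_neg (show ¬(i + 1 = M) by omega),
                    if_neg (show ¬(i + 1 = m) by omega)]
                  have hn3 : n = i + 1 := by omega
                  subst hn3
                  push_cast
                  ring
  have hWpos : ∀ i < n, 0 ≤ Wex n k m R i := by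
    intro i hi
    rcases Nat.eq_zero_or_pos i with rfl | hi1
    · simp [Wex]
    by_cases hI : i + 2*k ≤ n + 2
    · -- region I
      rw [Wex, if_neg (by omega), if_pos hI]
      by_cases h1 : i + 1 = m
      · rw [if_pos h1, if_neg (by omega)]
        have h9 : (m:ℝ) = (i:ℝ) + 1 := by exact_mod_cast h1.symm
        have key : (n:ℝ) = (k:ℝ)*((i:ℝ)+1) + e := by rw [← h9]; linarith [hkmR]
        rw [hR_def, key]
        nlinarith [sq_nonneg (e:ℝ)]
      · by_cases h2 : i = m
        · rw [if_neg h1, if_pos h2]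
          have h9 : (m:ℝ) = (i:ℝ) := by exact_mod_cast h2.symm
          have key : (n:ℝ) = (k:ℝ)*(i:ℝ) + e := by rw [← h9]; linarith [hkmR]
          rw [hR_def, key]
          nlinarith [sq_nonneg (e:ℝ)]
        · rw [if_neg h1, if_neg h2, add_zero, sub_zero]
          rcases lt_or_ge i m with hlt | hge
          · have hnn : k*(i+1) ≤ k*m := Nat.mul_le_mul_left k (by omega)
            have h3 : ((k*(i+1) : ℕ):ℝ) ≤ ((k*m : ℕ):ℝ) := by exact_mod_cast hnn
            push_cast at h3
            have f1 : 0 ≤ (n:ℝ) - k*((i:ℝ)+1) := by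
              nlinarith [hkmR, (by exact_mod_cast Nat.zero_le e : (0:ℝ) ≤ (e:ℝ))]
            have f2 : 0 ≤ (n:ℝ) - k*i := by
              have hk0R : (0:ℝ) < k := by exact_mod_cast hk0
              nlinarith [f1]
            nlinarith [mul_nonneg f2 f1]
          · have hge1 : m + 1 ≤ i := by omega
            have hnn : k*(m+1) ≤ k*i := Nat.mul_le_mul_left k hge1
            have h3 : ((k*(m+1) : ℕ):ℝ) ≤ ((k*i : ℕ):ℝ) := by exact_mod_cast hnn
            push_cast at h3
            have heR : (e:ℝ) < k := by exact_mod_cast hek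
            have f1 : (n:ℝ) - k*i ≤ 0 := by nlinarith [hkmR]
            have f2 : (n:ℝ) - k*((i:ℝ)+1) ≤ 0 := by
              have hk0R : (0:ℝ) < k := by exact_mod_cast hk0
              nlinarith [f1]
            nlinarith [mul_nonneg (by linarith : (0:ℝ) ≤ (k:ℝ)*i - n)
              (by linarith : (0:ℝ) ≤ (k:ℝ)*((i:ℝ)+1) - n)]
    · by_cases hII : i + k ≤ n + 1
      · -- region II.a : polynomial positivity
        rw [Wex, if_neg (by omega), if_neg hI, if_pos hII]
        obtain ⟨p, hp⟩ : ∃ p, n = 2*k + p := ⟨n - 2*k, by omega⟩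
        obtain ⟨a1, ha1⟩ : ∃ a1, i = p + 3 + a1 := ⟨i - (p + 3), by omega⟩
        obtain ⟨b, hb⟩ : ∃ b, k = a1 + b + 2 := ⟨k - a1 - 2, by omega⟩
        have e1 : (n:ℝ) = 2*(k:ℝ) + p := by exact_mod_cast hp
        have e3 : (i:ℝ) = (p:ℝ) + 3 + a1 := by exact_mod_cast ha1
        have e2 : (k:ℝ) = (a1:ℝ) + b + 2 := by exact_mod_cast hb
        rw [e1, e3, e2]
        have hE : (0:ℝ) ≤ 2*(p:ℝ)*a1 + 3*(p:ℝ)*(a1:ℝ)^2 + (p:ℝ)*(a1:ℝ)^3 + 12*(p:ℝ)*b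
            + 15*(p:ℝ)*b*a1 + 5*(p:ℝ)*b*(a1:ℝ)^2 + 6*(p:ℝ)*(b:ℝ)^2 + 4*(p:ℝ)*(b:ℝ)^2*a1
            + (p:ℝ)^2*a1 + (p:ℝ)^2*(a1:ℝ)^2 + 4*(p:ℝ)^2*b + 4*(p:ℝ)^2*b*a1
            + 2*(p:ℝ)^2*(b:ℝ)^2 := by positivity
        nlinarith [hE]
      · -- region II.b
        rw [Wex, if_neg (by omega), if_neg hI, if_neg hII]
        have f1 : (0:ℝ) ≤ (n:ℝ) - 2*k := by
          have h5 : ((2*k:ℕ):ℝ) ≤ n := by exact_mod_cast hn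
          push_cast at h5
          linarith
        have f2 : (0:ℝ) ≤ (n:ℝ) - k := by
          have h5 : ((k:ℕ):ℝ) ≤ n := by exact_mod_cast (by omega : k ≤ n)
          linarith
        have f3 : (0:ℝ) ≤ (n:ℝ) - i := by
          have h5 : ((i:ℕ):ℝ) ≤ n := by exact_mod_cast (by omega : i ≤ n)
          linarith
        have f4 : (0:ℝ) ≤ (n:ℝ) - i - 1 := by
          have h5 : ((i+1:ℕ):ℝ) ≤ n := by exact_mod_cast (by omega : i + 1 ≤ n)
          push_cast at h5
          linarith
        exact mul_nonneg (mul_nonneg (mul_nonneg f1 f2) f3) f4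
  have hWn : Wex n k m R n = 0 := by
    rw [Wex, if_neg (by omega), if_neg (by omega), if_neg (by omega)]
    ring
  -- Abel: the certificate sum is nonnegative
  have hpos : 0 ≤ ∑ i ∈ range (n+1), uc n k m M R i * φ i := by
    rw [abel_sum]
    apply add_nonneg
    · apply Finset.sum_nonneg
      intro i hi
      rcases Nat.eq_zero_or_pos i with h0 | h1
      · subst h0
        rw [hW 0 (by omega)]
        simp [Wex]
      · apply mul_nonneg
        · rw [hW i (by simp at hi; omega)]
          exact hWpos i (by simpa using hi)
        · have := hmono i (i+1) h1 (by omega) (by simp at hi; omega)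
          linarith
    · rw [hW n le_rfl, hWn, zero_mul]
  -- conclude
  have hhiv : 0 ≤ φ (m-1) + φ M - 2 * φ m := by linarith [hiv]
  have hnk : 0 < 2*(n:ℝ)*((n:ℝ) - k) := by
    have h1 : (k:ℝ) < n := by exact_mod_cast (by omega : k < n)
    have h2 : (0:ℝ) < n := by exact_mod_cast (by omega : 0 < n)
    nlinarith
  rw [husum] at hpos
  nlinarith [mul_nonneg hR0 hhiv]
end

section
/- Let p be a prime and m = p^ℓ a prime power, and let z_1,…,z_k ∈ ℤ_m. Then over 𝔽_p the identity Σ_{a_1,…,a_k ∈ {0,…,m−1}, a_1+…+a_k ≤ m−1} (−1)^{a_1+…+a_k} C(z_1,a_1)⋯C(z_k,a_k) = 1 if z_1 + … + z_k = 0 in ℤ_m, and = 0 otherwise, holds, where C(z,a) denotes the binomial coefficient binom(z,a) reduced mod p (well-defined on ℤ_m since binom(z,a) ≡ binom(z',a) mod p whenever z ≡ z' mod m and 0 ≤ a ≤ m−1). -/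
open Finset

/-- Multivariate Vandermonde identity. -/
lemma vand_aux {ι : Type*} [DecidableEq ι] (Z : ι → ℕ) (s : Finset ι) (n : ℕ) :
    ∑ f ∈ s.piAntidiag n, ∏ i ∈ s, (Z i).choose (f i) = (∑ i ∈ s, Z i).choose n := by
  induction s using Finset.cons_induction generalizing n with
  | empty =>
    rw [Finset.piAntidiag_empty]
    split_ifs with h
    · simp [h]
    · simp [Nat.choose_eq_zero_of_lt (Nat.pos_of_ne_zero h)]
  | cons i s hi ih =>
    rw [Finset.piAntidiag_cons hi, Finset.sum_disjiUnion, Finset.sum_cons, Nat.add_choose_eq]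
    refine Finset.sum_congr rfl ?_
    rintro ⟨a, b⟩ hab
    rw [Finset.sum_map]
    have key : ∀ g ∈ s.piAntidiag b,
        ∏ j ∈ Finset.cons i s hi,
          (Z j).choose ((addRightEmbedding fun t => if t = i then a else 0) g j)
          = (Z i).choose a * ∏ j ∈ s, (Z j).choose (g j) := by
      intro g hg
      rw [Finset.mem_piAntidiag] at hg
      have hgi : g i = 0 := by
        by_contra h
        exact hi (hg.2 i h)
      rw [Finset.prod_cons]
      congr 1
      · simp [addRightEmbedding_apply, hgi]
      · refine Finset.prod_congr rfl fun j hj => ?_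
        have hji : j ≠ i := fun h => hi (h ▸ hj)
        simp [addRightEmbedding_apply, hji]
    rw [Finset.sum_congr rfl key, ← Finset.mul_sum, ih]

/-- Alternating partial sum of binomial coefficients. -/
lemma alt_sum_aux (R : Type*) [CommRing R] (M : ℕ) : ∀ n : ℕ,
    ∑ s ∈ Finset.range (n + 1), (-1 : R) ^ s * ((M + 1).choose s : R)
      = (-1) ^ n * (M.choose n : R)
  | 0 => by simp
  | (n + 1) => by
    rw [Finset.sum_range_succ, alt_sum_aux R M n, Nat.choose_succ_succ (M) (n)]
    push_cast
    ring

lemma digit_aux (p l i n : ℕ) (hp : 0 < p) (hil : i < l) :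
    n / p ^ i % p = (n % p ^ l) / p ^ i % p := by
  conv_lhs => rw [← Nat.div_add_mod n (p ^ l), Nat.add_comm]
  have h1 : p ^ l * (n / p ^ l) = p ^ i * (p ^ (l - i) * (n / p ^ l)) := by
    rw [← mul_assoc, ← pow_add]
    congr 2
    omega
  rw [h1, Nat.add_mul_div_left _ _ (pow_pos hp i)]
  have h2 : p ^ (l - i) * (n / p ^ l) = p * (p ^ (l - i - 1) * (n / p ^ l)) := by
    rw [← mul_assoc, ← pow_succ']
    congr 2
    omega
  rw [h2, Nat.add_mul_mod_self_left]

/-- `choose n s` mod `p` only depends on `n` mod `p ^ l` for `s < p ^ l`. -/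
lemma lucas_aux (p : ℕ) [hp : Fact p.Prime] (l n s : ℕ) (hs : s < p ^ l) :
    ((n.choose s : ℕ) : ZMod p) = (((n % p ^ l).choose s : ℕ) : ZMod p) := by
  have h1 := Choose.choose_modEq_choose_mul_prod_range_choose (p := p) (n := n) (k := s) l
  have h2 := Choose.choose_modEq_choose_mul_prod_range_choose (p := p) (n := n % p ^ l)
    (k := s) l
  have hsl : s / p ^ l = 0 := Nat.div_eq_of_lt hs
  have hnl : (n % p ^ l) / p ^ l = 0 := Nat.div_eq_of_lt (Nat.mod_lt _ (pow_pos hp.out.pos l))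
  have hd : ∀ i ∈ Finset.range l, n / p ^ i % p = (n % p ^ l) / p ^ i % p := by
    intro i hi
    exact digit_aux p l i n hp.out.pos (Finset.mem_range.mp hi)
  have e1 : ((n.choose s : ℤ) : ZMod p)
      = ((((n / p ^ l).choose (s / p ^ l) * ∏ i ∈ Finset.range l,
          (n / p ^ i % p).choose (s / p ^ i % p) : ℕ) : ℤ) : ZMod p) := by
    rw [ZMod.intCast_eq_intCast_iff]
    exact_mod_cast h1
  have e2 : (((n % p ^ l).choose s : ℤ) : ZMod p)
      = (((((n % p ^ l) / p ^ l).choose (s / p ^ l) * ∏ i ∈ Finset.range l,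
          ((n % p ^ l) / p ^ i % p).choose (s / p ^ i % p) : ℕ) : ℤ) : ZMod p) := by
    rw [ZMod.intCast_eq_intCast_iff]
    exact_mod_cast h2
  have e3 : (n / p ^ l).choose (s / p ^ l) * ∏ i ∈ Finset.range l,
        (n / p ^ i % p).choose (s / p ^ i % p)
      = ((n % p ^ l) / p ^ l).choose (s / p ^ l) * ∏ i ∈ Finset.range l,
        ((n % p ^ l) / p ^ i % p).choose (s / p ^ i % p) := by
    rw [hsl, hnl, Nat.choose_zero_right, Nat.choose_zero_right]
    congr 1
    exact Finset.prod_congr rfl fun i hi => by rw [hd i hi]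
  have e4 : ((n.choose s : ℤ) : ZMod p) = (((n % p ^ l).choose s : ℤ) : ZMod p) := by
    rw [e1, e3, ← e2]
  exact_mod_cast e4

/-- Reindex tuple sums to `piAntidiag`. -/
lemma reindex_aux (m k s : ℕ) (hs : s < m) (Z : Fin k → ℕ) :
    ∑ a ∈ Finset.univ.filter (fun a : Fin k → Fin m => ∑ i, (a i : ℕ) = s),
      ∏ i, (Z i).choose (a i)
      = ∑ f ∈ Finset.piAntidiag (Finset.univ : Finset (Fin k)) s, ∏ i, (Z i).choose (f i) := by
  have hm : 0 < m := lt_of_le_of_lt (Nat.zero_le s) hs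
  refine Finset.sum_bij' (fun a _ => fun i => (a i : ℕ))
    (fun f _ => fun i => ⟨f i % m, Nat.mod_lt _ hm⟩) ?_ ?_ ?_ ?_ ?_
  · intro a ha
    rw [Finset.mem_filter] at ha
    rw [Finset.mem_piAntidiag]
    exact ⟨ha.2, fun i _ => Finset.mem_univ i⟩
  · intro f hf
    rw [Finset.mem_piAntidiag] at hf
    have hfi : ∀ i, f i < m := by
      intro i
      calc f i ≤ ∑ j, f j := Finset.single_le_sum (fun j _ => Nat.zero_le _) (Finset.mem_univ i)
        _ = s := hf.1
        _ < m := hs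
    rw [Finset.mem_filter]
    refine ⟨Finset.mem_univ _, ?_⟩
    refine Eq.trans ?_ hf.1
    exact Finset.sum_congr rfl fun i _ => Nat.mod_eq_of_lt (hfi i)
  · intro a ha
    funext i
    exact Fin.ext (Nat.mod_eq_of_lt (a i).isLt)
  · intro f hf
    rw [Finset.mem_piAntidiag] at hf
    have hfi : ∀ i, f i < m := by
      intro i
      calc f i ≤ ∑ j, f j := Finset.single_le_sum (fun j _ => Nat.zero_le _) (Finset.mem_univ i)
        _ = s := hf.1
        _ < m := hs
    funext i
    exact Nat.mod_eq_of_lt (hfi i)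
  · intro a ha
    rfl

theorem stmt17 (p : ℕ) (hp : p.Prime) (l : ℕ) (hl : 1 ≤ l) (k : ℕ) (hk : 1 ≤ k)
    (z : Fin k → ZMod (p ^ l)) :
    (∑ a ∈ Finset.univ.filter
        (fun a : Fin k → Fin (p ^ l) => ∑ i, (a i : ℕ) ≤ p ^ l - 1),
      (-1 : ZMod p) ^ (∑ i, (a i : ℕ)) * ∏ i, ((z i).val.choose (a i) : ZMod p)) =
      if (∑ i, z i) = 0 then 1 else 0 := by
  haveI : Fact p.Prime := ⟨hp⟩
  have hm1 : 1 < p ^ l := Nat.one_lt_pow (by omega) hp.one_lt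
  haveI : NeZero (p ^ l) := ⟨by omega⟩
  -- Step A: rewrite LHS as alternating sum of binomials of N
  have hA : (∑ a ∈ Finset.univ.filter
        (fun a : Fin k → Fin (p ^ l) => ∑ i, (a i : ℕ) ≤ p ^ l - 1),
      (-1 : ZMod p) ^ (∑ i, (a i : ℕ)) * ∏ i, ((z i).val.choose (a i) : ZMod p)) =
      ∑ s ∈ Finset.range (p ^ l),
        (-1 : ZMod p) ^ s * (((∑ i, (z i).val).choose s : ℕ) : ZMod p) := by
    have hmaps : ∀ a ∈ Finset.univ.filter
        (fun a : Fin k → Fin (p ^ l) => ∑ i, (a i : ℕ) ≤ p ^ l - 1),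
        (∑ i, (a i : ℕ)) ∈ Finset.range (p ^ l) := by
      intro a ha
      rw [Finset.mem_filter] at ha
      rw [Finset.mem_range]
      omega
    rw [← Finset.sum_fiberwise_of_maps_to hmaps]
    refine Finset.sum_congr rfl fun s hs => ?_
    rw [Finset.mem_range] at hs
    have hset : (Finset.univ.filter
          (fun a : Fin k → Fin (p ^ l) => ∑ i, (a i : ℕ) ≤ p ^ l - 1)).filter
        (fun a => ∑ i, (a i : ℕ) = s)
        = Finset.univ.filter (fun a : Fin k → Fin (p ^ l) => ∑ i, (a i : ℕ) = s) := by
      rw [Finset.filter_filter]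
      refine Finset.filter_congr fun a _ => ?_
      constructor
      · rintro ⟨_, h⟩; exact h
      · rintro h; exact ⟨by omega, h⟩
    rw [hset]
    have hterm : ∀ a ∈ Finset.univ.filter
        (fun a : Fin k → Fin (p ^ l) => ∑ i, (a i : ℕ) = s),
        (-1 : ZMod p) ^ (∑ i, (a i : ℕ)) * ∏ i, ((z i).val.choose (a i) : ZMod p)
        = (-1 : ZMod p) ^ s * ∏ i, ((z i).val.choose (a i) : ZMod p) := by
      intro a ha
      rw [Finset.mem_filter] at ha
      rw [ha.2]
    rw [Finset.sum_congr rfl hterm, ← Finset.mul_sum]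
    congr 1
    have : ∀ a : Fin k → Fin (p ^ l),
        (∏ i, ((z i).val.choose (a i) : ZMod p))
          = ((∏ i, (z i).val.choose (a i) : ℕ) : ZMod p) := by
      intro a; push_cast; rfl
    rw [Finset.sum_congr rfl fun a _ => this a]
    have hc2 : ∑ a ∈ Finset.univ.filter
          (fun a : Fin k → Fin (p ^ l) => ∑ i, (a i : ℕ) = s),
        ((∏ i, (z i).val.choose (a i) : ℕ) : ZMod p)
        = ((∑ a ∈ Finset.univ.filter
            (fun a : Fin k → Fin (p ^ l) => ∑ i, (a i : ℕ) = s),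
          ∏ i, (z i).val.choose (a i) : ℕ) : ZMod p) := by
      push_cast
      rfl
    rw [hc2, reindex_aux (p ^ l) k s hs (fun i => (z i).val), vand_aux]
  rw [hA]
  -- relate the condition with divisibility
  have hcast : (∑ i, z i) = (((∑ i, (z i).val : ℕ) : ZMod (p ^ l))) := by
    rw [Nat.cast_sum]
    refine Finset.sum_congr rfl fun i _ => ?_
    rw [ZMod.natCast_val, ZMod.cast_id]
  rcases Nat.eq_zero_or_pos (∑ i, (z i).val) with hN0 | hNpos
  · -- all values zero
    have hz : (∑ i, z i) = 0 := by
      rw [hcast, hN0, Nat.cast_zero]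
    rw [if_pos hz, hN0]
    rw [Finset.sum_eq_single 0]
    · simp
    · intro s hs hs0
      cases s with
      | zero => exact absurd rfl hs0
      | succ t => simp [Nat.choose]
    · intro h
      exact absurd (Finset.mem_range.mpr (by omega)) h
  · obtain ⟨M, hNM⟩ : ∃ M, ∑ i, (z i).val = M + 1 := ⟨(∑ i, (z i).val) - 1, by omega⟩
    rw [hNM]
    have hrange : Finset.range (p ^ l) = Finset.range ((p ^ l - 1) + 1) := by
      congr 1; omega
    rw [hrange, alt_sum_aux]
    have hsign : ((-1 : ZMod p)) ^ (p ^ l - 1) = 1 := by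
      rcases eq_or_ne p 2 with h2 | h2
      · subst h2
        have h1 : (-1 : ZMod 2) = 1 := CharTwo.neg_eq 1
        rw [h1, one_pow]
      · have hodd : Odd (p ^ l) := (hp.odd_of_ne_two h2).pow
        have heven : Even (p ^ l - 1) := Nat.Odd.sub_odd hodd odd_one
        exact heven.neg_one_pow
    rw [hsign, one_mul]
    rw [lucas_aux p l M (p ^ l - 1) (by omega)]
    by_cases hdvd : (∑ i, z i) = 0
    · rw [if_pos hdvd]
      have hd : p ^ l ∣ M + 1 := by
        rw [← hNM, ← ZMod.natCast_eq_zero_iff, ← hcast]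
        exact hdvd
      obtain ⟨q, hq⟩ := hd
      have hq0 : q ≠ 0 := by rintro rfl; omega
      obtain ⟨q', rfl⟩ := Nat.exists_eq_succ_of_ne_zero hq0
      rw [Nat.mul_succ] at hq
      have hM : M = p ^ l * q' + (p ^ l - 1) := by omega
      rw [hM, Nat.mul_add_mod, Nat.mod_eq_of_lt (by omega), Nat.choose_self, Nat.cast_one]
    · rw [if_neg hdvd]
      have hnd : ¬ p ^ l ∣ M + 1 := by
        rw [← hNM, ← ZMod.natCast_eq_zero_iff, ← hcast]
        exact hdvd
      have hr0 : (M + 1) % p ^ l ≠ 0 := fun h => hnd (Nat.dvd_of_mod_eq_zero h)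
      have hrlt : (M + 1) % p ^ l < p ^ l := Nat.mod_lt _ (by omega)
      have hdm := Nat.div_add_mod (M + 1) (p ^ l)
      have hM : M = p ^ l * ((M + 1) / p ^ l) + ((M + 1) % p ^ l - 1) := by omega
      have hMmod : M % p ^ l = (M + 1) % p ^ l - 1 := by
        conv_lhs => rw [hM]
        rw [Nat.mul_add_mod, Nat.mod_eq_of_lt (by omega)]
      rw [hMmod, Nat.choose_eq_zero_of_lt (by omega), Nat.cast_zero]
end

section
/- For integers m ≥ 2, k ≥ 3 and n ≥ 1, the number of n-tuples (a_1,…,a_n) ∈ {0,…,m−1}^n with a_1 + … + a_n ≤ n(m−1)/k is at most Γ_{m,k}^n, where Γ_{m,k} = min_{0<γ<1} (1 + γ + … + γ^{m−1}) / γ^{(m−1)/k}. -/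
theorem stmt18 (m k n : ℕ) (hm : 2 ≤ m) (hk : 3 ≤ k) (hn : 1 ≤ n)
    (γ : ℝ) (hγ0 : 0 < γ) (hγ1 : γ < 1)
    (hmin : ∀ γ' : ℝ, 0 < γ' → γ' < 1 →
      (∑ i ∈ Finset.range m, γ ^ i) / γ ^ (((m : ℝ) - 1) / k) ≤
        (∑ i ∈ Finset.range m, γ' ^ i) / γ' ^ (((m : ℝ) - 1) / k)) :
    ((Finset.univ.filter
        (fun a : Fin n → Fin m => k * ∑ i, (a i : ℕ) ≤ n * (m - 1))).card : ℝ) ≤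
      ((∑ i ∈ Finset.range m, γ ^ i) / γ ^ (((m : ℝ) - 1) / k)) ^ n := by
  set S := ∑ i ∈ Finset.range m, γ ^ i with hSdef
  set r : ℝ := ((m : ℝ) - 1) / k with hrdef
  have hk0 : (0:ℝ) < (k:ℝ) := by positivity
  have hm1 : (1:ℝ) ≤ (m:ℝ) := by exact_mod_cast Nat.one_le_of_lt hm
  have hc0 : 0 < γ ^ r := Real.rpow_pos_of_pos hγ0 r
  have hS0 : 0 < S := Finset.sum_pos (fun i _ => pow_pos hγ0 i)
    ⟨0, Finset.mem_range.2 (by omega)⟩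
  -- total sum over all tuples
  have htot : ∑ a : Fin n → Fin m, γ ^ (∑ i, (a i : ℕ)) = S ^ n := by
    have h1 : S = ∑ j : Fin m, γ ^ (j : ℕ) := (Fin.sum_univ_eq_sum_range _ m).symm
    rw [h1, ← Fin.prod_const n (∑ j : Fin m, γ ^ (j : ℕ)), Finset.prod_univ_sum (fun _ : Fin n => (Finset.univ : Finset (Fin m)))]
    rw [Fintype.piFinset_univ]
    exact Finset.sum_congr rfl fun a _ => by rw [← Finset.prod_pow_eq_pow_sum]
  -- lower bound on terms in the filtered set
  set c : ℝ := γ ^ ((n : ℝ) * r) with hcdef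
  have hmain : ((Finset.univ.filter
      (fun a : Fin n → Fin m => k * ∑ i, (a i : ℕ) ≤ n * (m - 1))).card : ℝ) * c ≤ S ^ n := by
    rw [← htot]
    calc ((Finset.univ.filter
        (fun a : Fin n → Fin m => k * ∑ i, (a i : ℕ) ≤ n * (m - 1))).card : ℝ) * c
        ≤ ∑ a ∈ (Finset.univ.filter
          (fun a : Fin n → Fin m => k * ∑ i, (a i : ℕ) ≤ n * (m - 1))),
            γ ^ (∑ i, (a i : ℕ)) := by
          rw [← nsmul_eq_mul]
          apply Finset.card_nsmul_le_sum
          intro a ha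
          have hle : k * ∑ i, (a i : ℕ) ≤ n * (m - 1) := (Finset.mem_filter.mp ha).2
          have hcast : ((∑ i, (a i : ℕ) : ℕ) : ℝ) ≤ (n : ℝ) * r := by
            have h2 : ((k : ℝ)) * ((∑ i, (a i : ℕ) : ℕ) : ℝ) ≤ (n : ℝ) * ((m : ℝ) - 1) := by
              have h3 : ((k * ∑ i, (a i : ℕ) : ℕ) : ℝ) ≤ ((n * (m - 1) : ℕ) : ℝ) :=
                Nat.cast_le.mpr hle
              push_cast [Nat.cast_sub (by omega : 1 ≤ m)] at h3
              push_cast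
              linarith
            rw [hrdef, mul_div_assoc', le_div_iff₀ hk0]
            push_cast at h2 ⊢
            nlinarith [h2]
          calc c = γ ^ ((n : ℝ) * r) := rfl
            _ ≤ γ ^ (((∑ i, (a i : ℕ) : ℕ) : ℝ)) :=
                Real.rpow_le_rpow_of_exponent_ge hγ0 hγ1.le hcast
            _ = γ ^ (∑ i, (a i : ℕ)) := Real.rpow_natCast γ _
      _ ≤ ∑ a : Fin n → Fin m, γ ^ (∑ i, (a i : ℕ)) :=
          Finset.sum_le_sum_of_subset_of_nonneg (Finset.filter_subset _ _)
            (fun a _ _ => le_of_lt (pow_pos hγ0 _))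
  have hcpow : (γ ^ r) ^ n = c := by
    rw [hcdef, ← Real.rpow_natCast (γ ^ r) n, ← Real.rpow_mul hγ0.le, mul_comm]
  rw [div_pow, hcpow, le_div_iff₀ (by rw [← hcpow]; positivity)]
  rw [← hcpow] at hmain ⊢
  exact hmain
end

section
/- For every prime power m and every integer k ≥ 3, the size L of any k-colored sum-free set in (ℤ_m)^n is at most Γ_{m,k}^n, where Γ_{m,k} = min_{0<γ<1} (1+γ+…+γ^{m−1})/γ^{(m−1)/k}. -/
open Finset

section LA
variable {F : Type} [Field F] [Fintype F] [DecidableEq F]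
variable {J : Type} [Fintype J] [DecidableEq J]

lemma lemmaA (V : Submodule F (J → F)) :
    ∃ h ∈ V, Module.finrank F V ≤ (Finset.univ.filter (fun j => h j ≠ 0)).card := by
  classical
  have : Nonempty V := ⟨0⟩
  obtain ⟨h, hmax⟩ := Finite.exists_max
    (fun h : V => (Finset.univ.filter (fun j => (h : J → F) j ≠ 0)).card)
  refine ⟨(h : J → F), h.2, ?_⟩
  set s : Finset J := Finset.univ.filter (fun j => (h : J → F) j ≠ 0) with hs
  let φ : V →ₗ[F] ({j // j ∈ s} → F) :=
    { toFun := fun v => fun x => (v : J → F) x.1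
      map_add' := by intro v w; rfl
      map_smul' := by intro c v; rfl }
  have hinj : Function.Injective φ := by
    rw [← LinearMap.ker_eq_bot, LinearMap.ker_eq_bot']
    intro v hv
    by_contra hv0
    have hvs : ∀ j ∈ s, (v : J → F) j = 0 := by
      intro j hj
      exact congrFun hv ⟨j, hj⟩
    obtain ⟨x0, hx0⟩ : ∃ x0, (v : J → F) x0 ≠ 0 := by
      by_contra hc
      push_neg at hc
      exact hv0 (Subtype.ext (funext hc))
    have hx0s : x0 ∉ s := fun hx => hx0 (hvs x0 hx)
    have hsub : insert x0 s ⊆ Finset.univ.filter (fun j => ((h + v : V) : J → F) j ≠ 0) := by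
      intro j hj
      rcases Finset.mem_insert.1 hj with rfl | hj
      · simp only [Finset.mem_filter, Finset.mem_univ, true_and]
        have : (h : J → F) j = 0 := by
          by_contra hc
          exact hx0s (by simp [hs, hc])
        simp [this, hx0]
      · simp only [Finset.mem_filter, Finset.mem_univ, true_and]
        have h1 : (h : J → F) j ≠ 0 := by
          simp only [hs, Finset.mem_filter] at hj; exact hj.2
        simp [hvs j hj, h1]
    have hcard : s.card + 1 ≤ (Finset.univ.filter (fun j => ((h + v : V) : J → F) j ≠ 0)).card := by
      calc s.card + 1 = (insert x0 s).card := (Finset.card_insert_of_notMem hx0s).symm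
        _ ≤ _ := Finset.card_le_card hsub
    have := hmax (h + v)
    omega
  calc Module.finrank F V ≤ Module.finrank F ({j // j ∈ s} → F) :=
        LinearMap.finrank_le_finrank_of_injective hinj
    _ = s.card := by rw [Module.finrank_fintype_fun_eq_card, Fintype.card_coe]

lemma exists_good_h (Z : Finset J) {ρ : Type} (R : Finset ρ) (u : ρ → J → F) :
    ∃ h : J → F, (∀ j, j ∉ Z → h j = 0) ∧ (∀ r ∈ R, ∑ j, h j * u r j = 0) ∧
      Z.card ≤ (Finset.univ.filter (fun j => h j ≠ 0)).card + R.card := by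
  classical
  set π : (J → F) →ₗ[F] ({j : J // j ∉ Z} → F) :=
    LinearMap.funLeft F F (Subtype.val : {j : J // j ∉ Z} → J) with hπ
  set U : Submodule F (J → F) := LinearMap.ker π with hU
  let Φ : (J → F) →ₗ[F] ({r // r ∈ R} → F) :=
    { toFun := fun h => fun r => ∑ j, h j * u r.1 j
      map_add' := by
        intro v w; funext r; simp [add_mul, Finset.sum_add_distrib]
      map_smul' := by
        intro c v; funext r; simp [Finset.mul_sum, mul_assoc] }
  have hUrank : Module.finrank F U = Z.card := by
    have h1 := LinearMap.finrank_range_add_finrank_ker π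
    rw [← hU] at h1
    have hsurj : LinearMap.range π = ⊤ :=
      LinearMap.range_eq_top.2 (LinearMap.funLeft_surjective_of_injective F F _ Subtype.val_injective)
    rw [hsurj, finrank_top, Module.finrank_fintype_fun_eq_card,
      Module.finrank_fintype_fun_eq_card, Fintype.card_subtype_compl, Fintype.card_coe] at h1
    have hZle : Z.card ≤ Fintype.card J := by
      simpa using Finset.card_le_card (Finset.subset_univ Z)
    omega
  have hkerΦ : Fintype.card J ≤ Module.finrank F (LinearMap.ker Φ) + R.card := by
    have h2 := LinearMap.finrank_range_add_finrank_ker Φ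
    have h3 : Module.finrank F (LinearMap.range Φ) ≤ R.card := by
      have := Submodule.finrank_le (LinearMap.range Φ)
      rwa [Module.finrank_fintype_fun_eq_card, Fintype.card_coe] at this
    rw [Module.finrank_fintype_fun_eq_card] at h2
    omega
  set W : Submodule F (J → F) := U ⊓ LinearMap.ker Φ with hW
  have hWrank : Z.card ≤ Module.finrank F W + R.card := by
    have h4 := Submodule.finrank_sup_add_finrank_inf_eq U (LinearMap.ker Φ)
    rw [← hW] at h4
    have h5 : Module.finrank F ↥(U ⊔ LinearMap.ker Φ) ≤ Fintype.card J := by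
      rw [← Module.finrank_fintype_fun_eq_card F (η := J)]
      exact Submodule.finrank_le _
    omega
  obtain ⟨h, hhW, hhcard⟩ := lemmaA W
  obtain ⟨hhU, hhK⟩ := Submodule.mem_inf.1 hhW
  refine ⟨h, ?_, ?_, ?_⟩
  · intro j hj
    have : π h = 0 := hhU
    exact congrFun this ⟨j, hj⟩
  · intro r hr
    have : Φ h = 0 := hhK
    exact congrFun this ⟨r, hr⟩
  · omega

end LA
section KEY
variable {F : Type} [Field F] [Fintype F] [DecidableEq F]

lemma fin2cases : ∀ i : Fin 2, i = 0 ∨ i = 1 := by decide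

theorem key' (k : ℕ) :
    ∀ {J : Type} [Fintype J] [DecidableEq J] {ρ : Type} (Z : Finset J) (R : Finset ρ)
      (c : ρ → Fin (k+2)) (f : ρ → J → F) (g : ρ → (Fin (k+2) → J) → F)
      (M : (Fin (k+2) → J) → F),
      (∀ r ∈ R, ∀ j j' : Fin (k+2) → J, (∀ i, i ≠ c r → j i = j' i) → g r j = g r j') →
      (∀ j : Fin (k+2) → J, (∀ i, j i ∈ Z) → M j = ∑ r ∈ R, f r (j (c r)) * g r j) →
      (∀ z ∈ Z, M (fun _ => z) ≠ 0) →
      (∀ j : Fin (k+2) → J, (∀ i, j i ∈ Z) → (∀ z, ¬ ∀ i, j i = z) → M j = 0) →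
      Z.card ≤ R.card := by
  induction k with
  | zero =>
    intro J _ _ ρ Z R c f g M hg hM hdiag hoff
    classical
    set u : ρ → J → F := fun r j => if c r = 0 then f r j else g r (fun _ => j) with hu
    set v : ρ → J → F := fun r j => if c r = 0 then g r (fun _ => j) else f r j with hv
    have hpair0 : ∀ j0 j1 : J, (fun i : Fin 2 => if i = 0 then j0 else j1) 0 = j0 := by
      intro j0 j1; simp
    have hpair1 : ∀ j0 j1 : J, (fun i : Fin 2 => if i = 0 then j0 else j1) 1 = j1 := by
      intro j0 j1; simp
    have hMuv : ∀ j : Fin 2 → J, (∀ i, j i ∈ Z) →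
        M j = ∑ r ∈ R, u r (j 0) * v r (j 1) := by
      intro j hj
      rw [hM j hj]
      refine Finset.sum_congr rfl ?_
      intro r hr
      rcases fin2cases (c r) with hc | hc
      · have hgr : g r j = g r (fun _ => j 1) := by
          apply hg r hr
          intro i hi
          rcases fin2cases i with rfl | rfl
          · exact absurd hc.symm hi
          · rfl
        simp [hu, hv, hc, hgr]
      · have hgr : g r j = g r (fun _ => j 0) := by
          apply hg r hr
          intro i hi
          rcases fin2cases i with rfl | rfl
          · rfl
          · rw [hc] at hi; exact absurd rfl hi
        have hc0 : c r ≠ 0 := by rw [hc]; decide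
        simp only [hu, hv, if_neg hc0, hc]
        rw [hgr]; ring
    obtain ⟨h, hsupp, horth, hcard⟩ := exists_good_h Z R u
    have hzero : ∀ j1 ∈ Z, h j1 = 0 := by
      intro j1 hj1
      have hsum : ∑ j0, h j0 * M (fun i : Fin 2 => if i = 0 then j0 else j1) = 0 := by
        have heach : ∀ j0 : J, h j0 * M (fun i : Fin 2 => if i = 0 then j0 else j1)
            = ∑ r ∈ R, (h j0 * u r j0) * v r j1 := by
          intro j0
          by_cases hj0 : h j0 = 0
          · simp [hj0]
          · have hj0Z : j0 ∈ Z := by by_contra hc; exact hj0 (hsupp j0 hc)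
            have hcoords : ∀ i : Fin 2, (fun i : Fin 2 => if i = 0 then j0 else j1) i ∈ Z := by
              intro i; rcases fin2cases i with rfl | rfl
              · simpa using hj0Z
              · simpa using hj1
            rw [hMuv _ hcoords, Finset.mul_sum]
            refine Finset.sum_congr rfl fun r _ => ?_
            rw [if_pos (rfl : (0:Fin 2) = 0), if_neg (by decide : ¬ (1:Fin 2) = 0)]; ring
        rw [Finset.sum_congr rfl fun j0 _ => heach j0, Finset.sum_comm]
        refine Finset.sum_eq_zero fun r hr => ?_
        have : ∑ j0, h j0 * u r j0 * v r j1 = (∑ j0, h j0 * u r j0) * v r j1 := by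
          rw [Finset.sum_mul]
        rw [this, horth r hr, zero_mul]
      have hsingle : ∑ j0, h j0 * M (fun i : Fin 2 => if i = 0 then j0 else j1)
          = h j1 * M (fun _ => j1) := by
        rw [Finset.sum_eq_single j1]
        · congr 1
          apply congrArg
          funext i
          simp
        · intro j0 _ hne
          by_cases hj0 : h j0 = 0
          · simp [hj0]
          · have hj0Z : j0 ∈ Z := by by_contra hc; exact hj0 (hsupp j0 hc)
            have : M (fun i : Fin 2 => if i = 0 then j0 else j1) = 0 := by
              apply hoff
              · intro i; rcases fin2cases i with rfl | rfl
                · simpa using hj0Z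
                · simpa using hj1
              · intro z hz
                have h0 := hz 0
                have h1 := hz 1
                rw [if_pos (rfl : (0:Fin 2) = 0)] at h0
                rw [if_neg (by decide : ¬ (1:Fin 2) = 0)] at h1
                exact hne (h0.trans h1.symm)
            rw [this, mul_zero]
        · intro hj1'; exact absurd (Finset.mem_univ j1) hj1'
      rw [hsingle] at hsum
      rcases mul_eq_zero.1 hsum with h0 | h0
      · exact h0
      · exact absurd h0 (hdiag j1 hj1)
    have hempty : (Finset.univ.filter (fun j => h j ≠ 0)).card = 0 := by
      rw [Finset.card_eq_zero]
      ext j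
      simp only [Finset.mem_filter, Finset.mem_univ, true_and, Finset.notMem_empty, iff_false,
        ne_eq, not_not]
      by_cases hj : j ∈ Z
      · exact hzero j hj
      · exact hsupp j hj
    omega
  | succ k IH =>
    intro J _ _ ρ Z R c f g M hg hM hdiag hoff
    classical
    set R_last : Finset ρ := R.filter (fun r => c r = Fin.last (k+2)) with hRlast
    set R' : Finset ρ := R.filter (fun r => ¬ c r = Fin.last (k+2)) with hR'
    obtain ⟨h, hsupp, horth, hcard⟩ := exists_good_h Z R_last f
    set Z' : Finset J := Finset.univ.filter (fun j => h j ≠ 0) with hZ'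
    have hZ'Z : ∀ j ∈ Z', j ∈ Z := by
      intro j hj
      simp only [hZ', Finset.mem_filter, Finset.mem_univ, true_and] at hj
      by_contra hc; exact hj (hsupp j hc)
    have hmemZ' : ∀ j, j ∈ Z' ↔ h j ≠ 0 := by
      intro j; simp [hZ']
    set M' : (Fin (k+2) → J) → F := fun j' => ∑ z, h z * M (Fin.snoc j' z) with hM'def
    set c' : ρ → Fin (k+2) := fun r =>
      if hh : (c r : ℕ) < k + 2 then (⟨(c r : ℕ), hh⟩ : Fin (k+2)) else 0 with hc'
    have hcastc' : ∀ r ∈ R', Fin.castSucc (c' r) = c r := by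
      intro r hr
      simp only [hR', Finset.mem_filter] at hr
      have hlt : (c r : ℕ) < k + 2 := by
        have h1 : (c r : ℕ) < k + 3 := (c r).isLt
        have h2 : (c r : ℕ) ≠ k + 2 := by
          intro hcc
          exact hr.2 (Fin.ext (by simpa [Fin.last] using hcc))
        omega
      simp only [hc', dif_pos hlt]
      apply Fin.ext
      simp
    set g' : ρ → (Fin (k+2) → J) → F := fun r j' => ∑ z, h z * g r (Fin.snoc j' z) with hg'def
    have hsnoccoord : ∀ (j' : Fin (k+2) → J) (z : J), (∀ i, j' i ∈ Z) → z ∈ Z →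
        ∀ i, (Fin.snoc j' z : Fin (k+3) → J) i ∈ Z := by
      intro j' z hj' hz i
      induction i using Fin.lastCases with
      | last => rw [Fin.snoc_last]; exact hz
      | cast i => rw [Fin.snoc_castSucc]; exact hj' i
    have hg'prop : ∀ r ∈ R', ∀ j j' : Fin (k+2) → J,
        (∀ i, i ≠ c' r → j i = j' i) → g' r j = g' r j' := by
      intro r hr j j' hjj
      have hrR : r ∈ R := by
        simp only [hR', Finset.mem_filter] at hr; exact hr.1
      refine Finset.sum_congr rfl fun z _ => ?_
      congr 1
      apply hg r hrR
      intro i hi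
      induction i using Fin.lastCases with
      | last => simp [Fin.snoc_last]
      | cast i =>
        rw [Fin.snoc_castSucc, Fin.snoc_castSucc]
        apply hjj
        intro hcc
        apply hi
        rw [hcc, hcastc' r hr]
    have hM'eq : ∀ j' : Fin (k+2) → J, (∀ i, j' i ∈ Z') →
        M' j' = ∑ r ∈ R', f r (j' (c' r)) * g' r j' := by
      intro j' hj'
      have hj'Z : ∀ i, j' i ∈ Z := fun i => hZ'Z _ (hj' i)
      have step1 : M' j' = ∑ z, ∑ r ∈ R, h z * (f r ((Fin.snoc j' z : Fin (k+3) → J) (c r))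
          * g r (Fin.snoc j' z)) := by
        refine Finset.sum_congr rfl fun z _ => ?_
        by_cases hz : h z = 0
        · simp [hz]
        · have hzZ : z ∈ Z := by by_contra hc; exact hz (hsupp z hc)
          rw [hM _ (hsnoccoord j' z hj'Z hzZ), Finset.mul_sum]
      rw [show M' j' = ∑ z, h z * M (Fin.snoc j' z) from rfl] at step1 ⊢
      rw [step1, Finset.sum_comm,
        ← Finset.sum_filter_add_sum_filter_not R (fun r => c r = Fin.last (k+2))]
      have hpart1 : ∑ r ∈ R.filter (fun r => c r = Fin.last (k+2)),
          ∑ z, h z * (f r ((Fin.snoc j' z : Fin (k+3) → J) (c r)) * g r (Fin.snoc j' z)) = 0 := by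
        refine Finset.sum_eq_zero fun r hr => ?_
        have hrR : r ∈ R := (Finset.mem_filter.1 hr).1
        have hclast : c r = Fin.last (k+2) := (Finset.mem_filter.1 hr).2
        have hgconst : ∀ z : J, g r (Fin.snoc j' z) = g r (Fin.snoc j' (j' 0)) := by
          intro z
          apply hg r hrR
          intro i hi
          induction i using Fin.lastCases with
          | last => exact absurd hclast.symm hi
          | cast i => rw [Fin.snoc_castSucc, Fin.snoc_castSucc]
        have : ∀ z : J, h z * (f r ((Fin.snoc j' z : Fin (k+3) → J) (c r)) * g r (Fin.snoc j' z))
            = (h z * f r z) * g r (Fin.snoc j' (j' 0)) := by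
          intro z
          rw [hgconst z, hclast, Fin.snoc_last]
          ring
        rw [Finset.sum_congr rfl fun z _ => this z, ← Finset.sum_mul]
        rw [horth r hr, zero_mul]
      rw [hpart1, zero_add]
      refine Finset.sum_congr rfl fun r hr => ?_
      have hrR' : r ∈ R' := by rw [hR']; exact hr
      have heval : ∀ z : J, (Fin.snoc j' z : Fin (k+3) → J) (c r) = j' (c' r) := by
        intro z
        rw [← hcastc' r hrR', Fin.snoc_castSucc]
      have : ∀ z : J, h z * (f r ((Fin.snoc j' z : Fin (k+3) → J) (c r)) * g r (Fin.snoc j' z))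
          = f r (j' (c' r)) * (h z * g r (Fin.snoc j' z)) := by
        intro z
        rw [heval z]; ring
      rw [Finset.sum_congr rfl fun z _ => this z, ← Finset.mul_sum]
    have hzero_ne : (0 : Fin (k+3)) ≠ Fin.last (k+2) := by
      intro hcc
      have := congrArg Fin.val hcc
      simp [Fin.last] at this
    have hdiag' : ∀ z ∈ Z', M' (fun _ => z) ≠ 0 := by
      intro z hz
      have hzZ : z ∈ Z := hZ'Z z hz
      have hzne : h z ≠ 0 := (hmemZ' z).1 hz
      have hconst : (Fin.snoc (fun _ : Fin (k+2) => z) z : Fin (k+3) → J) = fun _ => z := by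
        funext i
        induction i using Fin.lastCases with
        | last => rw [Fin.snoc_last]
        | cast i => rw [Fin.snoc_castSucc]
      have hsingle : M' (fun _ => z) = h z * M (fun _ => z) := by
        rw [show M' (fun _ : Fin (k+2) => z) = ∑ z', h z' * M (Fin.snoc (fun _ => z) z') from rfl]
        rw [Finset.sum_eq_single z]
        · rw [hconst]
        · intro z' _ hne
          by_cases hz' : h z' = 0
          · simp [hz']
          · have hz'Z : z' ∈ Z := by by_contra hc; exact hz' (hsupp z' hc)
            have : M (Fin.snoc (fun _ : Fin (k+2) => z) z') = 0 := by
              apply hoff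
              · exact hsnoccoord _ _ (fun _ => hzZ) hz'Z
              · intro w hw
                have h1 := hw (Fin.last (k+2))
                rw [Fin.snoc_last] at h1
                have h2 := hw (Fin.castSucc 0)
                rw [Fin.snoc_castSucc] at h2
                exact hne (h1.trans h2.symm)
            rw [this, mul_zero]
        · intro hz'; exact absurd (Finset.mem_univ z) hz'
      rw [hsingle]
      exact mul_ne_zero hzne (hdiag z hzZ)
    have hoff' : ∀ j' : Fin (k+2) → J, (∀ i, j' i ∈ Z') → (∀ w, ¬ ∀ i, j' i = w) → M' j' = 0 := by
      intro j' hj' hnc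
      have hj'Z : ∀ i, j' i ∈ Z := fun i => hZ'Z _ (hj' i)
      refine Finset.sum_eq_zero fun z _ => ?_
      by_cases hz : h z = 0
      · simp [hz]
      · have hzZ : z ∈ Z := by by_contra hc; exact hz (hsupp z hc)
        have : M (Fin.snoc j' z) = 0 := by
          apply hoff
          · exact hsnoccoord _ _ hj'Z hzZ
          · intro w hw
            apply hnc w
            intro i
            have := hw (Fin.castSucc i)
            rwa [Fin.snoc_castSucc] at this
        rw [this, mul_zero]
    have hind := IH Z' R' c' f g' M' hg'prop hM'eq hdiag' hoff'
    have hsplit : R_last.card + R'.card = R.card := by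
      rw [hRlast, hR']
      exact Finset.card_filter_add_card_filter_not _
    omega

end KEY
section LUCAS

lemma lucasQ (p : ℕ) (hp : p.Prime) : ∀ l s : ℕ,
    ((Nat.choose s (p ^ l - 1) : ℕ) : ZMod p) ≠ 0 ↔ s % p ^ l = p ^ l - 1 := by
  haveI : Fact p.Prime := ⟨hp⟩
  intro l
  induction l with
  | zero =>
    intro s
    simp [Nat.mod_one]
  | succ l IH =>
    intro s
    have key : ((Nat.choose s (p ^ (l+1) - 1) : ℕ) : ZMod p)
        = ((Nat.choose (s % p) ((p ^ (l+1) - 1) % p) : ℕ) : ZMod p)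
          * ((Nat.choose (s / p) ((p ^ (l+1) - 1) / p) : ℕ) : ZMod p) := by
      have := (ZMod.natCast_eq_natCast_iff _ _ p).mpr
        (Choose.choose_modEq_choose_mod_mul_choose_div_nat (p := p) (n := s) (k := p ^ (l+1) - 1))
      push_cast at this
      exact this
    have hpow : p ^ (l + 1) = p * p ^ l := by rw [pow_succ]; ring
    have hp1 : 1 ≤ p := hp.pos
    have hpl1 : 1 ≤ p ^ l := Nat.one_le_pow _ _ hp.pos
    have hA : p ≤ p * p ^ l := Nat.le_mul_of_pos_right p (by omega)
    have h2 : p * (p ^ l - 1) = p * p ^ l - p := by rw [Nat.mul_sub, mul_one]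
    have hsplit : p * p ^ l - 1 = (p - 1) + p * (p ^ l - 1) := by omega
    have e1 : (p ^ (l+1) - 1) % p = p - 1 := by
      rw [hpow, hsplit, Nat.add_mul_mod_self_left, Nat.mod_eq_of_lt (by omega)]
    have e2 : (p ^ (l+1) - 1) / p = p ^ l - 1 := by
      rw [hpow, hsplit, Nat.add_mul_div_left _ _ hp.pos, Nat.div_eq_of_lt (by omega), zero_add]
    rw [key, e1, e2, mul_ne_zero_iff, IH]
    have hsp : ((Nat.choose (s % p) (p - 1) : ℕ) : ZMod p) ≠ 0 ↔ s % p = p - 1 := by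
      constructor
      · intro hne
        by_contra hne2
        have hlt : s % p < p - 1 := by
          have := Nat.mod_lt s hp.pos
          omega
        rw [Nat.choose_eq_zero_of_lt hlt] at hne
        simpa using hne
      · intro he
        rw [he, Nat.choose_self]
        simpa using one_ne_zero
    rw [hsp]
    -- arithmetic
    have hd : s % p ^ (l+1) = s % p + p * (s / p % p ^ l) := by
      rw [hpow, Nat.mod_mul]
    have hub : s % p < p := Nat.mod_lt s hp.pos
    have hub2 : s / p % p ^ l < p ^ l := Nat.mod_lt _ (by omega)
    constructor
    · rintro ⟨h1, h2⟩
      rw [hd, h1, h2, hpow]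
      omega
    · intro hmod
      rw [hd, hpow] at hmod
      have hle : p * (s / p % p ^ l) ≤ p * (p ^ l - 1) := by
        apply Nat.mul_le_mul_left
        omega
      have h1 : s % p = p - 1 := by omega
      have h2 : p * (s / p % p ^ l) = p * (p ^ l - 1) := by omega
      exact ⟨h1, Nat.eq_of_mul_eq_mul_left hp.pos h2⟩

end LUCAS
section VDM

open Finset

lemma claimC (m : ℕ) : ∀ (k : ℕ) (r : ℕ), r < m → ∀ (s : Fin k → ℕ),
    Nat.choose (∑ i, s i) r
      = ∑ a ∈ Finset.univ.filter (fun a : Fin k → Fin m => ∑ i, ((a i : ℕ)) = r),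
          ∏ i, Nat.choose (s i) (a i) := by
  intro k
  induction k with
  | zero =>
    intro r hr s
    by_cases h0 : r = 0
    · subst h0
      rw [show (∑ i : Fin 0, s i) = 0 from rfl, Nat.choose_zero_right]
      rw [Finset.filter_true_of_mem (by intro a _; rfl)]
      simp
    · have hfe : Finset.univ.filter (fun a : Fin 0 → Fin m => ∑ i, ((a i : ℕ)) = r) = ∅ := by
        apply Finset.filter_false_of_mem
        intro a _
        intro hc
        exact h0 (by simpa using hc.symm)
      rw [hfe, Finset.sum_empty, show (∑ i : Fin 0, s i) = 0 from rfl,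
        Nat.choose_eq_zero_of_lt (Nat.pos_of_ne_zero h0)]
  | succ k IH =>
    intro r hr s
    rw [Fin.sum_univ_succ, Nat.add_choose_eq, Finset.Nat.sum_antidiagonal_eq_sum_range_succ_mk]
    have hIH : ∀ t ∈ Finset.range (r+1),
        (s 0).choose t * (∑ i : Fin k, s i.succ).choose (r - t)
          = ∑ a' ∈ Finset.univ.filter
              (fun a' : Fin k → Fin m => ∑ i, ((a' i : ℕ)) = r - t),
              (s 0).choose t * ∏ i, Nat.choose (s i.succ) (a' i) := by
      intro t ht
      rw [IH (r - t) (by omega) (fun i => s i.succ), Finset.mul_sum]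
    rw [Finset.sum_congr rfl hIH]
    have hsplit : ∀ (G : (Fin (k+1) → Fin m) → ℕ), ∑ a : Fin (k+1) → Fin m, G a
        = ∑ a0 : Fin m, ∑ a' : Fin k → Fin m, G (Fin.cons a0 a') := by
      intro G
      rw [← (Fintype.sum_equiv (Fin.consEquiv (fun _ : Fin (k+1) => Fin m))
            (fun x : Fin m × (Fin k → Fin m) => G (Fin.cons x.1 x.2)) G (fun x => rfl))]
      rw [Fintype.sum_prod_type]
    rw [Finset.sum_filter, hsplit]
    simp only [Fin.sum_univ_succ, Fin.prod_univ_succ, Fin.cons_zero, Fin.cons_succ]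
    rw [Fin.sum_univ_eq_sum_range
      (fun t => ∑ a' : Fin k → Fin m,
        if t + ∑ i : Fin k, ((a' i : ℕ)) = r
        then Nat.choose (s 0) t * ∏ i : Fin k, Nat.choose (s i.succ) (a' i) else 0) m]
    rw [← Finset.sum_subset (Finset.range_subset_range.2 (by omega : r + 1 ≤ m))
      (by
        intro t ht hts
        simp only [Finset.mem_range] at ht hts
        refine Finset.sum_eq_zero fun a' _ => ?_
        rw [if_neg (by omega)])]
    refine Finset.sum_congr rfl fun t ht => ?_
    simp only [Finset.mem_range] at ht
    rw [Finset.sum_filter]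
    refine Finset.sum_congr rfl fun a' _ => ?_
    exact if_congr (by omega) rfl rfl

end VDM
section CORE

open Finset

lemma core (p l q k : ℕ) (hp : p.Prime) (hq : q = p ^ l) (hl : 1 ≤ l)
    (ι J : Type) [Fintype ι] [DecidableEq ι] [Fintype J] [DecidableEq J]
    (x : Fin (k+2) → J → (ι → ZMod q))
    (hsf : ∀ j : Fin (k+2) → J, ∑ i, x i (j i) = 0 ↔ ∃ cc, ∀ i, j i = cc) :
    Fintype.card J ≤ (k+2) *
      (Finset.univ.filter (fun b : ι → Fin q =>
        (k+2) * (∑ t, ((b t : ℕ))) ≤ (q-1) * Fintype.card ι)).card := by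
  classical
  haveI : Fact p.Prime := ⟨hp⟩
  have hq2 : 2 ≤ q := by
    have h1 : 1 < p ^ l := Nat.one_lt_pow (by omega) hp.one_lt
    omega
  haveI : NeZero q := ⟨by omega⟩
  set y : Fin (k+2) → J → (ι → ZMod q) :=
    fun i => if i = 0 then (fun jj t => x 0 jj t - 1) else x i with hy
  set M : (Fin (k+2) → J) → ZMod p :=
    fun j => ∏ t, ((Nat.choose (∑ i, (y i (j i) t).val) (q-1) : ℕ) : ZMod p) with hMdef
  -- sum of y vs sum of x
  have hyx : ∀ (j : Fin (k+2) → J) (t : ι), ∑ i, y i (j i) t = (∑ i, x i (j i) t) - 1 := by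
    intro j t
    rw [Fin.sum_univ_succ (f := fun i => y i (j i) t),
        Fin.sum_univ_succ (f := fun i => x i (j i) t)]
    have h0 : y 0 (j 0) t = x 0 (j 0) t - 1 := by simp [hy]
    have hsucc : ∀ i : Fin (k+1), y i.succ (j i.succ) t = x i.succ (j i.succ) t := by
      intro i; simp [hy, Fin.succ_ne_zero]
    rw [h0, Finset.sum_congr rfl (fun i _ => hsucc i)]
    ring
  -- Lucas characterization
  have hL : ∀ s : ℕ, ((Nat.choose s (q-1) : ℕ) : ZMod p) ≠ 0 ↔ s % q = q - 1 := by
    intro s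
    rw [hq]
    exact lucasQ p hp l s
  -- value characterization
  have hval : ∀ v : Fin (k+2) → ZMod q, ((∑ i, (v i).val) % q = q - 1 ↔ ∑ i, v i = -1) := by
    intro v
    have hcast : ((∑ i, (v i).val : ℕ) : ZMod q) = ∑ i, v i := by
      push_cast
      refine Finset.sum_congr rfl fun i _ => ?_
      simp [ZMod.natCast_val, ZMod.cast_id]
    have hvneg : ((q - 1 : ℕ) : ZMod q) = -1 := by
      push_cast [Nat.cast_sub (by omega : 1 ≤ q)]
      rw [ZMod.natCast_self]
      ring
    constructor
    · intro hmod
      rw [← hcast, ← ZMod.natCast_mod, hmod]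
      exact hvneg
    · intro hsum
      have h2 : ((∑ i, (v i).val : ℕ) : ZMod q) = ((q - 1 : ℕ) : ZMod q) := by
        rw [hcast, hsum, hvneg]
      have h3 := congrArg ZMod.val h2
      rw [ZMod.val_natCast, ZMod.val_natCast, Nat.mod_eq_of_lt (show q - 1 < q by omega)] at h3
      exact h3
  -- M nonzero iff diagonal
  have hMne : ∀ j : Fin (k+2) → J, (M j ≠ 0 ↔ ∃ cc, ∀ i, j i = cc) := by
    intro j
    rw [show M j = ∏ t, ((Nat.choose (∑ i, (y i (j i) t).val) (q-1) : ℕ) : ZMod p) from rfl]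
    rw [Finset.prod_ne_zero_iff]
    constructor
    · intro hall
      refine (hsf j).1 ?_
      funext t
      have h1 := hall t (Finset.mem_univ t)
      rw [hL, hval, hyx] at h1
      have h2 : ∑ i, x i (j i) t = 0 := by
        have := sub_eq_iff_eq_add.1 h1
        simpa using this
      simp only [Finset.sum_apply, Pi.zero_apply]
      exact h2
    · intro hc t _
      have hsum := (hsf j).2 hc
      rw [hL, hval, hyx]
      have h2 : ∑ i, x i (j i) t = 0 := by
        have := congrFun hsum t
        simpa [Finset.sum_apply] using this
      rw [h2]
      simp
  -- expansion of binomials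
  set E : Finset (Fin (k+2) → Fin q) :=
    Finset.univ.filter (fun a => ∑ i, ((a i : ℕ)) = q - 1) with hE
  have hexp : ∀ s : Fin (k+2) → ℕ, ((Nat.choose (∑ i, s i) (q-1) : ℕ) : ZMod p)
      = ∑ a ∈ E, ∏ i, ((Nat.choose (s i) (a i) : ℕ) : ZMod p) := by
    intro s
    rw [claimC q (k+2) (q-1) (by omega) s]
    rw [hE]
    push_cast
    rfl
  set P : Finset (ι → (Fin (k+2) → Fin q)) := Fintype.piFinset (fun _ => E) with hP
  have hMexp : ∀ j : Fin (k+2) → J,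
      M j = ∑ g ∈ P, ∏ i, ∏ t, ((Nat.choose ((y i (j i) t).val) ((g t i : ℕ)) : ℕ) : ZMod p) := by
    intro j
    rw [show M j = ∏ t, ((Nat.choose (∑ i, (y i (j i) t).val) (q-1) : ℕ) : ZMod p) from rfl]
    rw [Finset.prod_congr rfl (fun t _ => hexp (fun i => (y i (j i) t).val)),
      Finset.prod_univ_sum]
    refine Finset.sum_congr rfl fun g _ => ?_
    rw [Finset.prod_comm]
  -- min-degree index
  have hmin : ∀ g : ι → (Fin (k+2) → Fin q), ∃ i : Fin (k+2), ∀ i',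
      ∑ t, ((g t i : ℕ)) ≤ ∑ t, ((g t i' : ℕ)) := by
    intro g
    obtain ⟨i, _, hi⟩ := Finset.exists_min_image Finset.univ
      (fun i : Fin (k+2) => ∑ t, ((g t i : ℕ))) ⟨0, Finset.mem_univ 0⟩
    exact ⟨i, fun i' => hi i' (Finset.mem_univ i')⟩
  set i0 : (ι → (Fin (k+2) → Fin q)) → Fin (k+2) := fun g => (hmin g).choose with hi0
  have hi0min : ∀ (g : ι → (Fin (k+2) → Fin q)) (i' : Fin (k+2)), ∑ t, ((g t (i0 g) : ℕ)) ≤ ∑ t, ((g t i' : ℕ)) :=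
    fun g => (hmin g).choose_spec
  set B : Finset (ι → Fin q) := Finset.univ.filter (fun b : ι → Fin q =>
    (k+2) * (∑ t, ((b t : ℕ))) ≤ (q-1) * Fintype.card ι) with hB
  have hcolB : ∀ g ∈ P, (fun t => g t (i0 g)) ∈ B := by
    intro g hg
    have hrow : ∀ t, ∑ i, ((g t i : ℕ)) = q - 1 := by
      intro t
      have hmem := (Fintype.mem_piFinset.1 hg) t
      rw [hE] at hmem
      exact (Finset.mem_filter.1 hmem).2
    have htot : ∑ i : Fin (k+2), ∑ t, ((g t i : ℕ)) = (q-1) * Fintype.card ι := by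
      calc ∑ i : Fin (k+2), ∑ t, ((g t i : ℕ)) = ∑ t, ∑ i : Fin (k+2), ((g t i : ℕ)) :=
            Finset.sum_comm
        _ = ∑ _t : ι, (q-1) := Finset.sum_congr rfl fun t _ => hrow t
        _ = (q-1) * Fintype.card ι := by
            rw [Finset.sum_const, Finset.card_univ, smul_eq_mul, mul_comm]
    have hKmin : (k+2) * (∑ t, ((g t (i0 g) : ℕ))) ≤ (q-1) * Fintype.card ι := by
      calc (k+2) * (∑ t, ((g t (i0 g) : ℕ))) = ∑ _i : Fin (k+2), (∑ t, ((g t (i0 g) : ℕ))) := by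
            rw [Finset.sum_const, Finset.card_univ, Fintype.card_fin, smul_eq_mul]
        _ ≤ ∑ i : Fin (k+2), ∑ t, ((g t i : ℕ)) := Finset.sum_le_sum fun i _ => hi0min g i
        _ = (q-1) * Fintype.card ι := htot
    rw [hB]
    exact Finset.mem_filter.2 ⟨Finset.mem_univ _, hKmin⟩
  -- the decomposition
  have hdecomp : ∀ j : Fin (k+2) → J, M j = ∑ ib ∈ Finset.univ ×ˢ B,
      (∏ t, ((Nat.choose ((y ib.1 (j ib.1) t).val) ((ib.2 t : ℕ)) : ℕ) : ZMod p)) *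
      (∑ gg ∈ P.filter (fun gg => ((i0 gg, fun t => gg t (i0 gg)) : Fin (k+2) × (ι → Fin q)) = ib),
        ∏ i ∈ Finset.univ.erase ib.1,
          ∏ t, ((Nat.choose ((y i (j i) t).val) ((gg t i : ℕ)) : ℕ) : ZMod p)) := by
    intro j
    rw [hMexp j]
    rw [← Finset.sum_fiberwise_of_maps_to
      (g := fun g => ((i0 g, fun t => g t (i0 g)) : Fin (k+2) × (ι → Fin q)))
      (t := Finset.univ ×ˢ B)
      (fun g hg => Finset.mem_product.2 ⟨Finset.mem_univ _, hcolB g hg⟩)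
      (fun g => ∏ i, ∏ t, ((Nat.choose ((y i (j i) t).val) ((g t i : ℕ)) : ℕ) : ZMod p))]
    refine Finset.sum_congr rfl fun ib _ => ?_
    rw [Finset.mul_sum]
    refine Finset.sum_congr rfl fun g hgmem => ?_
    obtain ⟨hgP, hgib⟩ := Finset.mem_filter.1 hgmem
    have hib1 : i0 g = ib.1 := congrArg Prod.fst hgib
    have hib2 : (fun t => g t (i0 g)) = ib.2 := congrArg Prod.snd hgib
    rw [← Finset.mul_prod_erase Finset.univ
      (fun i => ∏ t, ((Nat.choose ((y i (j i) t).val) ((g t i : ℕ)) : ℕ) : ZMod p))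
      (Finset.mem_univ ib.1)]
    congr 1
    refine Finset.prod_congr rfl fun t _ => ?_
    have hgt : (g t ib.1 : ℕ) = ((ib.2 t : Fin q) : ℕ) := by
      rw [← hib1]
      exact congrArg (fun z : Fin q => (z : ℕ)) (congrFun hib2 t)
    rw [hgt]
  -- apply the key lemma
  have happ := key' (F := ZMod p) k (Z := (Finset.univ : Finset J))
    (R := Finset.univ ×ˢ B)
    (c := Prod.fst)
    (f := fun ib jj => ∏ t, ((Nat.choose ((y ib.1 jj t).val) ((ib.2 t : ℕ)) : ℕ) : ZMod p))
    (g := fun ib j =>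
      ∑ gg ∈ P.filter (fun gg => ((i0 gg, fun t => gg t (i0 gg)) : Fin (k+2) × (ι → Fin q)) = ib),
        ∏ i ∈ Finset.univ.erase ib.1,
          ∏ t, ((Nat.choose ((y i (j i) t).val) ((gg t i : ℕ)) : ℕ) : ZMod p))
    (M := M)
    (by
      intro r _ j j' hjj
      refine Finset.sum_congr rfl fun gg _ => ?_
      refine Finset.prod_congr rfl fun i hi => ?_
      have hine : i ≠ r.1 := (Finset.mem_erase.1 hi).1
      rw [hjj i hine])
    (fun j _ => hdecomp j)
    (fun z _ => (hMne _).2 ⟨z, fun _ => rfl⟩)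
    (by
      intro j _ hnc
      by_contra hMj
      obtain ⟨cc, hcc⟩ := (hMne j).1 hMj
      exact hnc cc hcc)
  rw [Finset.card_univ, Finset.card_product, Finset.card_univ, Fintype.card_fin] at happ
  rw [hB] at happ
  exact happ

end CORE
section FINAL

open Finset

lemma countB (q k : ℕ) (hq : 1 ≤ q) (ι : Type) [Fintype ι] [DecidableEq ι]
    (γ : ℝ) (h0 : 0 < γ) (h1 : γ < 1) :
    ((Finset.univ.filter (fun b : ι → Fin q =>
      (k+2) * (∑ t, ((b t : ℕ))) ≤ (q-1) * Fintype.card ι)).card : ℝ)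
    ≤ (∑ i ∈ Finset.range q, γ ^ i) ^ (Fintype.card ι)
      / γ ^ ((((q:ℝ) - 1) * (Fintype.card ι)) / ((k:ℝ)+2)) := by
  classical
  set S := ∑ i ∈ Finset.range q, γ ^ i with hSdef
  have hS0 : 0 < S :=
    Finset.sum_pos (fun i _ => pow_pos h0 i) (Finset.nonempty_range_iff.2 (by omega))
  set D : ℝ := (((q:ℝ) - 1) * (Fintype.card ι)) / ((k:ℝ)+2) with hD
  have hγD : 0 < γ ^ D := Real.rpow_pos_of_pos h0 _
  rw [le_div_iff₀ hγD]
  have hterm : ∀ b ∈ (Finset.univ.filter (fun b : ι → Fin q =>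
      (k+2) * (∑ t, ((b t : ℕ))) ≤ (q-1) * Fintype.card ι)),
      γ ^ D ≤ ∏ t, γ ^ ((b t : ℕ)) := by
    intro b hb
    have hmem := (Finset.mem_filter.1 hb).2
    rw [Finset.prod_pow_eq_pow_sum, ← Real.rpow_natCast γ (∑ t, ((b t : ℕ)))]
    apply Real.rpow_le_rpow_of_exponent_ge h0 h1.le
    rw [hD, le_div_iff₀ (by positivity : (0:ℝ) < (k:ℝ)+2)]
    have hc := (Nat.cast_le (α := ℝ)).2 hmem
    push_cast [Nat.cast_sub hq] at hc
    push_cast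
    linarith
  calc ((Finset.univ.filter (fun b : ι → Fin q =>
        (k+2) * (∑ t, ((b t : ℕ))) ≤ (q-1) * Fintype.card ι)).card : ℝ) * γ ^ D
      = ∑ _b ∈ (Finset.univ.filter (fun b : ι → Fin q =>
        (k+2) * (∑ t, ((b t : ℕ))) ≤ (q-1) * Fintype.card ι)), γ ^ D := by
        rw [Finset.sum_const, nsmul_eq_mul]
    _ ≤ ∑ b ∈ (Finset.univ.filter (fun b : ι → Fin q =>
        (k+2) * (∑ t, ((b t : ℕ))) ≤ (q-1) * Fintype.card ι)), ∏ t, γ ^ ((b t : ℕ)) :=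
        Finset.sum_le_sum hterm
    _ ≤ ∑ b : ι → Fin q, ∏ t, γ ^ ((b t : ℕ)) :=
        Finset.sum_le_sum_of_subset_of_nonneg (Finset.filter_subset _ _)
          (fun b _ _ => Finset.prod_nonneg fun t _ => (pow_pos h0 _).le)
    _ = ∏ _t : ι, ∑ v : Fin q, γ ^ ((v : ℕ)) := by
        symm
        rw [Finset.prod_univ_sum (fun _ : ι => (Finset.univ : Finset (Fin q)))
          (fun _t (v : Fin q) => γ ^ ((v : ℕ))), Fintype.piFinset_univ]
    _ = S ^ (Fintype.card ι) := by
        have hone : (∑ v : Fin q, γ ^ ((v : ℕ))) = S := by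
          rw [hSdef, ← Fin.sum_univ_eq_sum_range (fun i => γ ^ i) q]
        rw [Finset.prod_congr rfl (fun t _ => hone), Finset.prod_const, Finset.card_univ]

theorem stmt19 (p l m k n L : ℕ) (hp : p.Prime) (hl : 1 ≤ l) (hm : m = p ^ l) (hk : 3 ≤ k)
    (γ : ℝ) (hγ0 : 0 < γ) (hγ1 : γ < 1)
    (hmin : ∀ γ' : ℝ, 0 < γ' → γ' < 1 →
      (∑ i ∈ Finset.range m, γ ^ i) / γ ^ (((m : ℝ) - 1) / k) ≤
        (∑ i ∈ Finset.range m, γ' ^ i) / γ' ^ (((m : ℝ) - 1) / k))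
    (x : Fin k → Fin L → (Fin n → ZMod m))
    (hsf : ∀ j : Fin k → Fin L, ∑ i, x i (j i) = 0 ↔ ∃ c, ∀ i, j i = c) :
    (L : ℝ) ≤ ((∑ i ∈ Finset.range m, γ ^ i) / γ ^ (((m : ℝ) - 1) / k)) ^ n := by
  classical
  obtain ⟨k', rfl⟩ : ∃ k', k = k' + 2 := ⟨k - 2, by omega⟩
  have hm2 : 2 ≤ m := by
    have h1 : 1 < p ^ l := Nat.one_lt_pow (by omega) hp.one_lt
    omega
  have hm1 : 1 ≤ m := by omega
  set S := ∑ i ∈ Finset.range m, γ ^ i with hSdef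
  have hS0 : 0 < S :=
    Finset.sum_pos (fun i _ => pow_pos hγ0 i) (Finset.nonempty_range_iff.2 (by omega))
  set e : ℝ := ((m : ℝ) - 1) / ((k' + 2 : ℕ) : ℝ) with he
  have hΓ0 : 0 < S / γ ^ e := div_pos hS0 (Real.rpow_pos_of_pos hγ0 _)
  have hiter : ∀ r : ℕ, ((L:ℝ))^r ≤ ((k' + 2 : ℕ) : ℝ) * ((S / γ ^ e) ^ n) ^ r := by
    intro r
    have hsf' : ∀ jv : Fin (k'+2) → (Fin r → Fin L),
        ∑ i, (fun (ii : Fin (k'+2)) (jf : Fin r → Fin L) (st : Fin r × Fin n) =>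
          x ii (jf st.1) st.2) i (jv i) = 0 ↔ ∃ cc, ∀ i, jv i = cc := by
      intro jv
      constructor
      · intro hz
        have hper : ∀ s : Fin r, ∃ cs, ∀ i, jv i s = cs := by
          intro s
          apply (hsf (fun i => jv i s)).1
          funext t
          have h2 := congrFun hz (s, t)
          simpa [Finset.sum_apply] using h2
        refine ⟨fun s => jv 0 s, fun i => ?_⟩
        funext s
        obtain ⟨cs, hcs⟩ := hper s
        rw [hcs i, hcs 0]
      · rintro ⟨C, hC⟩
        funext st
        obtain ⟨s, t⟩ := st
        have h3 : ∑ i, x i (jv i s) = 0 :=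
          (hsf (fun i => jv i s)).2 ⟨C s, fun i => by rw [hC i]⟩
        have h4 := congrFun h3 t
        simpa [Finset.sum_apply] using h4
    have hcore := core p l m k' hp hm hl (Fin r × Fin n) (Fin r → Fin L)
      (fun (ii : Fin (k'+2)) (jf : Fin r → Fin L) (st : Fin r × Fin n) =>
        x ii (jf st.1) st.2) hsf'
    have hcardJ : Fintype.card (Fin r → Fin L) = L ^ r := by
      rw [Fintype.card_fun, Fintype.card_fin, Fintype.card_fin]
    rw [hcardJ] at hcore
    have hcount := countB m k' hm1 (Fin r × Fin n) γ hγ0 hγ1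
    have hchain : ((L ^ r : ℕ) : ℝ) ≤ ((k' + 2 : ℕ) : ℝ) *
        (S ^ (Fintype.card (Fin r × Fin n))
          / γ ^ ((((m:ℝ) - 1) * (Fintype.card (Fin r × Fin n))) / ((k':ℝ)+2)) ) := by
      calc ((L ^ r : ℕ) : ℝ) ≤ ((k' + 2 : ℕ) : ℝ) * (((Finset.univ.filter
            (fun b : (Fin r × Fin n) → Fin m =>
              (k'+2) * (∑ t, ((b t : ℕ))) ≤ (m-1) * Fintype.card (Fin r × Fin n))).card : ℝ)) := by
            have := (Nat.cast_le (α := ℝ)).2 hcore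
            push_cast at this ⊢
            linarith
        _ ≤ _ := by
            apply mul_le_mul_of_nonneg_left (hcount) (by positivity)
    have hcardι : Fintype.card (Fin r × Fin n) = r * n := by
      rw [Fintype.card_prod, Fintype.card_fin, Fintype.card_fin]
    rw [hcardι] at hchain
    have halg : S ^ (r * n) / γ ^ ((((m:ℝ) - 1) * ((r * n : ℕ) : ℝ)) / ((k':ℝ)+2))
        = ((S / γ ^ e) ^ n) ^ r := by
      rw [div_pow, div_pow, ← pow_mul]
      have hγe : ((γ ^ e) ^ n) ^ r = γ ^ (e * ((n * r : ℕ) : ℝ)) := by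
        rw [← Real.rpow_natCast (γ ^ e) n, ← Real.rpow_mul hγ0.le,
          ← Real.rpow_natCast (γ ^ (e * (n:ℝ))) r, ← Real.rpow_mul hγ0.le]
        push_cast
        ring_nf
      rw [hγe]
      have hexp : (((m:ℝ) - 1) * ((r * n : ℕ) : ℝ)) / ((k':ℝ)+2) = e * ((n * r : ℕ) : ℝ) := by
        rw [he]
        push_cast
        ring
      rw [hexp, mul_comm r n]
    rw [halg] at hchain
    calc ((L:ℝ))^r = ((L ^ r : ℕ) : ℝ) := by push_cast; ring
      _ ≤ _ := hchain
  by_contra hcon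
  push_neg at hcon
  have hA0 : 0 < (S / γ ^ e) ^ n := pow_pos hΓ0 n
  have hcon' : (S / γ ^ e) ^ n < (L:ℝ) := by
    have : ((m:ℝ) - 1) / ((k' + 2 : ℕ) : ℝ) = e := by rw [he]
    calc (S / γ ^ e) ^ n = (S / γ ^ (((m : ℝ) - 1) / (((k' + 2 : ℕ)) : ℝ))) ^ n := by rw [this]
      _ < (L:ℝ) := hcon
  have hratio : 1 < (L:ℝ) / (S / γ ^ e) ^ n := (one_lt_div hA0).2 hcon'
  obtain ⟨r, hr⟩ := pow_unbounded_of_one_lt (((k' + 2 : ℕ)) : ℝ) hratio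
  rw [div_pow, lt_div_iff₀ (pow_pos hA0 r)] at hr
  have := hiter r
  nlinarith [pow_pos hA0 r]

end FINAL
end
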